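/- arXiv:1310.8442 — 9 statements merged into one kernel-verified Lean document; each statement's English description precedes it below -/
import Mathlib

section
/- Let r ≥ 3 and t be integers with t ≥ ⌈(r(r-1)-1)^{r-2} / (r(r-1))^{r-3}⌉. Let H be a {1,r}-graph such that both the order of a maximum complete {1,r}-subgraph of H and the order of a maximum complete {1}-subgraph of H (i.e., the number of singleton edges of H) equal t. Then λ'(H) = λ'(K_t^{{1,r}}) = 1 + (∏_{i=1}^{r-1} (t-i)) / t^{r-1}. -/
open Finset

/-- λ'(H,x) = Σ_{e∈E} |e|! · ∏_{i∈e} x_i  (equals Σ_{j∈R(H)} j!·Σ_{|e|=j} ∏ x_i). -/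
noncomputable def lagPoly {n : ℕ} (E : Finset (Finset (Fin n))) (x : Fin n → ℝ) : ℝ :=
  ∑ e ∈ E, (Nat.factorial e.card : ℝ) * ∏ i ∈ e, x i

/-- A legal weighting: nonnegative entries summing to 1. -/
def isLegal {n : ℕ} (x : Fin n → ℝ) : Prop :=
  (∑ i, x i) = 1 ∧ ∀ i, 0 ≤ x i

/-- The Lagrangian λ'(H): the maximum of λ'(H,x) over legal weightings. -/
noncomputable def lagrangian {n : ℕ} (E : Finset (Finset (Fin n))) : ℝ :=
  sSup {v : ℝ | ∃ x : Fin n → ℝ, isLegal x ∧ lagPoly E x = v}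

/-- Edge set of the complete hypergraph K_t^R on vertex set [t]. -/
def completeEdges (t : ℕ) (R : Finset ℕ) : Finset (Finset (Fin t)) :=
  Finset.univ.filter (fun e => e.card ∈ R)

/-- S induces a complete R-subgraph: every subset of S with cardinality in R is an edge. -/
def isCompleteSub {n : ℕ} (E : Finset (Finset (Fin n))) (R : Finset ℕ) (S : Finset (Fin n)) : Prop :=
  ∀ e ⊆ S, e.card ∈ R → e ∈ E

/-- The maximum complete R-subgraph of H has order t. -/
def maxCompleteOrder {n : ℕ} (E : Finset (Finset (Fin n))) (R : Finset ℕ) (t : ℕ) : Prop :=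
  (∃ S, S.card = t ∧ isCompleteSub E R S) ∧ ∀ S, isCompleteSub E R S → S.card ≤ t

/-- AM-GM core: x^j * ((j+1)y - jx) ≤ y^(j+1) for nonneg x,y. -/
lemma MS.pow_aux (j : ℕ) {x y : ℝ} (hx : 0 ≤ x) (hy : 0 ≤ y) :
    x ^ j * (((j : ℝ) + 1) * y - (j : ℝ) * x) ≤ y ^ (j + 1) := by
  induction j with
  | zero => simp
  | succ k ih =>
      have h1 : y * (x ^ k * (((k : ℝ) + 1) * y - (k : ℝ) * x)) ≤ y * y ^ (k + 1) :=
        mul_le_mul_of_nonneg_left ih hy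
      have h2 : (0:ℝ) ≤ ((k:ℝ) + 1) * (x ^ k * (x - y)^2) :=
        mul_nonneg (by positivity) (mul_nonneg (pow_nonneg hx k) (sq_nonneg _))
      have hid : x ^ (k+1) * (((k:ℝ) + 1 + 1) * y - ((k:ℝ)+1) * x)
          = y * (x ^ k * (((k : ℝ) + 1) * y - (k : ℝ) * x)) - ((k:ℝ)+1) * (x ^ k * (x - y)^2) := by
        ring
      push_cast
      rw [hid]
      calc y * (x ^ k * (((k : ℝ) + 1) * y - (k : ℝ) * x)) - ((k:ℝ)+1) * (x ^ k * (x - y)^2)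
          ≤ y * y ^ (k+1) - 0 := by linarith
        _ = y ^ (k+2) := by ring

/-- binomial two-term bound -/
lemma MS.two_term (k : ℕ) {s v : ℝ} (hs : 0 ≤ s) (hv : 0 ≤ v) :
    s ^ (k+1) + ((k:ℝ)+1) * v * s ^ k ≤ (s + v) ^ (k+1) := by
  induction k with
  | zero => norm_num
  | succ k ih =>
      have h1 : (s + v) * (s ^ (k+1) + ((k:ℝ)+1) * v * s ^ k) ≤ (s + v) * (s + v) ^ (k+1) :=
        mul_le_mul_of_nonneg_left ih (by linarith)
      have h2 : (0:ℝ) ≤ ((k:ℝ)+1) * (v * v * s ^ k) :=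
        mul_nonneg (by positivity) (by positivity)
      push_cast
      calc s ^ (k+1+1) + ((k:ℝ)+1+1) * v * s ^ (k+1)
          = (s+v)*(s^(k+1) + ((k:ℝ)+1)*v*s^k) - ((k:ℝ)+1)*(v*v*s^k) := by ring
        _ ≤ (s+v)*(s+v)^(k+1) - 0 := by linarith
        _ = (s+v)^(k+1+1) := by ring

noncomputable def MS.esym {n : ℕ} (S : Finset (Fin n)) (j : ℕ) (x : Fin n → ℝ) : ℝ :=
  ∑ A ∈ S.powersetCard j, ∏ i ∈ A, x i

lemma MS.esym_nonneg {n : ℕ} (S : Finset (Fin n)) (j : ℕ) (x : Fin n → ℝ)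
    (hx : ∀ i, 0 ≤ x i) : 0 ≤ MS.esym S j x :=
  Finset.sum_nonneg fun A _ => Finset.prod_nonneg fun i _ => hx i

lemma MS.esym_zero {n : ℕ} (S : Finset (Fin n)) (x : Fin n → ℝ) : MS.esym S 0 x = 1 := by
  simp [MS.esym]

lemma MS.esym_of_card_lt {n : ℕ} {S : Finset (Fin n)} {j : ℕ} (h : S.card < j)
    (x : Fin n → ℝ) : MS.esym S j x = 0 := by
  rw [MS.esym, Finset.powersetCard_eq_empty.2 h, Finset.sum_empty]

lemma MS.esym_insert {n : ℕ} {S : Finset (Fin n)} {a : Fin n} (ha : a ∉ S) (j : ℕ)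
    (x : Fin n → ℝ) :
    MS.esym (insert a S) (j+1) x = MS.esym S (j+1) x + x a * MS.esym S j x := by
  rw [MS.esym, Finset.powersetCard_succ_insert ha, Finset.sum_union, Finset.sum_image]
  · rw [MS.esym, MS.esym, Finset.mul_sum]
    congr 1
    refine Finset.sum_congr rfl fun A hA => ?_
    have haA : a ∉ A := fun h => ha ((Finset.mem_powersetCard.1 hA).1 h)
    rw [Finset.prod_insert haA]
  · intro A hA B hB hAB
    have haA : a ∉ A := fun h => ha ((Finset.mem_powersetCard.1 hA).1 h)
    have haB : a ∉ B := fun h => ha ((Finset.mem_powersetCard.1 hB).1 h)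
    rw [← Finset.erase_insert haA, ← Finset.erase_insert haB, hAB]
  · rw [Finset.disjoint_left]
    intro A hA hA2
    obtain ⟨B, _, rfl⟩ := Finset.mem_image.1 hA2
    exact ha ((Finset.mem_powersetCard.1 hA).1 (Finset.mem_insert_self a B))

lemma MS.key (m k : ℕ) (hk : k ≤ m) {s v : ℝ} (hs : 0 ≤ s) (hv : 0 ≤ v) :
    (m.choose (k+1) : ℝ) * s^(k+1) * ((m:ℝ)+1)^(k+1)
      + v * (m.choose k : ℝ) * s^k * (m:ℝ) * ((m:ℝ)+1)^(k+1)
      ≤ ((m+1).choose (k+1) : ℝ) * (s+v)^(k+1) * (m:ℝ)^(k+1) := by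
  have hid : ((k:ℝ)+1) * (m.choose (k+1) : ℝ) = ((m:ℝ) - (k:ℝ)) * (m.choose k : ℝ) := by
    have h := Nat.choose_succ_right_eq m k
    have hc : ((m.choose (k+1) * (k+1) : ℕ) : ℝ) = ((m.choose k * (m - k) : ℕ) : ℝ) := by
      exact_mod_cast congrArg (Nat.cast : ℕ → ℝ) h
    push_cast [Nat.cast_sub hk] at hc
    linarith
  have hid2 : ((m:ℝ)+1) * (m.choose k : ℝ) = ((m+1).choose (k+1) : ℝ) * ((k:ℝ)+1) := by
    exact_mod_cast congrArg (Nat.cast : ℕ → ℝ) (Nat.add_one_mul_choose_eq m k)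
  have hx : (0:ℝ) ≤ ((m:ℝ)+1) * s := by positivity
  have hy : (0:ℝ) ≤ (m:ℝ) * (s+v) := by positivity
  have hp := MS.pow_aux k hx hy
  rw [mul_pow, mul_pow] at hp
  have hc : (0:ℝ) ≤ (m.choose k : ℝ) * ((m:ℝ)+1) := by positivity
  have h3 := mul_le_mul_of_nonneg_left hp hc
  have e1 : ((k:ℝ)+1) * ((m.choose (k+1) : ℝ) * s^(k+1) * ((m:ℝ)+1)^(k+1)
      + v * (m.choose k : ℝ) * s^k * (m:ℝ) * ((m:ℝ)+1)^(k+1))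
      = (m.choose k : ℝ) * ((m:ℝ)+1) *
        (((m:ℝ)+1)^k * s ^ k * (((k : ℝ) + 1) * ((m:ℝ)*(s+v)) - (k : ℝ) * (((m:ℝ)+1)*s))) := by
    linear_combination (s^(k+1) * ((m:ℝ)+1)^(k+1)) * hid
  have e2 : ((k:ℝ)+1) * (((m+1).choose (k+1) : ℝ) * (s+v)^(k+1) * (m:ℝ)^(k+1))
      = (m.choose k : ℝ) * ((m:ℝ)+1) * ((m:ℝ)^(k+1)*(s+v)^(k+1)) := by
    linear_combination (-((s+v)^(k+1) * (m:ℝ)^(k+1))) * hid2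
  have hk1 : (0:ℝ) < (k:ℝ)+1 := by positivity
  rw [← mul_le_mul_iff_right₀ hk1, e1, e2]
  exact h3

lemma MS.maclaurin {n : ℕ} (x : Fin n → ℝ) (hx : ∀ i, 0 ≤ x i) (S : Finset (Fin n)) :
    ∀ j : ℕ, (S.card : ℝ) ^ j * MS.esym S j x
      ≤ (S.card.choose j : ℝ) * (∑ i ∈ S, x i) ^ j := by
  induction S using Finset.induction_on with
  | empty =>
      intro j
      cases j with
      | zero => simp [MS.esym_zero]
      | succ k => simp [MS.esym_of_card_lt (by simp : (∅ : Finset (Fin n)).card < k+1)]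
  | @insert a S ha ih =>
      intro j
      cases j with
      | zero => simp [MS.esym_zero]
      | succ k =>
        rw [Finset.card_insert_of_notMem ha, Finset.sum_insert ha, MS.esym_insert ha]
        push_cast
        by_cases hSe : S = ∅
        · subst hSe
          cases k with
          | zero =>
              simp [MS.esym_zero,
                MS.esym_of_card_lt (show (∅ : Finset (Fin n)).card < 1 by simp)]
          | succ k' =>
              simp [MS.esym_of_card_lt (show (∅ : Finset (Fin n)).card < k'+2 by simp),
                MS.esym_of_card_lt (show (∅ : Finset (Fin n)).card < k'+1 by simp),
                Nat.choose_eq_zero_of_lt (show 1 < k'+2 by omega)]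
        set m := S.card with hm
        by_cases hcase : m < k
        · -- k + 1 > m + 1 : esym vanishes, choose vanishes
          have h1 : MS.esym S (k+1) x = 0 := MS.esym_of_card_lt (by omega) x
          have h2 : MS.esym S k x = 0 := MS.esym_of_card_lt (by omega) x
          rw [h1, h2, Nat.choose_eq_zero_of_lt (by omega)]
          simp
        · have hk : k ≤ m := by omega
          have hmpos : 0 < m := Finset.card_pos.2 (Finset.nonempty_of_ne_empty hSe)
          have ih1 := ih (k+1)
          have ih2 := ih k
          set s := ∑ i ∈ S, x i with hs
          have hs0 : 0 ≤ s := Finset.sum_nonneg fun i _ => hx i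
          have hv0 : 0 ≤ x a := hx a
          have hmr : (0:ℝ) < (m:ℝ)^(k+1) := by positivity
          rw [← mul_le_mul_iff_right₀ hmr]
          have hkey := MS.key m k hk hs0 hv0
          have c1 : (0:ℝ) ≤ ((m:ℝ)+1)^(k+1) := by positivity
          have c2 : (0:ℝ) ≤ x a * (m:ℝ) * ((m:ℝ)+1)^(k+1) := by positivity
          calc (m:ℝ)^(k+1) * (((m:ℝ)+1) ^ (k+1) * (MS.esym S (k+1) x + x a * MS.esym S k x))
              = ((m:ℝ)+1)^(k+1) * ((m:ℝ)^(k+1) * MS.esym S (k+1) x)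
                + (x a * (m:ℝ) * ((m:ℝ)+1)^(k+1)) * ((m:ℝ)^k * MS.esym S k x) := by ring
            _ ≤ ((m:ℝ)+1)^(k+1) * ((m.choose (k+1) : ℝ) * s^(k+1))
                + (x a * (m:ℝ) * ((m:ℝ)+1)^(k+1)) * ((m.choose k : ℝ) * s^k) := by
                  exact add_le_add (mul_le_mul_of_nonneg_left ih1 c1)
                    (mul_le_mul_of_nonneg_left ih2 c2)
            _ = (m.choose (k+1) : ℝ) * s^(k+1) * ((m:ℝ)+1)^(k+1)
                + (x a) * (m.choose k : ℝ) * s^k * (m:ℝ) * ((m:ℝ)+1)^(k+1) := by ring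
            _ ≤ ((m+1).choose (k+1) : ℝ) * (s + x a)^(k+1) * (m:ℝ)^(k+1) := hkey
            _ = (m:ℝ)^(k+1) * (((m+1).choose (k+1) : ℝ) * (x a + s)^(k+1)) := by ring

lemma MS.esym_le_fac {n : ℕ} (x : Fin n → ℝ) (hx : ∀ i, 0 ≤ x i) (S : Finset (Fin n)) :
    ∀ j : ℕ, (j.factorial : ℝ) * MS.esym S j x ≤ (∑ i ∈ S, x i) ^ j := by
  induction S using Finset.induction_on with
  | empty =>
      intro j
      cases j with
      | zero => simp [MS.esym_zero]
      | succ k => simp [MS.esym_of_card_lt (by simp : (∅ : Finset (Fin n)).card < k+1)]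
  | @insert a S ha ih =>
      intro j
      cases j with
      | zero => simp [MS.esym_zero]
      | succ k =>
        rw [Finset.sum_insert ha, MS.esym_insert ha]
        set s := ∑ i ∈ S, x i with hs
        have hs0 : 0 ≤ s := Finset.sum_nonneg fun i _ => hx i
        have hv0 : 0 ≤ x a := hx a
        have ih1 := ih (k+1)
        have ih2 := ih k
        have hfc : ((k+1).factorial : ℝ) = ((k:ℝ)+1) * (k.factorial : ℝ) := by
          push_cast [Nat.factorial_succ]; ring
        have c2 : (0:ℝ) ≤ ((k:ℝ)+1) * x a := by positivity
        calc ((k+1).factorial : ℝ) * (MS.esym S (k+1) x + x a * MS.esym S k x)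
            = ((k+1).factorial : ℝ) * MS.esym S (k+1) x
              + (((k:ℝ)+1) * x a) * ((k.factorial : ℝ) * MS.esym S k x) := by rw [hfc]; ring
          _ ≤ s^(k+1) + (((k:ℝ)+1) * x a) * s^k :=
              add_le_add ih1 (mul_le_mul_of_nonneg_left ih2 c2)
          _ = s^(k+1) + ((k:ℝ)+1) * x a * s^k := by ring
          _ ≤ (s + x a)^(k+1) := MS.two_term k hs0 hv0
          _ = (x a + s)^(k+1) := by ring

/-- Splitting the sum over all r-subsets by intersection size with W. -/
lemma MS.decomp {n r : ℕ} (x : Fin n → ℝ) (hx : ∀ i, 0 ≤ x i)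
    (W : Finset (Fin n)) (E : Finset (Finset (Fin n))) :
    ∑ e ∈ E.filter (fun e => e.card = r), ∏ i ∈ e, x i
      ≤ ∑ j ∈ Finset.range (r+1), MS.esym W j x * MS.esym Wᶜ (r - j) x := by
  have h0 : ∑ e ∈ E.filter (fun e => e.card = r), ∏ i ∈ e, x i
      ≤ ∑ e ∈ Finset.powersetCard r Finset.univ, ∏ i ∈ e, x i := by
    apply Finset.sum_le_sum_of_subset_of_nonneg
    · intro e he
      rw [Finset.mem_powersetCard_univ]
      exact (Finset.mem_filter.1 he).2
    · exact fun e _ _ => Finset.prod_nonneg fun i _ => hx i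
  refine h0.trans ?_
  rw [← Finset.sum_fiberwise_of_maps_to
      (g := fun e => (e ∩ W).card) (t := Finset.range (r+1)) ?_ (fun e => ∏ i ∈ e, x i)]
  swap
  · intro e he
    rw [Finset.mem_range]
    show (e ∩ W).card < r + 1
    have := Finset.card_le_card (Finset.inter_subset_left (s₁ := e) (s₂ := W))
    have he' := Finset.mem_powersetCard_univ.1 he
    omega
  apply Finset.sum_le_sum
  intro j hj
  -- fiber sum ≤ esym W j * esym Wᶜ (r-j)
  have himg : ∀ e ∈ (Finset.powersetCard r Finset.univ).filter (fun e => (e ∩ W).card = j),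
      (e ∩ W, e \ W) ∈ (W.powersetCard j) ×ˢ (Wᶜ.powersetCard (r - j)) := by
    intro e he
    rw [Finset.mem_filter, Finset.mem_powersetCard_univ] at he
    rw [Finset.mem_product, Finset.mem_powersetCard, Finset.mem_powersetCard]
    have hcd : (e ∩ W).card + (e \ W).card = e.card := Finset.card_inter_add_card_sdiff e W
    have hsd : (e \ W).card = r - j := by omega
    refine ⟨⟨Finset.inter_subset_right, he.2⟩, ⟨?_, hsd⟩⟩
    intro v hv
    rw [Finset.mem_compl]
    exact (Finset.mem_sdiff.1 hv).2
  have hinj : ∀ e₁ ∈ (Finset.powersetCard r Finset.univ).filter (fun e => (e ∩ W).card = j),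
      ∀ e₂ ∈ (Finset.powersetCard r Finset.univ).filter (fun e => (e ∩ W).card = j),
      (fun e => (e ∩ W, e \ W)) e₁ = (fun e => (e ∩ W, e \ W)) e₂ → e₁ = e₂ := by
    intro e₁ _ e₂ _ h
    simp only [Prod.mk.injEq] at h
    have h1 : e₁ ∩ W ∪ e₁ \ W = e₁ := by ext v; simp; tauto
    have h2 : e₂ ∩ W ∪ e₂ \ W = e₂ := by ext v; simp; tauto
    rw [← h1, ← h2, h.1, h.2]
  calc ∑ e ∈ (Finset.powersetCard r Finset.univ).filter (fun e => (e ∩ W).card = j),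
        ∏ i ∈ e, x i
      = ∑ e ∈ (Finset.powersetCard r Finset.univ).filter (fun e => (e ∩ W).card = j),
        ((∏ i ∈ e ∩ W, x i) * ∏ i ∈ e \ W, x i) := by
        refine Finset.sum_congr rfl fun e _ => ?_
        rw [← Finset.prod_union (Finset.disjoint_left.2 fun v hv1 hv2 =>
          (Finset.mem_sdiff.1 hv2).2 ((Finset.mem_inter.1 hv1).2))]
        congr 1
        ext v; simp; tauto
    _ = ∑ p ∈ ((Finset.powersetCard r Finset.univ).filter
          (fun e => (e ∩ W).card = j)).image (fun e => (e ∩ W, e \ W)),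
        ((∏ i ∈ p.1, x i) * ∏ i ∈ p.2, x i) :=
        (Finset.sum_image (f := fun p : Finset (Fin n) × Finset (Fin n) =>
          (∏ i ∈ p.1, x i) * ∏ i ∈ p.2, x i) hinj).symm
    _ ≤ ∑ p ∈ (W.powersetCard j) ×ˢ (Wᶜ.powersetCard (r - j)),
        ((∏ i ∈ p.1, x i) * ∏ i ∈ p.2, x i) := by
        apply Finset.sum_le_sum_of_subset_of_nonneg
        · intro p hp
          obtain ⟨e, he, rfl⟩ := Finset.mem_image.1 hp
          exact himg e he
        · exact fun p _ _ => mul_nonneg (Finset.prod_nonneg fun i _ => hx i)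
            (Finset.prod_nonneg fun i _ => hx i)
    _ = MS.esym W j x * MS.esym Wᶜ (r - j) x := by
        rw [Finset.sum_product, MS.esym, MS.esym, Finset.sum_mul]
        exact Finset.sum_congr rfl fun A _ => by rw [Finset.mul_sum]

/-- cast of descending factorial via choose. -/
lemma MS.desc_cast (t : ℕ) : ∀ j : ℕ, j ≤ t →
    ((j.factorial * t.choose j : ℕ) : ℝ) = ∏ i ∈ Finset.range j, ((t : ℝ) - (i : ℝ)) := by
  intro j
  induction j with
  | zero => simp
  | succ k ih =>
      intro hk
      have hk' : k ≤ t := by omega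
      rw [Finset.prod_range_succ, ← ih hk']
      have h := Nat.choose_succ_right_eq t k
      have hc : ((t.choose (k+1) * (k+1) : ℕ) : ℝ) = ((t.choose k * (t - k) : ℕ) : ℝ) := by
        exact_mod_cast congrArg (Nat.cast : ℕ → ℝ) h
      push_cast [Nat.cast_sub hk'] at hc ⊢
      have hfact : ((k+1).factorial : ℝ) = ((k:ℝ)+1) * (k.factorial : ℝ) := by
        push_cast [Nat.factorial_succ]; ring
      rw [hfact]
      nlinarith [hc]

noncomputable def MS.aa (t j : ℕ) : ℝ := (∏ i ∈ Finset.range j, ((t : ℝ) - (i : ℝ))) / (t : ℝ) ^ j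

lemma MS.aa_zero (t : ℕ) : MS.aa t 0 = 1 := by simp [MS.aa]

lemma MS.aa_succ {t : ℕ} (ht : 0 < t) (j : ℕ) :
    MS.aa t (j+1) = MS.aa t j * (((t:ℝ) - (j:ℝ)) / (t:ℝ)) := by
  have ht' : (t:ℝ) ≠ 0 := by positivity
  rw [MS.aa, MS.aa, Finset.prod_range_succ, pow_succ]
  field_simp

lemma MS.aa_nonneg {t : ℕ} (j : ℕ) (hj : j ≤ t) : 0 ≤ MS.aa t j := by
  apply div_nonneg
  · apply Finset.prod_nonneg
    intro i hi
    rw [Finset.mem_range] at hi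
    have : (i:ℝ) ≤ (t:ℝ) := by exact_mod_cast Nat.le_of_lt (lt_of_lt_of_le hi hj)
    linarith
  · positivity

lemma MS.aa_le_one {t : ℕ} (ht : 0 < t) : ∀ j, j ≤ t → MS.aa t j ≤ 1 := by
  intro j
  induction j with
  | zero => simp [MS.aa_zero]
  | succ k ih =>
      intro hk
      have hk' : k ≤ t := by omega
      rw [MS.aa_succ ht]
      have h1 : ((t:ℝ) - (k:ℝ)) / (t:ℝ) ≤ 1 := by
        rw [div_le_one (by positivity)]
        have : (0:ℝ) ≤ (k:ℝ) := by positivity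
        linarith
      have h2 : 0 ≤ ((t:ℝ) - (k:ℝ)) / (t:ℝ) := by
        apply div_nonneg _ (by positivity)
        have : (k:ℝ) ≤ (t:ℝ) := by exact_mod_cast hk'
        linarith
      calc MS.aa t k * (((t:ℝ) - (k:ℝ)) / (t:ℝ)) ≤ 1 * 1 :=
            mul_le_mul (ih hk') h1 h2 (by linarith [MS.aa_nonneg k hk', ih hk'])
        _ = 1 := by ring

/-- i * a_i is monotone below r-1 when t is large. -/
lemma MS.iaa_mono {t r : ℕ} (ht : 0 < t) (hrt : r ≤ t)
    (h2 : ((r:ℝ) - 2) * ((r:ℝ) - 1) ≤ (t:ℝ)) (hr : 3 ≤ r) :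
    ∀ i, i ≤ r - 1 → (i:ℝ) * MS.aa t i ≤ ((r:ℝ) - 1) * MS.aa t (r-1) := by
  have key : ∀ i, i + 1 ≤ r - 1 → (i:ℝ) * MS.aa t i ≤ ((i:ℝ)+1) * MS.aa t (i+1) := by
    intro i hi
    rw [MS.aa_succ ht]
    have hi' : (i:ℝ) + 1 ≤ (r:ℝ) - 1 := by
      have : (i+1 : ℕ) ≤ r - 1 := hi
      have h3 : ((i+1:ℕ):ℝ) ≤ ((r-1:ℕ):ℝ) := by exact_mod_cast this
      push_cast [Nat.cast_sub (by omega : 1 ≤ r)] at h3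
      linarith
    have hii : (i:ℝ) * ((i:ℝ)+1) ≤ (t:ℝ) := by nlinarith
    have haa := MS.aa_nonneg (t := t) i (by omega)
    rw [mul_comm (MS.aa t i) _, ← mul_assoc]
    apply mul_le_mul_of_nonneg_right _ haa
    have htpos : (0:ℝ) < (t:ℝ) := by exact_mod_cast ht
    rw [show ((i:ℝ)+1) * (((t:ℝ) - (i:ℝ)) / (t:ℝ)) = (((i:ℝ)+1) * ((t:ℝ) - (i:ℝ))) / (t:ℝ) by ring,
      le_div_iff₀ htpos]
    nlinarith
  intro i hi
  -- induction on d := (r-1) - i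
  obtain ⟨d, hd⟩ : ∃ d, i + d = r - 1 := ⟨r - 1 - i, by omega⟩
  clear hi
  induction d generalizing i with
  | zero =>
      have : i = r - 1 := by omega
      subst this
      have : ((r-1 : ℕ):ℝ) = (r:ℝ) - 1 := by push_cast [Nat.cast_sub (by omega : 1 ≤ r)]; ring
      rw [this]
  | succ d ihd =>
      have h1 := key i (by omega)
      have h2' := ihd (i+1) (by omega)
      push_cast at h2' ⊢
      linarith

/-- telescoping bound: a_j - a_r ≤ (r-j)(r-1) a_{r-1} / t. -/
lemma MS.telescope {t r : ℕ} (ht : 0 < t) (hrt : r ≤ t)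
    (h2 : ((r:ℝ) - 2) * ((r:ℝ) - 1) ≤ (t:ℝ)) (hr : 3 ≤ r) :
    ∀ j, j ≤ r → MS.aa t j - MS.aa t r ≤ ((r:ℝ) - (j:ℝ)) * (((r:ℝ)-1) * MS.aa t (r-1)) / (t:ℝ) := by
  have htpos : (0:ℝ) < (t:ℝ) := by exact_mod_cast ht
  intro j hj
  obtain ⟨d, hd⟩ : ∃ d, j + d = r := ⟨r - j, by omega⟩
  clear hj
  induction d generalizing j with
  | zero =>
      have : j = r := by omega
      subst this
      simp
  | succ d ihd =>
      have hj1 : j + 1 ≤ r := by omega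
      have hstep : MS.aa t j - MS.aa t (j+1) = (j:ℝ) * MS.aa t j / (t:ℝ) := by
        rw [MS.aa_succ ht]
        field_simp
        ring
      have hmono := MS.iaa_mono ht hrt h2 hr j (by omega)
      have hrest := ihd (j+1) (by omega)
      have hcast : ((j:ℝ)+1) = ((j+1:ℕ):ℝ) := by push_cast; ring
      have hnn : 0 ≤ ((r:ℝ)-1) * MS.aa t (r-1) := by
        apply mul_nonneg
        · have : (3:ℝ) ≤ (r:ℝ) := by exact_mod_cast hr
          linarith
        · exact MS.aa_nonneg (r-1) (by omega)
      push_cast at hrest ⊢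
      have h4 : MS.aa t j - MS.aa t (j+1) ≤ ((r:ℝ)-1) * MS.aa t (r-1) / (t:ℝ) := by
        rw [hstep, div_le_div_iff₀ htpos htpos]
        nlinarith
      have h5 : MS.aa t (j+1) - MS.aa t r
          ≤ ((r:ℝ) - ((j:ℝ)+1)) * (((r:ℝ)-1) * MS.aa t (r-1)) / (t:ℝ) := by
        convert hrest using 3 <;> push_cast <;> ring
      rw [le_div_iff₀ htpos] at h4 h5 ⊢
      nlinarith [h4, h5]

/-- The coefficient inequality: a_j ≤ 1 + a_r - j/r. -/
lemma MS.coeff_ineq {t r : ℕ} (ht : 0 < t) (hrt : r ≤ t) (hr : 3 ≤ r)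
    (h2 : ((r:ℝ) - 2) * ((r:ℝ) - 1) ≤ (t:ℝ))
    (h1 : (r:ℝ) * ((r:ℝ) - 1) * MS.aa t (r-1) ≤ (t:ℝ)) :
    ∀ j, j ≤ r → MS.aa t j ≤ 1 + MS.aa t r - (j:ℝ) / (r:ℝ) := by
  intro j hj
  have htpos : (0:ℝ) < (t:ℝ) := by exact_mod_cast ht
  have hrpos : (0:ℝ) < (r:ℝ) := by exact_mod_cast (by omega : 0 < r)
  have htel := MS.telescope ht hrt h2 hr j hj
  have hjr : (j:ℝ) ≤ (r:ℝ) := by exact_mod_cast hj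
  have hnn : 0 ≤ ((r:ℝ)-1) * MS.aa t (r-1) := by
    apply mul_nonneg
    · have : (3:ℝ) ≤ (r:ℝ) := by exact_mod_cast hr
      linarith
    · exact MS.aa_nonneg (r-1) (by omega)
  -- (r-j) * ((r-1) a_{r-1}) / t ≤ (r-j)/r
  have hfrac : ((r:ℝ) - (j:ℝ)) * (((r:ℝ)-1) * MS.aa t (r-1)) / (t:ℝ) ≤ ((r:ℝ) - (j:ℝ)) / (r:ℝ) := by
    rw [div_le_div_iff₀ htpos hrpos]
    have hrj : (0:ℝ) ≤ (r:ℝ) - (j:ℝ) := by linarith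
    nlinarith [mul_le_mul_of_nonneg_left h1 hrj]
  have := htel.trans hfrac
  have hsplit : ((r:ℝ) - (j:ℝ)) / (r:ℝ) = 1 - (j:ℝ)/(r:ℝ) := by
    field_simp
  linarith [hsplit ▸ this]

/-- Bernstein basis sums to 1. -/
lemma MS.bern_sum (r : ℕ) (u : ℝ) :
    ∑ j ∈ Finset.range (r+1), (r.choose j : ℝ) * u^j * (1-u)^(r-j) = 1 := by
  have h := add_pow u (1-u) r
  simp only [add_sub_cancel, one_pow] at h
  calc ∑ j ∈ Finset.range (r+1), (r.choose j : ℝ) * u^j * (1-u)^(r-j)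
      = ∑ j ∈ Finset.range (r+1), u^j * (1-u)^(r-j) * (r.choose j : ℝ) :=
        Finset.sum_congr rfl fun j _ => by ring
    _ = 1 := h.symm

/-- first moment of Bernstein basis. -/
lemma MS.bern_moment (r : ℕ) (hr : 1 ≤ r) (u : ℝ) :
    ∑ j ∈ Finset.range (r+1), (j:ℝ) * (r.choose j : ℝ) * u^j * (1-u)^(r-j) = (r:ℝ) * u := by
  obtain ⟨r', rfl⟩ : ∃ r', r = r' + 1 := ⟨r - 1, by omega⟩
  rw [Finset.sum_range_succ']
  simp only [Nat.cast_zero, zero_mul, add_zero]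
  push_cast
  have hterm : ∀ i ∈ Finset.range (r'+1),
      ((i:ℝ)+1) * ((r'+1).choose (i+1) : ℝ) * u^(i+1) * (1-u)^(r'-i)
      = ((r':ℝ)+1) * u * ((r'.choose i : ℝ) * u^i * (1-u)^(r'-i)) := by
    intro i _
    have hc : ((r'+1) * r'.choose i : ℕ) = ((r'+1).choose (i+1) * (i+1) : ℕ) :=
      Nat.add_one_mul_choose_eq r' i
    have hc2 : ((r':ℝ)+1) * (r'.choose i : ℝ) = ((r'+1).choose (i+1) : ℝ) * ((i:ℝ)+1) := by
      exact_mod_cast congrArg (Nat.cast : ℕ → ℝ) hc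
    linear_combination (-(u^(i+1)*(1-u)^(r'-i))) * hc2
  calc ∑ i ∈ Finset.range (r'+1),
        ((i:ℝ)+1) * ((r'+1).choose (i+1) : ℝ) * u^(i+1) * (1-u)^(r'-i)
      = ∑ i ∈ Finset.range (r'+1),
        ((r':ℝ)+1) * u * ((r'.choose i : ℝ) * u^i * (1-u)^(r'-i)) :=
        Finset.sum_congr rfl hterm
    _ = ((r':ℝ)+1) * u * ∑ i ∈ Finset.range (r'+1), (r'.choose i : ℝ) * u^i * (1-u)^(r'-i) := by
        rw [Finset.mul_sum]
    _ = ((r':ℝ) + 1) * u := by rw [MS.bern_sum r' u]; ring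

/-- main Bernstein-type bound. -/
lemma MS.bern_bound {t r : ℕ} (ht : 0 < t) (hrt : r ≤ t) (hr : 3 ≤ r)
    (h2 : ((r:ℝ) - 2) * ((r:ℝ) - 1) ≤ (t:ℝ))
    (h1 : (r:ℝ) * ((r:ℝ) - 1) * MS.aa t (r-1) ≤ (t:ℝ))
    {u : ℝ} (hu0 : 0 ≤ u) (hu1 : u ≤ 1) :
    ∑ j ∈ Finset.range (r+1), (r.choose j : ℝ) * MS.aa t j * u^j * (1-u)^(r-j)
      ≤ 1 + MS.aa t r - u := by
  have hrpos : (0:ℝ) < (r:ℝ) := by exact_mod_cast (by omega : 0 < r)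
  have step1 : ∑ j ∈ Finset.range (r+1), (r.choose j : ℝ) * MS.aa t j * u^j * (1-u)^(r-j)
      ≤ ∑ j ∈ Finset.range (r+1),
        (r.choose j : ℝ) * (1 + MS.aa t r - (j:ℝ)/(r:ℝ)) * u^j * (1-u)^(r-j) := by
    apply Finset.sum_le_sum
    intro j hj
    have hj' : j ≤ r := by
      rw [Finset.mem_range] at hj; omega
    have hc := MS.coeff_ineq ht hrt hr h2 h1 j hj'
    have hb : (0:ℝ) ≤ (r.choose j : ℝ) * (u^j * (1-u)^(r-j)) := by
      apply mul_nonneg (by positivity)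
      apply mul_nonneg (pow_nonneg hu0 _) (pow_nonneg (by linarith) _)
    nlinarith [mul_le_mul_of_nonneg_right hc hb]
  refine step1.trans ?_
  have expand : ∑ j ∈ Finset.range (r+1),
      (r.choose j : ℝ) * (1 + MS.aa t r - (j:ℝ)/(r:ℝ)) * u^j * (1-u)^(r-j)
      = (1 + MS.aa t r) * (∑ j ∈ Finset.range (r+1), (r.choose j : ℝ) * u^j * (1-u)^(r-j))
        - (1/(r:ℝ)) * ∑ j ∈ Finset.range (r+1), (j:ℝ) * (r.choose j : ℝ) * u^j * (1-u)^(r-j) := by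
    rw [Finset.mul_sum, Finset.mul_sum, ← Finset.sum_sub_distrib]
    refine Finset.sum_congr rfl fun j _ => ?_
    field_simp
  rw [expand, MS.bern_sum, MS.bern_moment r (by omega) u]
  have : (1/(r:ℝ)) * ((r:ℝ) * u) = u := by field_simp
  rw [this]
  linarith

/-- consequences of the ceiling hypothesis. -/
lemma MS.threshold {t r : ℕ} (hr : 3 ≤ r)
    (ht : ((r : ℝ) * ((r : ℝ) - 1) - 1) ^ (r - 2) / ((r : ℝ) * ((r : ℝ) - 1)) ^ (r - 3) ≤ (t:ℝ)) :
    ((r:ℝ)*((r:ℝ)-1) - ((r:ℝ)-2) ≤ (t:ℝ)) ∧ (r:ℝ) * ((r:ℝ) - 1) * MS.aa t (r-1) ≤ (t:ℝ) := by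
  set q : ℝ := (r:ℝ) * ((r:ℝ) - 1) with hq
  have hr3 : (3:ℝ) ≤ (r:ℝ) := by exact_mod_cast hr
  have hqpos : (0:ℝ) < q := by nlinarith
  have hq6 : (6:ℝ) ≤ q := by nlinarith
  have hqexp : q ^ (r-2) = q ^ (r-3) * q := by
    rw [← pow_succ]
    congr 1
    omega
  have hthr : q * ((q-1)/q)^(r-2) ≤ (t:ℝ) := by
    have : q * ((q-1)/q)^(r-2) = (q-1)^(r-2) / q^(r-3) := by
      rw [div_pow, hqexp]
      field_simp
    rw [this]
    exact ht
  -- Bernoulli lower bound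
  have hbern : 1 - ((r:ℝ)-2) / q ≤ ((q-1)/q)^(r-2) := by
    have hq1 : 1/q ≤ 1 := by rw [div_le_one hqpos]; linarith
    have hb := one_add_mul_le_pow (a := -(1/q)) (by linarith) (r-2)
    have hcast : ((r-2 : ℕ):ℝ) = (r:ℝ) - 2 := by
      push_cast [Nat.cast_sub (by omega : 2 ≤ r)]; ring
    have he : (1 + -(1/q)) = (q-1)/q := by field_simp; ring
    rw [he, hcast] at hb
    have : 1 + ((r:ℝ)-2) * -(1/q) = 1 - ((r:ℝ)-2)/q := by ring
    linarith [this ▸ hb]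
  have hlow : q - ((r:ℝ)-2) ≤ (t:ℝ) := by
    have h3 : q * (1 - ((r:ℝ)-2)/q) ≤ q * ((q-1)/q)^(r-2) :=
      mul_le_mul_of_nonneg_left hbern (le_of_lt hqpos)
    have h4 : q * (1 - ((r:ℝ)-2)/q) = q - ((r:ℝ)-2) := by field_simp
    linarith [h4 ▸ h3]
  refine ⟨hlow, ?_⟩
  -- now the key bound q * aa t (r-1) ≤ t
  have htpos : (0:ℝ) < (t:ℝ) := by nlinarith
  have ht0 : 0 < t := by exact_mod_cast htpos
  have hrt : (r:ℝ) ≤ (t:ℝ) := by nlinarith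
  have hrtn : r ≤ t := by exact_mod_cast hrt
  -- aa t (r-1) ≤ t * (t-1)^(r-2) / t^(r-1)
  have hprod : ∏ i ∈ Finset.range (r-1), ((t:ℝ) - (i:ℝ)) ≤ (t:ℝ) * ((t:ℝ)-1)^(r-2) := by
    obtain ⟨m, hm⟩ : ∃ m, r - 1 = m + 1 := ⟨r - 2, by omega⟩
    rw [hm, Finset.prod_range_succ']
    push_cast
    have hm2 : m = r - 2 := by omega
    have hb : ∏ i ∈ Finset.range m, ((t:ℝ) - ((i:ℕ)+1 : ℝ)) ≤ ((t:ℝ)-1)^m := by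
      have : ((t:ℝ)-1)^m = ∏ _i ∈ Finset.range m, ((t:ℝ)-1) := by
        rw [Finset.prod_const, Finset.card_range]
      rw [this]
      apply Finset.prod_le_prod
      · intro i hi
        rw [Finset.mem_range] at hi
        have : ((i:ℝ)+1) ≤ (t:ℝ) := by
          have : (i+1 : ℕ) ≤ t := by omega
          exact_mod_cast this
        linarith
      · intro i hi
        have : (0:ℝ) ≤ (i:ℝ) := by positivity
        linarith
    calc (∏ i ∈ Finset.range m, ((t:ℝ) - ((i:ℕ)+1:ℝ))) * ((t:ℝ) - 0)
        = (∏ i ∈ Finset.range m, ((t:ℝ) - ((i:ℕ)+1:ℝ))) * (t:ℝ) := by norm_num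
      _ ≤ ((t:ℝ)-1)^m * (t:ℝ) := by
          apply mul_le_mul_of_nonneg_right hb (le_of_lt htpos)
      _ = (t:ℝ) * ((t:ℝ)-1)^(r-2) := by rw [hm2]; ring
  have haa : MS.aa t (r-1) ≤ ((t:ℝ)-1)^(r-2) / (t:ℝ)^(r-2) := by
    rw [MS.aa]
    have hexp : (t:ℝ)^(r-1) = (t:ℝ) * (t:ℝ)^(r-2) := by
      rw [← pow_succ']
      congr 1
      omega
    rw [div_le_div_iff₀ (by positivity) (by positivity), hexp]
    calc (∏ i ∈ Finset.range (r-1), ((t:ℝ) - (i:ℝ))) * (t:ℝ)^(r-2)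
        ≤ ((t:ℝ) * ((t:ℝ)-1)^(r-2)) * (t:ℝ)^(r-2) :=
          mul_le_mul_of_nonneg_right hprod (by positivity)
      _ = ((t:ℝ)-1)^(r-2) * ((t:ℝ) * (t:ℝ)^(r-2)) := by ring
  have ht1 : (0:ℝ) ≤ (t:ℝ) - 1 := by nlinarith
  by_cases hcase : q ≤ (t:ℝ)
  · -- easy case
    have hfrac : ((t:ℝ)-1)^(r-2) / (t:ℝ)^(r-2) ≤ 1 := by
      rw [div_le_one (by positivity)]
      apply pow_le_pow_left₀ ht1
      linarith
    calc q * MS.aa t (r-1) ≤ q * (((t:ℝ)-1)^(r-2) / (t:ℝ)^(r-2)) :=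
          mul_le_mul_of_nonneg_left haa (le_of_lt hqpos)
      _ ≤ q * 1 := mul_le_mul_of_nonneg_left hfrac (le_of_lt hqpos)
      _ ≤ (t:ℝ) := by linarith
  · push_neg at hcase
    have hmono : ((t:ℝ)-1)/(t:ℝ) ≤ (q-1)/q := by
      rw [div_le_div_iff₀ htpos hqpos]
      nlinarith
    have hfrac2 : ((t:ℝ)-1)^(r-2) / (t:ℝ)^(r-2) ≤ ((q-1)/q)^(r-2) := by
      rw [← div_pow]
      apply pow_le_pow_left₀ (by positivity) hmono
    calc q * MS.aa t (r-1) ≤ q * (((t:ℝ)-1)^(r-2) / (t:ℝ)^(r-2)) :=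
          mul_le_mul_of_nonneg_left haa (le_of_lt hqpos)
      _ ≤ q * ((q-1)/q)^(r-2) := mul_le_mul_of_nonneg_left hfrac2 (le_of_lt hqpos)
      _ ≤ (t:ℝ) := hthr

lemma MS.esym_one {n : ℕ} (W : Finset (Fin n)) (x : Fin n → ℝ) :
    MS.esym W 1 x = ∑ i ∈ W, x i := by
  rw [MS.esym, Finset.powersetCard_one, Finset.sum_map]
  refine Finset.sum_congr rfl fun v _ => ?_
  rw [show (⟨_, Finset.singleton_injective⟩ : Fin n ↪ Finset (Fin n)) v = {v} from rfl,
    Finset.prod_singleton]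

lemma MS.prod_shift (m : ℕ) (f : ℕ → ℝ) :
    ∏ i ∈ Finset.range m, f (i+1) = ∏ i ∈ Finset.Icc 1 m, f i := by
  induction m with
  | zero => simp
  | succ k ih => rw [Finset.prod_range_succ, ih, Finset.prod_Icc_succ_top (by omega)]

lemma MS.aa_eq_Icc {t r : ℕ} (ht : 0 < t) (hr : 1 ≤ r) :
    MS.aa t r = (∏ i ∈ Finset.Icc 1 (r-1), ((t:ℝ) - (i:ℝ))) / (t:ℝ)^(r-1) := by
  obtain ⟨m, rfl⟩ : ∃ m, r = m + 1 := ⟨r - 1, by omega⟩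
  rw [MS.aa, Finset.prod_range_succ']
  have hs := MS.prod_shift m (fun i => (t:ℝ) - (i:ℝ))
  push_cast at hs ⊢
  rw [hs]
  have htne : (t:ℝ) ≠ 0 := by positivity
  rw [pow_succ]
  field_simp
  ring

/-- The main upper bound on the Lagrangian polynomial. -/
lemma MS.upper {n r t : ℕ} (hr : 3 ≤ r) (hrt : r ≤ t) (ht : 0 < t)
    (h2 : ((r:ℝ)-2)*((r:ℝ)-1) ≤ (t:ℝ)) (h1 : (r:ℝ)*((r:ℝ)-1)*MS.aa t (r-1) ≤ (t:ℝ))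
    (E : Finset (Finset (Fin n))) (W : Finset (Fin n)) (hW : W.card = t)
    (hcard : ∀ e ∈ E, e.card = 1 ∨ e.card = r)
    (hsing : ∀ e ∈ E, e.card = 1 → e ⊆ W)
    (x : Fin n → ℝ) (hx : isLegal x) :
    lagPoly E x ≤ 1 + MS.aa t r := by
  obtain ⟨hsum, hpos⟩ := hx
  have htpos : (0:ℝ) < (t:ℝ) := by exact_mod_cast ht
  set u := ∑ i ∈ W, x i with hu
  have hu0 : 0 ≤ u := Finset.sum_nonneg fun i _ => hpos i
  have hu1 : u ≤ 1 := by
    rw [← hsum]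
    exact Finset.sum_le_sum_of_subset_of_nonneg (Finset.subset_univ W)
      (fun i _ _ => hpos i)
  have hcompl : ∑ i ∈ Wᶜ, x i = 1 - u := by
    have := Finset.sum_add_sum_compl W x
    rw [hsum] at this
    linarith
  rw [lagPoly, ← Finset.sum_filter_add_sum_filter_not E (fun e => e.card = 1)]
  have hEr : E.filter (fun e => ¬ e.card = 1) = E.filter (fun e => e.card = r) := by
    ext e
    simp only [Finset.mem_filter]
    constructor
    · rintro ⟨he, hne⟩
      rcases hcard e he with h | h
      · exact absurd h hne
      · exact ⟨he, h⟩
    · rintro ⟨he, hcr⟩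
      refine ⟨he, ?_⟩
      omega
  rw [hEr]
  -- part 1
  have part1 : ∑ e ∈ E.filter (fun e => e.card = 1), (e.card.factorial : ℝ) * ∏ i ∈ e, x i
      ≤ u := by
    have heq : ∀ e ∈ E.filter (fun e => e.card = 1),
        (e.card.factorial : ℝ) * ∏ i ∈ e, x i = ∏ i ∈ e, x i := by
      intro e he
      rw [(Finset.mem_filter.1 he).2]
      norm_num
    rw [Finset.sum_congr rfl heq]
    have hsub : E.filter (fun e => e.card = 1) ⊆ W.powersetCard 1 := by
      intro e he
      rw [Finset.mem_powersetCard]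
      have h1 := (Finset.mem_filter.1 he).2
      exact ⟨hsing e (Finset.mem_filter.1 he).1 h1, h1⟩
    calc ∑ e ∈ E.filter (fun e => e.card = 1), ∏ i ∈ e, x i
        ≤ ∑ e ∈ W.powersetCard 1, ∏ i ∈ e, x i :=
          Finset.sum_le_sum_of_subset_of_nonneg hsub
            (fun e _ _ => Finset.prod_nonneg fun i _ => hpos i)
      _ = u := MS.esym_one W x
  -- part 2
  have part2 : ∑ e ∈ E.filter (fun e => e.card = r), (e.card.factorial : ℝ) * ∏ i ∈ e, x i
      ≤ 1 + MS.aa t r - u := by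
    have heq : ∀ e ∈ E.filter (fun e => e.card = r),
        (e.card.factorial : ℝ) * ∏ i ∈ e, x i = (r.factorial : ℝ) * ∏ i ∈ e, x i := by
      intro e he
      rw [(Finset.mem_filter.1 he).2]
    rw [Finset.sum_congr rfl heq, ← Finset.mul_sum]
    have hdec := MS.decomp x hpos W E (r := r)
    have hfac : (0:ℝ) ≤ (r.factorial : ℝ) := by positivity
    have step1 : (r.factorial : ℝ) * ∑ e ∈ E.filter (fun e => e.card = r), ∏ i ∈ e, x i
        ≤ (r.factorial : ℝ) * ∑ j ∈ Finset.range (r+1), MS.esym W j x * MS.esym Wᶜ (r-j) x :=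
      mul_le_mul_of_nonneg_left hdec hfac
    refine step1.trans ?_
    rw [Finset.mul_sum]
    have step2 : ∀ j ∈ Finset.range (r+1),
        (r.factorial : ℝ) * (MS.esym W j x * MS.esym Wᶜ (r-j) x)
        ≤ (r.choose j : ℝ) * MS.aa t j * u^j * (1-u)^(r-j) := by
      intro j hj
      rw [Finset.mem_range] at hj
      have hjr : j ≤ r := by omega
      have hjt : j ≤ t := le_trans hjr hrt
      -- Maclaurin bound for W
      have hm1 : MS.esym W j x ≤ (t.choose j : ℝ) * u^j / (t:ℝ)^j := by
        have := MS.maclaurin x hpos W j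
        rw [hW] at this
        rw [le_div_iff₀ (by positivity)]
        calc MS.esym W j x * (t:ℝ)^j = (t:ℝ)^j * MS.esym W j x := by ring
          _ ≤ (t.choose j : ℝ) * u^j := this
      have hm2 : MS.esym Wᶜ (r-j) x ≤ (1-u)^(r-j) / ((r-j).factorial : ℝ) := by
        have := MS.esym_le_fac x hpos Wᶜ (r-j)
        rw [hcompl] at this
        rw [le_div_iff₀ (by positivity)]
        calc MS.esym Wᶜ (r-j) x * ((r-j).factorial : ℝ)
            = ((r-j).factorial : ℝ) * MS.esym Wᶜ (r-j) x := by ring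
          _ ≤ (1-u)^(r-j) := this
      have he1 : 0 ≤ MS.esym Wᶜ (r-j) x := MS.esym_nonneg _ _ _ hpos
      have he0 : 0 ≤ MS.esym W j x := MS.esym_nonneg _ _ _ hpos
      have hb1 : (0:ℝ) ≤ (t.choose j : ℝ) * u^j / (t:ℝ)^j := by positivity
      have hprod : MS.esym W j x * MS.esym Wᶜ (r-j) x
          ≤ ((t.choose j : ℝ) * u^j / (t:ℝ)^j) * ((1-u)^(r-j) / ((r-j).factorial : ℝ)) :=
        mul_le_mul hm1 hm2 he1 hb1
      have hchain := mul_le_mul_of_nonneg_left hprod hfac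
      refine hchain.trans (le_of_eq ?_)
      -- the identity
      have e1 : (r.factorial : ℝ) = (r.choose j : ℝ) * (j.factorial : ℝ) * ((r-j).factorial : ℝ) := by
        exact_mod_cast congrArg (Nat.cast : ℕ → ℝ)
          (Nat.choose_mul_factorial_mul_factorial hjr).symm
      have e2 : (j.factorial : ℝ) * (t.choose j : ℝ) = ∏ i ∈ Finset.range j, ((t:ℝ) - (i:ℝ)) := by
        exact_mod_cast MS.desc_cast t j hjt
      rw [MS.aa, e1, ← e2]
      have hfj : ((r-j).factorial : ℝ) ≠ 0 := by positivity
      have htj : ((t:ℝ))^j ≠ 0 := by positivity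
      field_simp
    calc ∑ j ∈ Finset.range (r+1), (r.factorial : ℝ) * (MS.esym W j x * MS.esym Wᶜ (r-j) x)
        ≤ ∑ j ∈ Finset.range (r+1), (r.choose j : ℝ) * MS.aa t j * u^j * (1-u)^(r-j) :=
          Finset.sum_le_sum step2
      _ ≤ 1 + MS.aa t r - u := MS.bern_bound ht hrt hr h2 h1 hu0 hu1
  linarith

/-- the uniform weighting on a t-set. -/
noncomputable def MS.unif {n : ℕ} (S : Finset (Fin n)) (t : ℕ) : Fin n → ℝ :=
  fun v => if v ∈ S then ((t:ℝ))⁻¹ else 0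

lemma MS.unif_legal {n t : ℕ} (ht : 0 < t) (S : Finset (Fin n)) (hS : S.card = t) :
    isLegal (MS.unif S t) := by
  have htne : (t:ℝ) ≠ 0 := by positivity
  constructor
  · rw [show (∑ i, MS.unif S t i) = ∑ i ∈ Finset.univ, (if i ∈ S then ((t:ℝ))⁻¹ else 0) from rfl,
      Finset.sum_ite_mem, Finset.univ_inter, Finset.sum_const, hS, nsmul_eq_mul]
    field_simp
  · intro i
    rw [MS.unif]
    split <;> positivity

lemma MS.unif_sum {n r t : ℕ} (hr : 3 ≤ r) (hrt : r ≤ t) (ht : 0 < t)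
    (S : Finset (Fin n)) (hS : S.card = t) :
    ∑ e ∈ S.powersetCard 1 ∪ S.powersetCard r,
      ((e.card.factorial : ℝ) * ∏ i ∈ e, MS.unif S t i) = 1 + MS.aa t r := by
  have htne : (t:ℝ) ≠ 0 := by positivity
  have hdisj : Disjoint (S.powersetCard 1) (S.powersetCard r) := by
    rw [Finset.disjoint_left]
    intro e he1 her
    have h1 := (Finset.mem_powersetCard.1 he1).2
    have h2 := (Finset.mem_powersetCard.1 her).2
    omega
  rw [Finset.sum_union hdisj]
  have part1 : ∑ e ∈ S.powersetCard 1, ((e.card.factorial : ℝ) * ∏ i ∈ e, MS.unif S t i)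
      = 1 := by
    rw [Finset.powersetCard_one, Finset.sum_map]
    have : ∀ v ∈ S, ((({v} : Finset (Fin n)).card.factorial : ℝ) * ∏ i ∈ ({v} : Finset (Fin n)), MS.unif S t i)
        = ((t:ℝ))⁻¹ := by
      intro v hv
      rw [Finset.card_singleton, Finset.prod_singleton, MS.unif, if_pos hv]
      norm_num
    calc ∑ v ∈ S, ((((⟨_, Finset.singleton_injective⟩ : Fin n ↪ Finset (Fin n)) v).card.factorial : ℝ)
          * ∏ i ∈ ((⟨_, Finset.singleton_injective⟩ : Fin n ↪ Finset (Fin n)) v), MS.unif S t i)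
        = ∑ v ∈ S, ((t:ℝ))⁻¹ := Finset.sum_congr rfl this
      _ = 1 := by
          rw [Finset.sum_const, hS, nsmul_eq_mul]
          field_simp
  have part2 : ∑ e ∈ S.powersetCard r, ((e.card.factorial : ℝ) * ∏ i ∈ e, MS.unif S t i)
      = MS.aa t r := by
    have hterm : ∀ e ∈ S.powersetCard r,
        ((e.card.factorial : ℝ) * ∏ i ∈ e, MS.unif S t i)
        = (r.factorial : ℝ) * ((t:ℝ))⁻¹ ^ r := by
      intro e he
      rw [Finset.mem_powersetCard] at he
      rw [he.2]
      congr 1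
      calc ∏ i ∈ e, MS.unif S t i = ∏ i ∈ e, ((t:ℝ))⁻¹ :=
            Finset.prod_congr rfl fun i hi => by rw [MS.unif, if_pos (he.1 hi)]
        _ = ((t:ℝ))⁻¹ ^ r := by rw [Finset.prod_const, he.2]
    rw [Finset.sum_congr rfl hterm, Finset.sum_const, Finset.card_powersetCard, hS, nsmul_eq_mul]
    have hdc : (r.factorial : ℝ) * (t.choose r : ℝ) = ∏ i ∈ Finset.range r, ((t:ℝ) - (i:ℝ)) := by
      exact_mod_cast MS.desc_cast t r hrt
    rw [MS.aa, ← hdc]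
    field_simp
    rw [mul_assoc, ← mul_pow, one_div_mul_cancel htne, one_pow, mul_one]
  rw [part1, part2]

/-- Motzkin–Straus type theorem for {1,r}-graphs (Theorem 6 of the paper). -/
theorem lagrangian_one_r_graph (r t n : ℕ) (hr : 3 ≤ r)
    (ht : (⌈((r : ℝ) * ((r : ℝ) - 1) - 1) ^ (r - 2) / ((r : ℝ) * ((r : ℝ) - 1)) ^ (r - 3)⌉ : ℤ)
      ≤ (t : ℤ))
    (E : Finset (Finset (Fin n)))
    (hR : E.image Finset.card = ({1, r} : Finset ℕ))
    (hmax1r : maxCompleteOrder E ({1, r} : Finset ℕ) t)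
    (hmax1 : maxCompleteOrder E ({1} : Finset ℕ) t) :
    lagrangian E = lagrangian (completeEdges t ({1, r} : Finset ℕ)) ∧
    lagrangian (completeEdges t ({1, r} : Finset ℕ)) =
      1 + (∏ i ∈ Finset.Icc 1 (r - 1), ((t : ℝ) - (i : ℝ))) / (t : ℝ) ^ (r - 1) := by
  classical
  have hthr : ((r : ℝ) * ((r : ℝ) - 1) - 1) ^ (r - 2) / ((r : ℝ) * ((r : ℝ) - 1)) ^ (r - 3)
      ≤ (t:ℝ) := by
    have h := Int.ceil_le.1 ht
    exact_mod_cast h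
  obtain ⟨hlow, h1⟩ := MS.threshold hr hthr
  have hr3 : (3:ℝ) ≤ (r:ℝ) := by exact_mod_cast hr
  have h2 : ((r:ℝ)-2)*((r:ℝ)-1) ≤ (t:ℝ) := by nlinarith
  have htpos : (0:ℝ) < (t:ℝ) := by nlinarith
  have ht0 : 0 < t := by exact_mod_cast htpos
  have hrt : r ≤ t := by
    have : (r:ℝ) ≤ (t:ℝ) := by nlinarith
    exact_mod_cast this
  have hcard : ∀ e ∈ E, e.card = 1 ∨ e.card = r := by
    intro e he
    have h := Finset.mem_image_of_mem Finset.card he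
    rw [hR] at h
    simpa using h
  obtain ⟨⟨S, hSt, hScomp⟩, _⟩ := hmax1r
  set W := Finset.univ.filter (fun v : Fin n => ({v} : Finset (Fin n)) ∈ E) with hWdef
  have hsing : ∀ e ∈ E, e.card = 1 → e ⊆ W := by
    intro e he hc
    obtain ⟨v, rfl⟩ := Finset.card_eq_one.1 hc
    intro w hw
    rw [Finset.mem_singleton] at hw
    subst hw
    exact Finset.mem_filter.2 ⟨Finset.mem_univ w, he⟩
  have hWc : W.card = t := by
    obtain ⟨⟨S1, hS1, hS1c⟩, hub⟩ := hmax1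
    apply le_antisymm
    · apply hub
      intro e hsub hcardm
      rw [Finset.mem_singleton] at hcardm
      obtain ⟨v, rfl⟩ := Finset.card_eq_one.1 hcardm
      have hv := hsub (Finset.mem_singleton_self v)
      exact (Finset.mem_filter.1 hv).2
    · rw [← hS1]
      apply Finset.card_le_card
      intro v hv
      exact Finset.mem_filter.2 ⟨Finset.mem_univ v,
        hS1c {v} (Finset.singleton_subset_iff.2 hv) (by simp)⟩
  -- E side
  have hUB : ∀ v ∈ {v : ℝ | ∃ x : Fin n → ℝ, isLegal x ∧ lagPoly E x = v},
      v ≤ 1 + MS.aa t r := by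
    rintro v ⟨x, hx, rfl⟩
    exact MS.upper hr hrt ht0 h2 h1 E W hWc hcard hsing x hx
  have hx0 : isLegal (MS.unif S t) := MS.unif_legal ht0 S hSt
  have hsubE : S.powersetCard 1 ∪ S.powersetCard r ⊆ E := by
    intro e hemem
    rcases Finset.mem_union.1 hemem with h | h
    · have hm := Finset.mem_powersetCard.1 h
      exact hScomp e hm.1 (by rw [hm.2]; simp)
    · have hm := Finset.mem_powersetCard.1 h
      exact hScomp e hm.1 (by rw [hm.2]; simp)
  have hval : lagPoly E (MS.unif S t) = 1 + MS.aa t r := by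
    rw [lagPoly, ← MS.unif_sum hr hrt ht0 S hSt]
    refine (Finset.sum_subset hsubE ?_).symm
    intro e heE hne
    rcases hcard e heE with hc | hc
    · by_cases hsub : e ⊆ S
      · exact absurd (Finset.mem_union.2 (Or.inl (Finset.mem_powersetCard.2 ⟨hsub, hc⟩))) hne
      · obtain ⟨v, hv, hvS⟩ := Finset.not_subset.1 hsub
        rw [Finset.prod_eq_zero hv (by rw [MS.unif, if_neg hvS]), mul_zero]
    · by_cases hsub : e ⊆ S
      · exact absurd (Finset.mem_union.2 (Or.inr (Finset.mem_powersetCard.2 ⟨hsub, hc⟩))) hne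
      · obtain ⟨v, hv, hvS⟩ := Finset.not_subset.1 hsub
        rw [Finset.prod_eq_zero hv (by rw [MS.unif, if_neg hvS]), mul_zero]
  have hlagE : lagrangian E = 1 + MS.aa t r := by
    apply le_antisymm
    · exact csSup_le ⟨1 + MS.aa t r, ⟨MS.unif S t, hx0, hval⟩⟩ hUB
    · exact le_csSup ⟨1 + MS.aa t r, hUB⟩ ⟨MS.unif S t, hx0, hval⟩
  -- K_t side
  have hWK : (Finset.univ : Finset (Fin t)).card = t := by simp
  have hKedges : completeEdges t ({1, r} : Finset ℕ)
      = (Finset.univ : Finset (Fin t)).powersetCard 1 ∪ (Finset.univ : Finset (Fin t)).powersetCard r := by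
    ext e
    simp only [completeEdges, Finset.mem_filter, Finset.mem_univ, true_and,
      Finset.mem_insert, Finset.mem_singleton, Finset.mem_union,
      Finset.mem_powersetCard_univ]
  have hcardK : ∀ e ∈ completeEdges t ({1, r} : Finset ℕ), e.card = 1 ∨ e.card = r := by
    intro e he
    have := (Finset.mem_filter.1 he).2
    simpa using this
  have hUBK : ∀ v ∈ {v : ℝ | ∃ x : Fin t → ℝ, isLegal x ∧
      lagPoly (completeEdges t ({1, r} : Finset ℕ)) x = v}, v ≤ 1 + MS.aa t r := by
    rintro v ⟨x, hx, rfl⟩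
    exact MS.upper hr hrt ht0 h2 h1 _ Finset.univ hWK hcardK
      (fun e _ _ => Finset.subset_univ e) x hx
  have hx0K : isLegal (MS.unif (Finset.univ : Finset (Fin t)) t) :=
    MS.unif_legal ht0 _ hWK
  have hvalK : lagPoly (completeEdges t ({1, r} : Finset ℕ))
      (MS.unif (Finset.univ : Finset (Fin t)) t) = 1 + MS.aa t r := by
    rw [lagPoly, hKedges]
    exact MS.unif_sum hr hrt ht0 _ hWK
  have hlagK : lagrangian (completeEdges t ({1, r} : Finset ℕ)) = 1 + MS.aa t r := by
    apply le_antisymm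
    · exact csSup_le ⟨1 + MS.aa t r, ⟨_, hx0K, hvalK⟩⟩ hUBK
    · exact le_csSup ⟨1 + MS.aa t r, hUBK⟩ ⟨_, hx0K, hvalK⟩
  constructor
  · rw [hlagE, hlagK]
  · rw [hlagK, MS.aa_eq_Icc ht0 (by omega)]
end

section
/- Let t ≥ 8 be an integer and let H be a {1,2,3}-graph such that both the order of a maximum complete {1,2,3}-subgraph of H and the order of a maximum complete {1}-subgraph of H (i.e., the number of singleton edges of H) equal t. Then λ'(H) = λ'(K_t^{{1,2,3}}) = 1 + (t-1)/t + (t-1)(t-2)/t². -/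
open Finset

variable {α : Type*} [DecidableEq α]

/-- elementary symmetric sum over k-subsets of s -/
noncomputable def esum (x : α → ℝ) (k : ℕ) (s : Finset α) : ℝ :=
  ∑ e ∈ Finset.powersetCard k s, ∏ i ∈ e, x i

lemma esum_zero (x : α → ℝ) (s : Finset α) : esum x 0 s = 1 := by
  simp [esum, Finset.powersetCard_zero]

lemma esum_insert (x : α → ℝ) (k : ℕ) {a : α} {s : Finset α} (ha : a ∉ s) :
    esum x (k + 1) (insert a s) = esum x (k + 1) s + x a * esum x k s := by
  unfold esum
  rw [Finset.powersetCard_succ_insert ha, Finset.sum_union, Finset.sum_image]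
  · congr 1
    rw [Finset.mul_sum]
    refine Finset.sum_congr rfl fun e he => ?_
    have hae : a ∉ e := fun h => ha ((Finset.mem_powersetCard.1 he).1 h)
    rw [Finset.prod_insert hae]
  · intro e he e' he' hee
    have h1 : a ∉ e := fun h => ha ((Finset.mem_powersetCard.1 he).1 h)
    have h2 : a ∉ e' := fun h => ha ((Finset.mem_powersetCard.1 he').1 h)
    have := congrArg (fun s => Finset.erase s a) hee
    simpa [Finset.erase_insert h1, Finset.erase_insert h2] using this
  · rw [Finset.disjoint_left]
    intro e he he'
    obtain ⟨e', he', rfl⟩ := Finset.mem_image.1 he'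
    exact (fun h => ha ((Finset.mem_powersetCard.1 he).1 h)) (Finset.mem_insert_self a e')

lemma esum_identities (x : α → ℝ) (s : Finset α) :
    esum x 1 s = ∑ i ∈ s, x i ∧
    2 * esum x 2 s = (∑ i ∈ s, x i) ^ 2 - ∑ i ∈ s, (x i) ^ 2 ∧
    6 * esum x 3 s = (∑ i ∈ s, x i) ^ 3 - 3 * (∑ i ∈ s, x i) * (∑ i ∈ s, (x i) ^ 2)
      + 2 * ∑ i ∈ s, (x i) ^ 3 := by
  induction s using Finset.induction_on with
  | empty =>
    have h : ∀ k : ℕ, 0 < k → Finset.powersetCard k (∅ : Finset α) = ∅ := by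
      intro k hk; rw [Finset.powersetCard_eq_empty]; simpa using hk
    refine ⟨?_, ?_, ?_⟩ <;> simp [esum, h 1 one_pos, h 2 two_pos, h 3 three_pos]
  | @insert a s ha ih =>
    obtain ⟨i1, i2, i3⟩ := ih
    have h1 := esum_insert x 0 ha
    have h2 := esum_insert x 1 ha
    have h3 := esum_insert x 2 ha
    rw [esum_zero] at h1
    norm_num at h1 h2 h3
    rw [Finset.sum_insert ha, Finset.sum_insert ha, Finset.sum_insert ha]
    refine ⟨by rw [h1, i1]; ring, ?_, ?_⟩
    · rw [h2, i1]; linear_combination i2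
    · rw [h3]; linear_combination i3 + 3 * x a * i2



lemma upper_bound {n t : ℕ} (ht : 8 ≤ t) (E : Finset (Finset (Fin n)))
    (hcard : ∀ e ∈ E, e.card = 1 ∨ e.card = 2 ∨ e.card = 3)
    (hV1 : (univ.filter (fun i => ({i} : Finset (Fin n)) ∈ E)).card ≤ t)
    (x : Fin n → ℝ) (hx : isLegal x) :
    lagPoly E x ≤ 3 - 4 / (t : ℝ) + 2 / (t : ℝ) ^ 2 := by
  obtain ⟨hsum, hnn⟩ := hx
  set V1 := univ.filter (fun i => ({i} : Finset (Fin n)) ∈ E) with hV1def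
  set T : ℝ := (t : ℝ) with hT
  have hT8 : (8 : ℝ) ≤ T := by rw [hT]; exact_mod_cast ht
  have hT0 : (0 : ℝ) < T := by linarith
  set c : ℝ := T⁻¹ with hc
  have hcT : c * T = 1 := inv_mul_cancel₀ (ne_of_gt hT0)
  have hc0 : 0 < c := inv_pos.2 hT0
  have hc8 : 8 * c ≤ 1 := by
    nlinarith [mul_nonneg hc0.le (show (0:ℝ) ≤ T - 8 by linarith)]
  have hx1 : ∀ i, x i ≤ 1 := by
    intro i
    calc x i ≤ ∑ j, x j := Finset.single_le_sum (fun j _ => hnn j) (mem_univ i)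
    _ = 1 := hsum
  set a := ∑ i ∈ V1, x i with hadef
  set p2 := ∑ i, (x i) ^ 2 with hp2
  set p3 := ∑ i, (x i) ^ 3 with hp3
  -- step 1 : split lagPoly
  have step1 : lagPoly E x ≤ a + 2 * esum x 2 univ + 6 * esum x 3 univ := by
    have prodnn : ∀ e : Finset (Fin n), 0 ≤ ∏ i ∈ e, x i :=
      fun e => Finset.prod_nonneg fun i _ => hnn i
    have hsub : ∀ k, (E.filter (fun e => e.card = k)) ⊆ Finset.powersetCard k univ := by
      intro k e he
      rw [Finset.mem_powersetCard_univ]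
      exact (Finset.mem_filter.1 he).2
    have h2le : ∑ e ∈ E.filter (fun e => e.card = 2), (Nat.factorial e.card : ℝ) * ∏ i ∈ e, x i
        ≤ 2 * esum x 2 univ := by
      rw [show (2:ℝ) * esum x 2 univ = ∑ e ∈ Finset.powersetCard 2 univ, 2 * ∏ i ∈ e, x i by
        rw [esum, Finset.mul_sum]]
      calc ∑ e ∈ E.filter (fun e => e.card = 2), (Nat.factorial e.card : ℝ) * ∏ i ∈ e, x i
          = ∑ e ∈ E.filter (fun e => e.card = 2), 2 * ∏ i ∈ e, x i := by
            refine Finset.sum_congr rfl fun e he => ?_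
            rw [(Finset.mem_filter.1 he).2]; norm_num [Nat.factorial]
        _ ≤ _ := Finset.sum_le_sum_of_subset_of_nonneg (hsub 2)
            (fun e _ _ => mul_nonneg (by norm_num) (prodnn e))
    have h3le : ∑ e ∈ E.filter (fun e => e.card = 3), (Nat.factorial e.card : ℝ) * ∏ i ∈ e, x i
        ≤ 6 * esum x 3 univ := by
      rw [show (6:ℝ) * esum x 3 univ = ∑ e ∈ Finset.powersetCard 3 univ, 6 * ∏ i ∈ e, x i by
        rw [esum, Finset.mul_sum]]
      calc ∑ e ∈ E.filter (fun e => e.card = 3), (Nat.factorial e.card : ℝ) * ∏ i ∈ e, x i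
          = ∑ e ∈ E.filter (fun e => e.card = 3), 6 * ∏ i ∈ e, x i := by
            refine Finset.sum_congr rfl fun e he => ?_
            rw [(Finset.mem_filter.1 he).2]; norm_num [Nat.factorial]
        _ ≤ _ := Finset.sum_le_sum_of_subset_of_nonneg (hsub 3)
            (fun e _ _ => mul_nonneg (by norm_num) (prodnn e))
    have h1eq : ∑ e ∈ E.filter (fun e => e.card = 1), (Nat.factorial e.card : ℝ) * ∏ i ∈ e, x i
        = a := by
      have himg : E.filter (fun e => e.card = 1) = V1.image (fun i => ({i} : Finset (Fin n))) := by
        ext e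
        simp only [Finset.mem_filter, Finset.mem_image, hV1def, Finset.mem_univ, true_and]
        constructor
        · rintro ⟨heE, hc1⟩
          obtain ⟨i, rfl⟩ := Finset.card_eq_one.1 hc1
          exact ⟨i, heE, rfl⟩
        · rintro ⟨i, hi, rfl⟩
          exact ⟨hi, Finset.card_singleton i⟩
      rw [himg, Finset.sum_image (fun i _ j _ h => Finset.singleton_injective h)]
      simp [hadef]
    -- decompose E
    have hE : E = (E.filter (fun e => e.card = 1)) ∪
        ((E.filter (fun e => e.card = 2)) ∪ (E.filter (fun e => e.card = 3))) := by
      ext e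
      simp only [Finset.mem_union, Finset.mem_filter]
      constructor
      · intro he
        rcases hcard e he with h | h | h
        exacts [Or.inl ⟨he, h⟩, Or.inr (Or.inl ⟨he, h⟩), Or.inr (Or.inr ⟨he, h⟩)]
      · rintro (⟨h, -⟩ | ⟨h, -⟩ | ⟨h, -⟩) <;> exact h
    have d23 : Disjoint (E.filter (fun e => e.card = 2)) (E.filter (fun e => e.card = 3)) := by
      rw [Finset.disjoint_left]
      intro e h2 h3
      rw [Finset.mem_filter] at h2 h3
      omega
    have d123 : Disjoint (E.filter (fun e => e.card = 1))
        ((E.filter (fun e => e.card = 2)) ∪ (E.filter (fun e => e.card = 3))) := by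
      rw [Finset.disjoint_left]
      intro e h1 h23
      rw [Finset.mem_filter] at h1
      rcases Finset.mem_union.1 h23 with h | h <;> rw [Finset.mem_filter] at h <;> omega
    have hdecomp : lagPoly E x = (∑ e ∈ E.filter (fun e => e.card = 1), (Nat.factorial e.card : ℝ) * ∏ i ∈ e, x i)
        + ((∑ e ∈ E.filter (fun e => e.card = 2), (Nat.factorial e.card : ℝ) * ∏ i ∈ e, x i)
        + (∑ e ∈ E.filter (fun e => e.card = 3), (Nat.factorial e.card : ℝ) * ∏ i ∈ e, x i)) := by
      rw [lagPoly]
      conv_lhs => rw [hE]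
      rw [Finset.sum_union d123, Finset.sum_union d23]
    rw [hdecomp, h1eq]
    linarith
  -- step 2 : identities
  obtain ⟨-, i2, i3⟩ := esum_identities x (univ : Finset (Fin n))
  rw [hsum] at i2 i3
  -- step 3 : tangent line bound on V1
  set m : ℝ := (V1.card : ℝ) with hm
  have hmt : m ≤ T := by rw [hm, hT]; exact_mod_cast hV1
  have hm0 : 0 ≤ m := by positivity
  have tangent : ∀ i ∈ V1, 4 * c ^ 2 - 2 * c ^ 3 + (8 * c - 6 * c ^ 2) * (x i - c)
      ≤ 4 * (x i) ^ 2 - 2 * (x i) ^ 3 := by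
    intro i _
    have h1 : x i ≤ 1 := hx1 i
    have h2 : 0 ≤ x i := hnn i
    nlinarith [mul_nonneg (sq_nonneg (x i - c)) (show (0:ℝ) ≤ 4 - 4 * c - 2 * x i by linarith)]
  have hsumV1 : m * (4 * c ^ 2 - 2 * c ^ 3) + (8 * c - 6 * c ^ 2) * (a - m * c)
      ≤ ∑ i ∈ V1, (4 * (x i) ^ 2 - 2 * (x i) ^ 3) := by
    calc m * (4 * c ^ 2 - 2 * c ^ 3) + (8 * c - 6 * c ^ 2) * (a - m * c)
        = ∑ i ∈ V1, (4 * c ^ 2 - 2 * c ^ 3 + (8 * c - 6 * c ^ 2) * (x i - c)) := by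
          rw [Finset.sum_add_distrib, Finset.sum_const, ← Finset.mul_sum,
            Finset.sum_sub_distrib, Finset.sum_const, nsmul_eq_mul, nsmul_eq_mul,
            ← hadef, ← hm]
      _ ≤ _ := Finset.sum_le_sum tangent
  have hsub2 : ∑ i ∈ V1, (4 * (x i) ^ 2 - 2 * (x i) ^ 3) ≤ 4 * p2 - 2 * p3 := by
    have heq : 4 * p2 - 2 * p3 = ∑ i, (4 * (x i) ^ 2 - 2 * (x i) ^ 3) := by
      rw [Finset.sum_sub_distrib, ← Finset.mul_sum, ← Finset.mul_sum, hp2, hp3]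
    rw [heq]
    apply Finset.sum_le_sum_of_subset_of_nonneg (Finset.subset_univ V1)
    intro i _ _
    nlinarith [hnn i, hx1 i]
  have ha1 : a ≤ 1 := by
    rw [hadef, ← hsum]
    exact Finset.sum_le_sum_of_subset_of_nonneg (Finset.subset_univ V1) (fun i _ _ => hnn i)
  have ha0 : 0 ≤ a := Finset.sum_nonneg fun i _ => hnn i
  have hTc2 : T * c ^ 2 = c := by
    rw [hc]; rw [sq, ← mul_assoc, mul_inv_cancel₀ (ne_of_gt hT0), one_mul]
  have hc1 : c ≤ 1 := by linarith
  have hgoal : 3 - 4 / T + 2 / T ^ 2 = 3 - 4 * c + 2 * c ^ 2 := by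
    rw [hc]; ring
  rw [hgoal]
  have key : m * (4 * c ^ 2 - 2 * c ^ 3) + (8 * c - 6 * c ^ 2) * (a - m * c) ≤ 4 * p2 - 2 * p3 :=
    le_trans hsumV1 hsub2
  have e2 : m * c ^ 2 ≤ c := by
    calc m * c ^ 2 ≤ T * c ^ 2 := mul_le_mul_of_nonneg_right hmt (sq_nonneg c)
    _ = c := hTc2
  have e2c : 4 * (m * c ^ 2) * (1 - c) ≤ 4 * c * (1 - c) := by
    have := mul_le_mul_of_nonneg_right e2 (show (0:ℝ) ≤ 1 - c by linarith)
    linarith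
  have key2 : (8 * c - 6 * c ^ 2) * a - 4 * c * (1 - c) ≤ 4 * p2 - 2 * p3 := by
    have e1 : m * (4 * c ^ 2 - 2 * c ^ 3) + (8 * c - 6 * c ^ 2) * (a - m * c)
        = (8 * c - 6 * c ^ 2) * a - 4 * (m * c ^ 2) * (1 - c) := by ring
    rw [e1] at key
    linarith
  have h6 : (0:ℝ) ≤ (1 - a) * (1 - 8 * c + 6 * c ^ 2) := by
    apply mul_nonneg (by linarith)
    nlinarith [sq_nonneg c]
  linarith [step1, i2, i3, key2, h6]

lemma cast_choose_three (m : ℕ) :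
    ((m.choose 3 : ℕ) : ℝ) = (m : ℝ) * ((m : ℝ) - 1) * ((m : ℝ) - 2) / 6 := by
  induction m with
  | zero => norm_num
  | succ k ih =>
    have h : (k + 1).choose 3 = k.choose 2 + k.choose 3 := Nat.choose_succ_succ k 2
    have h2 : ((k.choose 2 : ℕ) : ℝ) = (k : ℝ) * ((k : ℝ) - 1) / 2 := Nat.cast_choose_two (K := ℝ) k
    rw [h]
    push_cast
    rw [h2, ih]
    push_cast
    ring


lemma lower_bound {n t : ℕ} (ht : 8 ≤ t) (E : Finset (Finset (Fin n)))
    (hcard : ∀ e ∈ E, e.card = 1 ∨ e.card = 2 ∨ e.card = 3)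
    (S : Finset (Fin n)) (hS : S.card = t)
    (hcomp : isCompleteSub E ({1, 2, 3} : Finset ℕ) S) :
    ∃ x : Fin n → ℝ, isLegal x ∧ lagPoly E x = 3 - 4 / (t : ℝ) + 2 / (t : ℝ) ^ 2 := by
  have ht0 : 0 < t := by omega
  have hT0 : (0 : ℝ) < (t : ℝ) := by exact_mod_cast ht0
  refine ⟨fun i => if i ∈ S then ((t : ℝ))⁻¹ else 0, ⟨?_, ?_⟩, ?_⟩
  · rw [Finset.sum_ite_mem, Finset.univ_inter, Finset.sum_const, hS, nsmul_eq_mul,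
      mul_inv_cancel₀ (ne_of_gt hT0)]
  · intro i
    by_cases h : i ∈ S <;> simp [h, inv_nonneg.2 hT0.le]
  · set x : Fin n → ℝ := fun i => if i ∈ S then ((t : ℝ))⁻¹ else 0 with hxdef
    have hprod : ∀ e : Finset (Fin n), e ⊆ S → ∏ i ∈ e, x i = ((t:ℝ))⁻¹ ^ e.card := by
      intro e he
      rw [← Finset.prod_const]
      exact Finset.prod_congr rfl fun i hi => by simp [hxdef, he hi]
    -- edges not inside S contribute 0
    have hzero : ∀ e ∈ E, e ∉ E.filter (fun e => e ⊆ S) →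
        (Nat.factorial e.card : ℝ) * ∏ i ∈ e, x i = 0 := by
      intro e he hne
      have hns : ¬ e ⊆ S := fun h => hne (Finset.mem_filter.2 ⟨he, h⟩)
      obtain ⟨i, hi, his⟩ := Finset.not_subset.1 hns
      rw [Finset.prod_eq_zero hi (by simp [hxdef, his]), mul_zero]
    have hEfil : E.filter (fun e => e ⊆ S)
        = (Finset.powersetCard 1 S) ∪ ((Finset.powersetCard 2 S) ∪ (Finset.powersetCard 3 S)) := by
      ext e
      simp only [Finset.mem_filter, Finset.mem_union, Finset.mem_powersetCard]
      constructor
      · rintro ⟨he, hsub⟩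
        rcases hcard e he with h | h | h
        exacts [Or.inl ⟨hsub, h⟩, Or.inr (Or.inl ⟨hsub, h⟩), Or.inr (Or.inr ⟨hsub, h⟩)]
      · rintro (⟨hsub, hc⟩ | ⟨hsub, hc⟩ | ⟨hsub, hc⟩) <;>
          exact ⟨hcomp e hsub (by simp [hc]), hsub⟩
    have d23 : Disjoint (Finset.powersetCard 2 S) (Finset.powersetCard 3 S) := by
      rw [Finset.disjoint_left]
      intro e h2 h3
      rw [Finset.mem_powersetCard] at h2 h3
      omega
    have d123 : Disjoint (Finset.powersetCard 1 S)
        ((Finset.powersetCard 2 S) ∪ (Finset.powersetCard 3 S)) := by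
      rw [Finset.disjoint_left]
      intro e h1 h23
      rw [Finset.mem_powersetCard] at h1
      rcases Finset.mem_union.1 h23 with h | h <;> rw [Finset.mem_powersetCard] at h <;> omega
    have hsumk : ∀ k : ℕ, ∑ e ∈ Finset.powersetCard k S, (Nat.factorial e.card : ℝ) * ∏ i ∈ e, x i
        = (t.choose k : ℝ) * (Nat.factorial k : ℝ) * ((t:ℝ))⁻¹ ^ k := by
      intro k
      have : ∀ e ∈ Finset.powersetCard k S,
          (Nat.factorial e.card : ℝ) * ∏ i ∈ e, x i = (Nat.factorial k : ℝ) * ((t:ℝ))⁻¹ ^ k := by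
        intro e he
        rw [Finset.mem_powersetCard] at he
        rw [hprod e he.1, he.2]
      rw [Finset.sum_congr rfl this, Finset.sum_const, Finset.card_powersetCard, hS,
        nsmul_eq_mul, mul_assoc]
    have hlag : lagPoly E x = (t.choose 1 : ℝ) * 1 * ((t:ℝ))⁻¹ ^ 1
        + ((t.choose 2 : ℝ) * 2 * ((t:ℝ))⁻¹ ^ 2 + (t.choose 3 : ℝ) * 6 * ((t:ℝ))⁻¹ ^ 3) := by
      rw [lagPoly, ← Finset.sum_subset (Finset.filter_subset (fun e => e ⊆ S) E) hzero, hEfil,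
        Finset.sum_union d123, Finset.sum_union d23, hsumk 1, hsumk 2, hsumk 3]
      norm_num [Nat.factorial]
    rw [hlag, Nat.choose_one_right, Nat.cast_choose_two, cast_choose_three]
    field_simp
    ring


lemma lagrangian_eq {n : ℕ} (E : Finset (Finset (Fin n))) (v : ℝ)
    (hub : ∀ x : Fin n → ℝ, isLegal x → lagPoly E x ≤ v)
    (hmem : ∃ x : Fin n → ℝ, isLegal x ∧ lagPoly E x = v) :
    lagrangian E = v := by
  have hb : v ∈ upperBounds {w : ℝ | ∃ x : Fin n → ℝ, isLegal x ∧ lagPoly E x = w} := by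
    rintro w ⟨x, hx, rfl⟩
    exact hub x hx
  obtain ⟨x0, hx0, hval⟩ := hmem
  have hmem' : v ∈ {w : ℝ | ∃ x : Fin n → ℝ, isLegal x ∧ lagPoly E x = w} := ⟨x0, hx0, hval⟩
  exact le_antisymm (csSup_le ⟨v, hmem'⟩ hb) (le_csSup ⟨v, hb⟩ hmem')

/-- Motzkin–Straus type theorem for {1,2,3}-graphs (Theorem 18 of the paper). -/
theorem lagrangian_one_two_three_graph (t n : ℕ) (ht : 8 ≤ t)
    (E : Finset (Finset (Fin n)))
    (hR : E.image Finset.card = ({1, 2, 3} : Finset ℕ))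
    (hmax123 : maxCompleteOrder E ({1, 2, 3} : Finset ℕ) t)
    (hmax1 : maxCompleteOrder E ({1} : Finset ℕ) t) :
    lagrangian E = lagrangian (completeEdges t ({1, 2, 3} : Finset ℕ)) ∧
    lagrangian (completeEdges t ({1, 2, 3} : Finset ℕ)) =
      1 + ((t : ℝ) - 1) / (t : ℝ) + ((t : ℝ) - 1) * ((t : ℝ) - 2) / (t : ℝ) ^ 2 := by
  have hT0 : (0 : ℝ) < (t : ℝ) := by
    have : 0 < t := by omega
    exact_mod_cast this
  have hval : (3 : ℝ) - 4 / (t : ℝ) + 2 / (t : ℝ) ^ 2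
      = 1 + ((t : ℝ) - 1) / (t : ℝ) + ((t : ℝ) - 1) * ((t : ℝ) - 2) / (t : ℝ) ^ 2 := by
    field_simp
    ring
  have hcardE : ∀ e ∈ E, e.card = 1 ∨ e.card = 2 ∨ e.card = 3 := by
    intro e he
    have : e.card ∈ E.image Finset.card := Finset.mem_image_of_mem _ he
    rw [hR] at this
    simpa using this
  -- lagrangian E = 3 - 4/t + 2/t^2
  have hE : lagrangian E = 3 - 4 / (t : ℝ) + 2 / (t : ℝ) ^ 2 := by
    apply lagrangian_eq
    · intro x hx
      apply upper_bound ht E hcardE _ x hx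
      apply hmax1.2
      intro e he hcard1
      simp only [Finset.mem_singleton] at hcard1
      obtain ⟨i, rfl⟩ := Finset.card_eq_one.1 hcard1
      have : i ∈ Finset.univ.filter (fun i => ({i} : Finset (Fin n)) ∈ E) :=
        he (Finset.mem_singleton_self i)
      exact (Finset.mem_filter.1 this).2
    · obtain ⟨S, hS, hcomp⟩ := hmax123.1
      exact lower_bound ht E hcardE S hS hcomp
  -- lagrangian (completeEdges t {1,2,3}) = same value
  have hK : lagrangian (completeEdges t ({1, 2, 3} : Finset ℕ))
      = 3 - 4 / (t : ℝ) + 2 / (t : ℝ) ^ 2 := by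
    apply lagrangian_eq
    · intro x hx
      apply upper_bound ht _ ?_ ?_ x hx
      · intro e he
        have := (Finset.mem_filter.1 he).2
        simpa using this
      · calc (Finset.univ.filter
            (fun i => ({i} : Finset (Fin t)) ∈ completeEdges t ({1, 2, 3} : Finset ℕ))).card
            ≤ (Finset.univ : Finset (Fin t)).card := Finset.card_filter_le _ _
        _ = t := by simp
    · apply lower_bound ht _ ?_ Finset.univ (by simp) ?_
      · intro e he
        have := (Finset.mem_filter.1 he).2
        simpa using this
      · intro e _ hce
        exact Finset.mem_filter.2 ⟨Finset.mem_univ _, hce⟩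
  rw [hE, hK, hval]
  exact ⟨rfl, rfl⟩
end

section
/- Let H = ([n], E) be a hypergraph on vertex set [n]={1,…,n}, let i < j be vertices in [n], and let x = (x_1,…,x_n) be an optimal legal weighting for H with x_1 ≥ x_2 ≥ … ≥ x_n ≥ 0. Let H_{ij} = ([n], 𝓛_{ij}(E)) be the hypergraph obtained by the (i,j)-compression of E. Then λ'(H, x) ≤ λ'(H_{ij}, x). -/
open Finset

/-- The (i,j)-compression of a single edge: replace j by i if i∉e and j∈e. -/
def Lij {n : ℕ} (i j : Fin n) (e : Finset (Fin n)) : Finset (Fin n) :=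
  if i ∉ e ∧ j ∈ e then insert i (e.erase j) else e

/-- The compressed edge set 𝓛_{ij}(E) = {L_{ij}(e) : e∈E} ∪ {e ∈ E : L_{ij}(e) ∈ E}. -/
def compress {n : ℕ} (i j : Fin n) (E : Finset (Finset (Fin n))) : Finset (Finset (Fin n)) :=
  E.image (Lij i j) ∪ E.filter (fun e => Lij i j e ∈ E)

lemma Lij_idem {n : ℕ} (i j : Fin n) (hij : i ≠ j) (e : Finset (Fin n)) :
    Lij i j (Lij i j e) = Lij i j e := by
  unfold Lij
  by_cases h : i ∉ e ∧ j ∈ e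
  · simp [h, hij]
  · simp [h]

/-- Lemma 10 of the paper: compression does not decrease λ'(·, x) at an ordered optimal
legal weighting. -/
theorem lagPoly_le_compress (n : ℕ) (E : Finset (Finset (Fin n))) (i j : Fin n) (hij : i < j)
    (x : Fin n → ℝ) (hx : isLegal x)
    (hmono : ∀ a b : Fin n, a ≤ b → x b ≤ x a)
    (hopt : lagPoly E x = lagrangian E) :
    lagPoly E x ≤ lagPoly (compress i j E) x := by
  have hne : i ≠ j := hij.ne
  set C : Finset (Finset (Fin n)) :=
    E.filter (fun e => Lij i j e ≠ e ∧ Lij i j e ∉ E) with hC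
  have hCsub : C ⊆ E := filter_subset _ _
  have hmove : ∀ e ∈ C, i ∉ e ∧ j ∈ e := by
    intro e he
    rw [hC, mem_filter] at he
    by_contra h
    exact he.2.1 (by unfold Lij; simp [h])
  -- compress = (E \ C) ∪ C.image (Lij i j)
  have hdecomp : compress i j E = (E \ C) ∪ C.image (Lij i j) := by
    ext g
    simp only [compress, mem_union, mem_image, mem_filter, mem_sdiff, hC]
    constructor
    · rintro (⟨e, heE, rfl⟩ | ⟨hgE, hLg⟩)
      · by_cases h1 : Lij i j e = e
        · rw [h1]; exact Or.inl ⟨heE, fun hc => hc.2.1 h1⟩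
        · by_cases h2 : Lij i j e ∈ E
          · exact Or.inl ⟨h2, fun hc => hc.2.1 (Lij_idem i j hne e)⟩
          · exact Or.inr ⟨e, ⟨heE, h1, h2⟩, rfl⟩
      · exact Or.inl ⟨hgE, fun hc => hc.2.2 hLg⟩
    · rintro (⟨hgE, hgC⟩ | ⟨e, heC, rfl⟩)
      · by_cases h1 : Lij i j g = g
        · exact Or.inl ⟨g, hgE, h1⟩
        · refine Or.inr ⟨hgE, ?_⟩
          by_contra h2
          exact hgC ⟨hgE, h1, h2⟩
      · exact Or.inl ⟨e, heC.1, rfl⟩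
  have hdisj : Disjoint (E \ C) (C.image (Lij i j)) := by
    rw [disjoint_right]
    intro g hg hg'
    obtain ⟨e, heC, rfl⟩ := mem_image.mp hg
    rw [hC, mem_filter] at heC
    exact heC.2.2 (mem_sdiff.mp hg').1
  have hinj : ∀ a ∈ C, ∀ b ∈ C, Lij i j a = Lij i j b → a = b := by
    intro a ha b hb hab
    obtain ⟨hia, hja⟩ := hmove a ha
    obtain ⟨hib, hjb⟩ := hmove b hb
    have key : ∀ c : Finset (Fin n), i ∉ c → j ∈ c →
        insert j ((Lij i j c).erase i) = c := by
      intro c hic hjc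
      unfold Lij
      rw [if_pos ⟨hic, hjc⟩]
      rw [erase_insert (by simp [hic])]
      exact insert_erase hjc
    calc a = insert j ((Lij i j a).erase i) := (key a hia hja).symm
      _ = insert j ((Lij i j b).erase i) := by rw [hab]
      _ = b := key b hib hjb
  have hsum_compress : lagPoly (compress i j E) x =
      (∑ e ∈ E \ C, (Nat.factorial e.card : ℝ) * ∏ k ∈ e, x k)
      + ∑ e ∈ C, (Nat.factorial (Lij i j e).card : ℝ) * ∏ k ∈ Lij i j e, x k := by
    rw [lagPoly, hdecomp, sum_union hdisj, sum_image hinj]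
  have hsum_E : lagPoly E x =
      (∑ e ∈ E \ C, (Nat.factorial e.card : ℝ) * ∏ k ∈ e, x k)
      + ∑ e ∈ C, (Nat.factorial e.card : ℝ) * ∏ k ∈ e, x k := by
    rw [lagPoly, ← sum_sdiff hCsub]
  rw [hsum_E, hsum_compress]
  refine add_le_add (le_refl _) (sum_le_sum fun e he => ?_)
  obtain ⟨hie, hje⟩ := hmove e he
  have hcard : (Lij i j e).card = e.card := by
    unfold Lij
    rw [if_pos ⟨hie, hje⟩, card_insert_of_notMem (by simp [hie]),
      card_erase_of_mem hje]
    have : 0 < e.card := card_pos.mpr ⟨j, hje⟩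
    omega
  have hprod : (∏ k ∈ e, x k) ≤ ∏ k ∈ Lij i j e, x k := by
    unfold Lij
    rw [if_pos ⟨hie, hje⟩, prod_insert (by simp [hie]),
      ← mul_prod_erase e x hje]
    have hP : 0 ≤ ∏ k ∈ e.erase j, x k := prod_nonneg fun k _ => hx.2 k
    exact mul_le_mul_of_nonneg_right (hmono i j hij.le) hP
  rw [hcard]
  exact mul_le_mul_of_nonneg_left hprod (by positivity)
end

section
/- For all integers t ≥ 1 and r ≥ 2, the Lagrangian of the complete {1,r}-graph on t vertices satisfies λ'(K_t^{{1,r}}) = 1 + (∏_{i=1}^{r-1} (t-i)) / t^{r-1}, and this value is attained by the uniform weighting assigning weight 1/t to each of the t vertices. -/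
open Finset

namespace LagAux

noncomputable def Esum (t r : ℕ) (x : Fin t → ℝ) : ℝ :=
  ∑ e ∈ Finset.powersetCard r (Finset.univ : Finset (Fin t)), ∏ i ∈ e, x i

lemma sum_pc_insert {t : ℕ} (m : ℕ) (a : Fin t) (s : Finset (Fin t)) (ha : a ∉ s)
    (x : Fin t → ℝ) :
    ∑ e ∈ Finset.powersetCard (m + 1) (insert a s), ∏ k ∈ e, x k
      = (∑ e ∈ Finset.powersetCard (m + 1) s, ∏ k ∈ e, x k)
        + x a * ∑ e ∈ Finset.powersetCard m s, ∏ k ∈ e, x k := by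
  have hdisj : Disjoint (Finset.powersetCard (m + 1) s)
      ((Finset.powersetCard m s).image (insert a)) := by
    rw [Finset.disjoint_left]
    intro e he hf
    obtain ⟨g, hg, rfl⟩ := Finset.mem_image.mp hf
    exact ha ((Finset.mem_powersetCard.mp he).1 (Finset.mem_insert_self a g))
  have hinj : ∀ e ∈ Finset.powersetCard m s, ∀ f ∈ Finset.powersetCard m s,
      insert a e = insert a f → e = f := by
    intro e he f hf hef
    have hae : a ∉ e := fun h => ha ((Finset.mem_powersetCard.mp he).1 h)
    have haf : a ∉ f := fun h => ha ((Finset.mem_powersetCard.mp hf).1 h)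
    rw [← Finset.erase_insert hae, ← Finset.erase_insert haf, hef]
  rw [Finset.powersetCard_succ_insert ha, Finset.sum_union hdisj, Finset.sum_image hinj,
    Finset.mul_sum]
  congr 1
  refine Finset.sum_congr rfl fun e he => ?_
  exact Finset.prod_insert fun h => ha ((Finset.mem_powersetCard.mp he).1 h)

lemma esum_split {t : ℕ} (k : ℕ) (x : Fin t → ℝ) (i j : Fin t) (hij : i ≠ j) :
    Esum t (k + 1 + 1) x
      = (∑ e ∈ Finset.powersetCard (k + 1 + 1) ((Finset.univ : Finset (Fin t)) \ {i, j}),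
          ∏ l ∈ e, x l)
        + (x i + x j) * (∑ e ∈ Finset.powersetCard (k + 1)
            ((Finset.univ : Finset (Fin t)) \ {i, j}), ∏ l ∈ e, x l)
        + x i * x j * (∑ e ∈ Finset.powersetCard k
            ((Finset.univ : Finset (Fin t)) \ {i, j}), ∏ l ∈ e, x l) := by
  set s : Finset (Fin t) := (Finset.univ : Finset (Fin t)) \ {i, j} with hs
  have hj : j ∉ s := by simp [hs]
  have hi : i ∉ insert j s := by simp [hs, hij]
  have huniv : (Finset.univ : Finset (Fin t)) = insert i (insert j s) := by
    ext l
    simp only [Finset.mem_univ, Finset.mem_insert, hs, Finset.mem_sdiff, true_and,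
      true_iff, Finset.mem_singleton]
    tauto
  unfold Esum
  rw [huniv, sum_pc_insert _ _ _ hi, sum_pc_insert _ _ _ hj, sum_pc_insert _ _ _ hj]
  ring

lemma lagPoly_complete {t r : ℕ} (hr : 2 ≤ r) (x : Fin t → ℝ) :
    lagPoly (completeEdges t ({1, r} : Finset ℕ)) x
      = (∑ i, x i) + (Nat.factorial r : ℝ) * Esum t r x := by
  unfold lagPoly completeEdges Esum
  have hfil : (Finset.univ.filter fun e : Finset (Fin t) => e.card ∈ ({1, r} : Finset ℕ))
      = Finset.powersetCard 1 (Finset.univ : Finset (Fin t))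
        ∪ Finset.powersetCard r (Finset.univ : Finset (Fin t)) := by
    ext e
    simp [Finset.mem_powersetCard]
  have hdisj : Disjoint (Finset.powersetCard 1 (Finset.univ : Finset (Fin t)))
      (Finset.powersetCard r (Finset.univ : Finset (Fin t))) := by
    rw [Finset.disjoint_left]
    intro e he hf
    have h1 := (Finset.mem_powersetCard.mp he).2
    have h2 := (Finset.mem_powersetCard.mp hf).2
    omega
  rw [hfil, Finset.sum_union hdisj]
  congr 1
  · rw [Finset.powersetCard_one, Finset.sum_map]
    simp
  · rw [Finset.mul_sum]
    refine Finset.sum_congr rfl fun e he => ?_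
    rw [(Finset.mem_powersetCard.mp he).2]

lemma esum_uniform (t r : ℕ) :
    Esum t r (fun _ => 1 / (t : ℝ)) = (t.choose r : ℝ) * (1 / (t : ℝ)) ^ r := by
  unfold Esum
  have h : ∀ e ∈ Finset.powersetCard r (Finset.univ : Finset (Fin t)),
      (∏ _i ∈ e, (1 / (t : ℝ))) = (1 / (t : ℝ)) ^ r := fun e he => by
    rw [Finset.prod_const, (Finset.mem_powersetCard.mp he).2]
  rw [Finset.sum_congr rfl h, Finset.sum_const, Finset.card_powersetCard, Finset.card_univ,
    Fintype.card_fin, nsmul_eq_mul]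

lemma cast_descFactorial (t r : ℕ) :
    ((t.descFactorial r : ℕ) : ℝ) = ∏ i ∈ Finset.range r, ((t : ℝ) - i) := by
  induction r with
  | zero => simp
  | succ k ih =>
    rw [Nat.descFactorial_succ, Finset.prod_range_succ, ← ih, Nat.cast_mul]
    rcases lt_or_ge k t with h | h
    · rw [Nat.cast_sub h.le]
      · ring
    · rcases h.eq_or_lt with rfl | h'
      · simp [Nat.sub_self]
      · rw [Nat.descFactorial_eq_zero_iff_lt.mpr h']
        simp [Nat.sub_eq_zero_of_le h]

lemma uniform_value (t r : ℕ) (ht : 1 ≤ t) (hr : 2 ≤ r) :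
    1 + (Nat.factorial r : ℝ) * Esum t r (fun _ => 1 / (t : ℝ))
      = 1 + (∏ i ∈ Finset.Icc 1 (r - 1), ((t : ℝ) - (i : ℝ))) / (t : ℝ) ^ (r - 1) := by
  have ht0 : (0 : ℝ) < t := by exact_mod_cast ht
  have hr1 : r - 1 + 1 = r := by omega
  rw [esum_uniform]
  congr 1
  have hdf : (Nat.factorial r : ℝ) * (t.choose r : ℝ) = (t.descFactorial r : ℝ) := by
    rw [← Nat.cast_mul, Nat.descFactorial_eq_factorial_mul_choose]
  have hsplit : ∏ i ∈ Finset.range r, ((t : ℝ) - i)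
      = (t : ℝ) * ∏ i ∈ Finset.Icc 1 (r - 1), ((t : ℝ) - i) := by
    have hre : Finset.range r = insert 0 (Finset.Icc 1 (r - 1)) := by
      ext i
      simp only [Finset.mem_range, Finset.mem_insert, Finset.mem_Icc]
      omega
    rw [hre, Finset.prod_insert (by simp)]
    simp
  have hpow : (t : ℝ) * (t : ℝ) ^ (r - 1) = (t : ℝ) ^ r := by
    rw [← pow_succ', hr1]
  rw [← mul_assoc, hdf, cast_descFactorial, hsplit, one_div, inv_pow, ← hpow]
  rw [mul_inv]
  field_simp

lemma esum_le (t r : ℕ) (ht : 1 ≤ t) (hr : 2 ≤ r) (x : Fin t → ℝ) (hx : isLegal x) :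
    Esum t r x ≤ Esum t r (fun _ => 1 / (t : ℝ)) := by
  obtain ⟨k, rfl⟩ : ∃ k, r = k + 1 + 1 := ⟨r - 2, by omega⟩
  have hcont : Continuous (Esum t (k + 1 + 1)) := by
    unfold Esum
    exact continuous_finset_sum _ fun e _ =>
      continuous_finset_prod _ fun i _ => continuous_apply i
  have hKc : IsCompact (stdSimplex ℝ (Fin t)) := isCompact_stdSimplex _ _
  have hxK : x ∈ stdSimplex ℝ (Fin t) := ⟨hx.2, hx.1⟩
  obtain ⟨z, hzK, hz⟩ := hKc.exists_isMaxOn ⟨x, hxK⟩ hcont.continuousOn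
  have hmax : ∀ y ∈ stdSimplex ℝ (Fin t), Esum t (k + 1 + 1) y ≤ Esum t (k + 1 + 1) z := hz
  refine le_trans (hmax x hxK) ?_
  by_cases hconst : ∀ a b : Fin t, z a = z b
  · -- z is uniform
    have hz0 : ∀ a : Fin t, z a = 1 / (t : ℝ) := by
      intro a
      have ht0 : (0 : ℝ) < t := by exact_mod_cast ht
      have h1 : (t : ℝ) * z a = 1 := by
        have hs := hzK.2
        rw [Finset.sum_congr rfl (fun b _ => (hconst b a : z b = z a))] at hs
        simpa [Finset.card_univ] using hs
      rw [eq_div_iff ht0.ne']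
      linarith
    exact le_of_eq (congrArg _ (funext hz0))
  · push_neg at hconst
    obtain ⟨a, b, hab⟩ := hconst
    have hne : a ≠ b := fun h => hab (h ▸ rfl)
    by_cases hpos : 0 < Esum t (k + 1 + 1) z
    · exfalso
      -- there is an edge with positive product
      obtain ⟨e, he, hpe⟩ : ∃ e ∈ Finset.powersetCard (k + 1 + 1)
          (Finset.univ : Finset (Fin t)), 0 < ∏ l ∈ e, z l := by
        by_contra h
        push_neg at h
        have : Esum t (k + 1 + 1) z ≤ 0 := Finset.sum_nonpos fun e he' => not_lt.mp (fun hc => (h e he').not_gt hc)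
        linarith
      have hposl : ∀ l ∈ e, 0 < z l := by
        intro l hl
        have hne0 : z l ≠ 0 := by
          intro h0
          rw [Finset.prod_eq_zero hl h0] at hpe
          exact lt_irrefl 0 hpe
        exact lt_of_le_of_ne (hzK.1 l) (Ne.symm hne0)
      -- a subset of e avoiding a,b of size k
      have hcard : k ≤ (e \ ({a, b} : Finset (Fin t))).card := by
        have h1 : e.card = k + 1 + 1 := (Finset.mem_powersetCard.mp he).2
        have h2 : e.card - (({a, b} : Finset (Fin t))).card ≤ (e \ ({a, b} : Finset (Fin t))).card :=
          Finset.le_card_sdiff _ _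
        have h3 : (({a, b} : Finset (Fin t))).card ≤ 2 := Finset.card_insert_le _ _ |>.trans (by simp)
        omega
      obtain ⟨g, hge, hgcard⟩ := Finset.exists_subset_card_eq hcard
      have hgs : g ∈ Finset.powersetCard k ((Finset.univ : Finset (Fin t)) \ {a, b}) := by
        refine Finset.mem_powersetCard.mpr ⟨fun l hl => ?_, hgcard⟩
        have := hge hl
        rw [Finset.mem_sdiff] at this ⊢
        exact ⟨Finset.mem_univ l, this.2⟩
      have hCpos : 0 < ∑ e' ∈ Finset.powersetCard k ((Finset.univ : Finset (Fin t)) \ {a, b}),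
          ∏ l ∈ e', z l := by
        have hterm : 0 < ∏ l ∈ g, z l :=
          Finset.prod_pos fun l hl => hposl l (Finset.mem_sdiff.mp (hge hl)).1
        exact lt_of_lt_of_le hterm (Finset.single_le_sum
          (f := fun e' => ∏ l ∈ e', z l)
          (fun e' _ => Finset.prod_nonneg fun l _ => hzK.1 l) hgs)
      -- average a and b
      set m : ℝ := (z a + z b) / 2 with hm
      set y : Fin t → ℝ := Function.update (Function.update z a m) b m with hy
      have hya : y a = m := by
        rw [hy, Function.update_of_ne hne, Function.update_self]
      have hyb : y b = m := by
        rw [hy, Function.update_self]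
      have hyoff : ∀ l : Fin t, l ≠ a → l ≠ b → y l = z l := by
        intro l hla hlb
        rw [hy, Function.update_of_ne hlb, Function.update_of_ne hla]
      have hm0 : 0 ≤ m := by
        have := hzK.1 a; have := hzK.1 b
        rw [hm]; linarith
      have hyK : y ∈ stdSimplex ℝ (Fin t) := by
        constructor
        · intro l
          by_cases hla : l = a
          · rw [hla, hya]; exact hm0
          · by_cases hlb : l = b
            · rw [hlb, hyb]; exact hm0
            · rw [hyoff l hla hlb]; exact hzK.1 l
        · -- sums agree
          have hsum : ∀ w : Fin t → ℝ, ∑ i ∈ (Finset.univ : Finset (Fin t)) \ {a, b}, w i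
              = (∑ i, w i) - (w a + w b) := by
            intro w
            rw [Finset.sum_sdiff_eq_sub (Finset.subset_univ _), Finset.sum_pair hne]
          have h1 := hsum y
          have h2 := hsum z
          have h3 : ∑ i ∈ (Finset.univ : Finset (Fin t)) \ {a, b}, y i
              = ∑ i ∈ (Finset.univ : Finset (Fin t)) \ {a, b}, z i := by
            refine Finset.sum_congr rfl fun l hl => ?_
            rw [Finset.mem_sdiff, Finset.mem_insert, Finset.mem_singleton] at hl
            exact hyoff l (fun h => hl.2 (Or.inl h)) (fun h => hl.2 (Or.inr h))
          have h4 := hzK.2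
          rw [h1, h2, hya, hyb, hm] at h3
          linarith
      -- strict increase
      have hsame : ∀ m' : ℕ,
          (∑ e' ∈ Finset.powersetCard m' ((Finset.univ : Finset (Fin t)) \ {a, b}),
            ∏ l ∈ e', y l)
          = ∑ e' ∈ Finset.powersetCard m' ((Finset.univ : Finset (Fin t)) \ {a, b}),
            ∏ l ∈ e', z l := by
        intro m'
        refine Finset.sum_congr rfl fun e' he' => Finset.prod_congr rfl fun l hl => ?_
        have hls := (Finset.mem_powersetCard.mp he').1 hl
        rw [Finset.mem_sdiff, Finset.mem_insert, Finset.mem_singleton] at hls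
        exact hyoff l (fun h => hls.2 (Or.inl h)) (fun h => hls.2 (Or.inr h))
      have hsz := esum_split k z a b hne
      have hsy := esum_split k y a b hne
      rw [hsame, hsame, hsame, hya, hyb] at hsy
      have hprod : z a * z b < m * m := by
        have h0 : z a - z b ≠ 0 := sub_ne_zero_of_ne hab
        have h2 : 0 < (z a - z b) ^ 2 :=
          lt_of_le_of_ne (sq_nonneg _) (Ne.symm (pow_ne_zero 2 h0))
        rw [hm]
        nlinarith [h2]
      have hablt : z a * z b < m * m := hprod
      have hstep : Esum t (k + 1 + 1) z < Esum t (k + 1 + 1) y := by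
        rw [hsz, hsy]
        have hmm : z a + z b = m + m := by rw [hm]; ring
        rw [hmm]
        have := mul_lt_mul_of_pos_right hablt hCpos
        linarith
      exact absurd (hmax y hyK) (not_le.mpr hstep)
    · have hu0 : 0 ≤ Esum t (k + 1 + 1) (fun _ => 1 / (t : ℝ)) := by
        refine Finset.sum_nonneg fun e _ => Finset.prod_nonneg fun i _ => ?_
        positivity
      push_neg at hpos
      linarith

end LagAux

/-- The Lagrangian of the complete {1,r}-graph on t vertices, attained by the uniform weighting. -/
theorem lagrangian_complete_one_r (t r : ℕ) (ht : 1 ≤ t) (hr : 2 ≤ r) :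
    lagrangian (completeEdges t ({1, r} : Finset ℕ)) =
      1 + (∏ i ∈ Finset.Icc 1 (r - 1), ((t : ℝ) - (i : ℝ))) / (t : ℝ) ^ (r - 1) ∧
    isLegal (fun _ : Fin t => 1 / (t : ℝ)) ∧
    lagPoly (completeEdges t ({1, r} : Finset ℕ)) (fun _ : Fin t => 1 / (t : ℝ)) =
      1 + (∏ i ∈ Finset.Icc 1 (r - 1), ((t : ℝ) - (i : ℝ))) / (t : ℝ) ^ (r - 1) := by
  have ht0 : (0 : ℝ) < t := by exact_mod_cast ht
  have hulegal : isLegal (fun _ : Fin t => 1 / (t : ℝ)) := by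
    constructor
    · rw [Finset.sum_const, Finset.card_univ, Fintype.card_fin, nsmul_eq_mul]
      field_simp
    · intro i
      positivity
  have huval : lagPoly (completeEdges t ({1, r} : Finset ℕ)) (fun _ : Fin t => 1 / (t : ℝ))
      = 1 + (∏ i ∈ Finset.Icc 1 (r - 1), ((t : ℝ) - (i : ℝ))) / (t : ℝ) ^ (r - 1) := by
    rw [LagAux.lagPoly_complete hr, hulegal.1, LagAux.uniform_value t r ht hr]
  refine ⟨?_, hulegal, huval⟩
  have hmem : (1 + (∏ i ∈ Finset.Icc 1 (r - 1), ((t : ℝ) - (i : ℝ))) / (t : ℝ) ^ (r - 1))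
      ∈ {v : ℝ | ∃ x : Fin t → ℝ, isLegal x ∧
          lagPoly (completeEdges t ({1, r} : Finset ℕ)) x = v} :=
    ⟨fun _ => 1 / (t : ℝ), hulegal, huval⟩
  have hub : ∀ v ∈ {v : ℝ | ∃ x : Fin t → ℝ, isLegal x ∧
      lagPoly (completeEdges t ({1, r} : Finset ℕ)) x = v},
      v ≤ 1 + (∏ i ∈ Finset.Icc 1 (r - 1), ((t : ℝ) - (i : ℝ))) / (t : ℝ) ^ (r - 1) := by
    rintro v ⟨x, hx, rfl⟩
    rw [LagAux.lagPoly_complete hr, hx.1, ← LagAux.uniform_value t r ht hr]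
    have hE := LagAux.esum_le t r ht hr x hx
    have hfac : (0 : ℝ) ≤ (Nat.factorial r : ℝ) := by positivity
    nlinarith [hE, hfac]
  unfold lagrangian
  exact le_antisymm (csSup_le ⟨_, hmem⟩ hub) (le_csSup ⟨_, hub⟩ hmem)
end

section
/- For every integer t ≥ 1, the Lagrangian of the complete {1,2,3}-graph on t vertices satisfies λ'(K_t^{{1,2,3}}) = 1 + (t-1)/t + (t-1)(t-2)/t², and this value is attained by the uniform weighting assigning weight 1/t to each of the t vertices. -/
open Finset

/-! ### Auxiliary machinery -/

/-- Elementary symmetric sum of degree `k`. -/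
noncomputable def Esum {n : ℕ} (k : ℕ) (s : Finset (Fin n)) (x : Fin n → ℝ) : ℝ :=
  ∑ e ∈ s.powersetCard k, ∏ i ∈ e, x i

lemma Esum_zero {n : ℕ} (s : Finset (Fin n)) (x : Fin n → ℝ) : Esum 0 s x = 1 := by
  simp [Esum]

lemma Esum_empty {n : ℕ} (k : ℕ) (x : Fin n → ℝ) : Esum (k + 1) (∅ : Finset (Fin n)) x = 0 := by
  unfold Esum
  rw [show (powersetCard (k+1) (∅ : Finset (Fin n))) = ∅ by simp]
  simp

lemma Esum_insert {n : ℕ} (k : ℕ) {a : Fin n} {s : Finset (Fin n)} (ha : a ∉ s)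
    (x : Fin n → ℝ) :
    Esum (k + 1) (insert a s) x = Esum (k + 1) s x + x a * Esum k s x := by
  unfold Esum
  rw [powersetCard_succ_insert ha]
  rw [sum_union, sum_image]
  · congr 1
    rw [mul_sum]
    refine sum_congr rfl fun e he => ?_
    rw [mem_powersetCard] at he
    rw [prod_insert (fun h => ha (he.1 h))]
  · intro e he f hf hef
    rw [mem_coe, mem_powersetCard] at he hf
    have hae : a ∉ e := fun h => ha (he.1 h)
    have haf : a ∉ f := fun h => ha (hf.1 h)
    rw [← erase_insert hae, ← erase_insert haf, hef]
  · rw [disjoint_right]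
    intro e he he'
    rw [mem_image] at he
    obtain ⟨f, hf, rfl⟩ := he
    rw [mem_powersetCard] at he'
    exact ha (he'.1 (mem_insert_self a f))

lemma Esum_one {n : ℕ} (s : Finset (Fin n)) (x : Fin n → ℝ) :
    Esum 1 s x = ∑ i ∈ s, x i := by
  induction s using Finset.induction_on with
  | empty => simp [Esum_empty]
  | @insert a s ha ih =>
    rw [Esum_insert 0 ha, Esum_zero, ih, sum_insert ha]; ring

lemma Esum_two {n : ℕ} (s : Finset (Fin n)) (x : Fin n → ℝ) :
    2 * Esum 2 s x = (∑ i ∈ s, x i) ^ 2 - ∑ i ∈ s, x i ^ 2 := by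
  induction s using Finset.induction_on with
  | empty => simp [Esum_empty]
  | @insert a s ha ih =>
    rw [show (2:ℕ) = 1 + 1 from rfl, Esum_insert 1 ha, Esum_one, sum_insert ha, sum_insert ha]
    rw [show (1:ℕ)+1 = 2 from rfl] at *
    linear_combination ih

lemma Esum_three {n : ℕ} (s : Finset (Fin n)) (x : Fin n → ℝ) :
    6 * Esum 3 s x =
      (∑ i ∈ s, x i) ^ 3 - 3 * (∑ i ∈ s, x i) * (∑ i ∈ s, x i ^ 2)
        + 2 * ∑ i ∈ s, x i ^ 3 := by
  induction s using Finset.induction_on with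
  | empty => simp [Esum_empty]
  | @insert a s ha ih =>
    rw [show (3:ℕ) = 2 + 1 from rfl, Esum_insert 2 ha, sum_insert ha, sum_insert ha, sum_insert ha]
    rw [show (2:ℕ)+1 = 3 from rfl] at *
    linear_combination ih + 3 * x a * Esum_two s x

lemma fact_sum (t j : ℕ) (x : Fin t → ℝ) :
    ∑ e ∈ (univ : Finset (Fin t)).powersetCard j, (Nat.factorial e.card : ℝ) * ∏ i ∈ e, x i
      = (Nat.factorial j : ℝ) * Esum j univ x := by
  unfold Esum
  rw [mul_sum]
  refine sum_congr rfl fun e he => ?_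
  rw [mem_powersetCard] at he
  rw [he.2]

lemma lag_split (t : ℕ) (x : Fin t → ℝ) :
    lagPoly (completeEdges t ({1, 2, 3} : Finset ℕ)) x
      = Esum 1 univ x + 2 * Esum 2 univ x + 6 * Esum 3 univ x := by
  have hE : completeEdges t ({1, 2, 3} : Finset ℕ)
      = ((univ : Finset (Fin t)).powersetCard 1 ∪ univ.powersetCard 2) ∪ univ.powersetCard 3 := by
    ext e
    simp only [completeEdges, mem_filter, mem_union, mem_powersetCard, mem_univ, true_and,
      mem_insert, mem_singleton, subset_univ]
    tauto
  have d12 : Disjoint ((univ : Finset (Fin t)).powersetCard 1) (univ.powersetCard 2) := by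
    rw [disjoint_left]
    intro e h1 h2
    rw [mem_powersetCard] at h1 h2
    omega
  have d123 : Disjoint ((univ : Finset (Fin t)).powersetCard 1 ∪ univ.powersetCard 2)
      (univ.powersetCard 3) := by
    rw [disjoint_left]
    intro e h1 h3
    rw [mem_union, mem_powersetCard, mem_powersetCard] at h1
    rw [mem_powersetCard] at h3
    omega
  unfold lagPoly
  rw [hE, sum_union d123, sum_union d12, fact_sum, fact_sum, fact_sum]
  norm_num [Nat.factorial]

lemma lag_powerSums (t : ℕ) (x : Fin t → ℝ) :
    lagPoly (completeEdges t ({1, 2, 3} : Finset ℕ)) x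
      = (∑ i, x i) + ((∑ i, x i) ^ 2 - ∑ i, x i ^ 2)
        + ((∑ i, x i) ^ 3 - 3 * (∑ i, x i) * (∑ i, x i ^ 2) + 2 * ∑ i, x i ^ 3) := by
  rw [lag_split, Esum_one]
  linear_combination Esum_two (univ : Finset (Fin t)) x + Esum_three (univ : Finset (Fin t)) x

lemma tangent_ineq (T u : ℝ) (hT : 2 ≤ T) (_h0 : 0 ≤ u) (h1 : u ≤ 1) :
    4 / T ^ 2 - 2 / T ^ 3 + (8 / T - 6 / T ^ 2) * (u - 1 / T) ≤ 4 * u ^ 2 - 2 * u ^ 3 := by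
  have hT0 : (0:ℝ) < T := by linarith
  have hTu : T * u ≤ T := by nlinarith
  have h2 : 0 ≤ 2 * T - 2 - T * u := by linarith
  have key : 0 ≤ 2 * (T * u - 1) ^ 2 * (2 * T - 2 - T * u) :=
    mul_nonneg (by positivity) h2
  have hT3 : (0:ℝ) < T ^ 3 := by positivity
  have expand : (4 * u ^ 2 - 2 * u ^ 3)
      - (4 / T ^ 2 - 2 / T ^ 3 + (8 / T - 6 / T ^ 2) * (u - 1 / T))
      = 2 * (T * u - 1) ^ 2 * (2 * T - 2 - T * u) / T ^ 3 := by
    field_simp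
    ring
  rw [← sub_nonneg, expand]
  exact div_nonneg key hT3.le

/-- The Lagrangian of the complete {1,2,3}-graph on t vertices, attained by the uniform weighting. -/
theorem lagrangian_complete_one_two_three (t : ℕ) (ht : 1 ≤ t) :
    lagrangian (completeEdges t ({1, 2, 3} : Finset ℕ)) =
      1 + ((t : ℝ) - 1) / (t : ℝ) + ((t : ℝ) - 1) * ((t : ℝ) - 2) / (t : ℝ) ^ 2 ∧
    isLegal (fun _ : Fin t => 1 / (t : ℝ)) ∧
    lagPoly (completeEdges t ({1, 2, 3} : Finset ℕ)) (fun _ : Fin t => 1 / (t : ℝ)) =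
      1 + ((t : ℝ) - 1) / (t : ℝ) + ((t : ℝ) - 1) * ((t : ℝ) - 2) / (t : ℝ) ^ 2 := by
  set T : ℝ := (t : ℝ) with hTdef
  have hT0 : (0:ℝ) < T := by rw [hTdef]; exact_mod_cast Nat.lt_of_lt_of_le Nat.zero_lt_one ht
  have hTne : T ≠ 0 := ne_of_gt hT0
  set V : ℝ := 1 + (T - 1) / T + (T - 1) * (T - 2) / T ^ 2 with hVdef
  have hVform : V = 3 - 4 / T + 2 / T ^ 2 := by
    rw [hVdef]; field_simp; ring
  -- the uniform weighting is legal
  have hsum1 : (∑ _i : Fin t, 1 / T) = 1 := by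
    rw [sum_const, card_univ, Fintype.card_fin, nsmul_eq_mul, hTdef]
    field_simp
  have hlegal : isLegal (fun _ : Fin t => 1 / T) :=
    ⟨hsum1, fun _ => by positivity⟩
  -- value at the uniform weighting
  have huni : lagPoly (completeEdges t ({1, 2, 3} : Finset ℕ)) (fun _ : Fin t => 1 / T) = V := by
    rw [lag_powerSums, hVform]
    have h2 : (∑ _i : Fin t, (1 / T) ^ 2) = T * (1 / T) ^ 2 := by
      rw [sum_const, card_univ, Fintype.card_fin, nsmul_eq_mul, hTdef]
    have h3 : (∑ _i : Fin t, (1 / T) ^ 3) = T * (1 / T) ^ 3 := by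
      rw [sum_const, card_univ, Fintype.card_fin, nsmul_eq_mul, hTdef]
    simp only [hsum1, h2, h3]
    field_simp
    ring
  -- upper bound for any legal weighting
  have hbound : ∀ x : Fin t → ℝ, isLegal x →
      lagPoly (completeEdges t ({1, 2, 3} : Finset ℕ)) x ≤ V := by
    rintro x ⟨hx1, hx0⟩
    have hle1 : ∀ i, x i ≤ 1 := fun i =>
      hx1 ▸ single_le_sum (fun j _ => hx0 j) (mem_univ i)
    rw [lag_powerSums, hx1, hVform]
    rcases eq_or_lt_of_le ht with h1 | h2
    · -- t = 1
      have ht1 : t = 1 := h1.symm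
      subst ht1
      have hx : x 0 = 1 := by rwa [Fin.sum_univ_one] at hx1
      rw [Fin.sum_univ_one, Fin.sum_univ_one, hx]
      have hT1 : T = 1 := by rw [hTdef]; norm_num
      rw [hT1]; norm_num
    · -- t ≥ 2
      have h2T : (2:ℝ) ≤ T := by
        rw [hTdef]; exact_mod_cast h2
      have hs := Finset.sum_le_sum
        (fun i (_ : i ∈ univ) => tangent_ineq T (x i) h2T (hx0 i) (hle1 i))
      have e1 : (∑ i : Fin t, (4 / T ^ 2 - 2 / T ^ 3 + (8 / T - 6 / T ^ 2) * (x i - 1 / T)))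
          = T * (4 / T ^ 2 - 2 / T ^ 3)
            + (8 / T - 6 / T ^ 2) * (1 - T * (1 / T)) := by
        rw [sum_add_distrib, sum_const, card_univ, Fintype.card_fin, nsmul_eq_mul,
          ← mul_sum, sum_sub_distrib, sum_const, card_univ, Fintype.card_fin, nsmul_eq_mul, hx1,
          hTdef]
      have e2 : (∑ i : Fin t, (4 * x i ^ 2 - 2 * x i ^ 3))
          = 4 * (∑ i, x i ^ 2) - 2 * (∑ i, x i ^ 3) := by
        rw [sum_sub_distrib, ← mul_sum, ← mul_sum]
      rw [e1, e2] at hs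
      have e3 : T * (4 / T ^ 2 - 2 / T ^ 3) + (8 / T - 6 / T ^ 2) * (1 - T * (1 / T))
          = 4 / T - 2 / T ^ 2 := by
        field_simp
        ring
      rw [e3] at hs
      linarith
  -- the supremum
  have hgreat : IsGreatest
      {v : ℝ | ∃ x : Fin t → ℝ, isLegal x ∧ lagPoly (completeEdges t ({1, 2, 3} : Finset ℕ)) x = v}
      V := by
    constructor
    · exact ⟨fun _ => 1 / T, hlegal, huni⟩
    · rintro v ⟨x, hx, rfl⟩
      exact hbound x hx
  exact ⟨hgreat.csSup_eq, hlegal, huni⟩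
end

section
/- (Motzkin–Straus) If G is a 2-uniform graph in which a largest clique has order t (t ≥ 1), then λ(G) = λ(K_t^{{2}}) = λ([t]^{(2)}) = (1/2)(1 - 1/t). -/
open Finset

/-- λ(G,x) = Σ_{e∈E} ∏_{i∈e} x_i for a uniform hypergraph. -/
noncomputable def lagPolyU {n : ℕ} (E : Finset (Finset (Fin n))) (x : Fin n → ℝ) : ℝ :=
  ∑ e ∈ E, ∏ i ∈ e, x i

/-- The Lagrangian λ(G): the maximum of λ(G,x) over legal weightings. -/
noncomputable def lagrangianU {n : ℕ} (E : Finset (Finset (Fin n))) : ℝ :=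
  sSup {v : ℝ | ∃ x : Fin n → ℝ, isLegal x ∧ lagPolyU E x = v}

lemma pairSum {n : ℕ} (S : Finset (Fin n)) (x : Fin n → ℝ) :
    2 * ∑ e ∈ S.powersetCard 2, ∏ i ∈ e, x i
      = (∑ i ∈ S, x i) ^ 2 - ∑ i ∈ S, (x i) ^ 2 := by
  induction S using Finset.induction_on with
  | empty =>
    rw [show Finset.powersetCard 2 (∅ : Finset (Fin n)) = ∅ from
      Finset.powersetCard_eq_empty.mpr (by simp)]
    simp
  | @insert a S ha ih =>
    have hdisj : Disjoint (S.powersetCard 2) ((S.powersetCard 1).image (insert a)) := by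
      rw [Finset.disjoint_left]
      intro e he hei
      rw [Finset.mem_powersetCard] at he
      rw [Finset.mem_image] at hei
      obtain ⟨e', he', rfl⟩ := hei
      exact ha (he.1 (Finset.mem_insert_self a e'))
    have hinj : ∀ e ∈ S.powersetCard 1, ∀ e' ∈ S.powersetCard 1,
        insert a e = insert a e' → e = e' := by
      intro e he e' he' h
      rw [Finset.mem_powersetCard] at he he'
      have : (insert a e).erase a = (insert a e').erase a := by rw [h]
      rwa [Finset.erase_insert (fun h => ha (he.1 h)),
        Finset.erase_insert (fun h => ha (he'.1 h))] at this
    have hsum : ∀ e ∈ S.powersetCard 1, ∏ i ∈ insert a e, x i = x a * ∏ i ∈ e, x i := by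
      intro e he
      rw [Finset.mem_powersetCard] at he
      exact Finset.prod_insert (fun h => ha (he.1 h))
    rw [show Finset.powersetCard 2 (insert a S)
        = Finset.powersetCard 2 S ∪ (Finset.powersetCard 1 S).image (insert a) from
        Finset.powersetCard_succ_insert ha 1,
      Finset.sum_union hdisj, Finset.sum_image hinj, Finset.sum_insert ha,
      Finset.sum_insert ha, Finset.sum_congr rfl hsum, Finset.powersetCard_one,
      Finset.sum_map]
    simp only [Function.Embedding.coeFn_mk, Finset.prod_singleton, ← Finset.mul_sum]
    nlinarith [ih]

lemma no_both {n : ℕ} {E : Finset (Finset (Fin n))} (h2 : ∀ e ∈ E, e.card = 2)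
    {i j : Fin n} (hij : i ≠ j) (hnot : ({i,j} : Finset (Fin n)) ∉ E) :
    ∀ e ∈ E, i ∈ e → j ∉ e := by
  intro e he hi hj
  apply hnot
  have hsub : ({i,j} : Finset (Fin n)) ⊆ e := by
    intro k hk
    rw [Finset.mem_insert, Finset.mem_singleton] at hk
    rcases hk with rfl | rfl <;> assumption
  have := Finset.eq_of_subset_of_card_le hsub (by rw [h2 e he, Finset.card_pair hij])
  rwa [this]

lemma sum_mem_factor {n : ℕ} (A : Finset (Finset (Fin n))) (i : Fin n)
    (hi : ∀ e ∈ A, i ∈ e) (z : Fin n → ℝ) :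
    ∑ e ∈ A, ∏ v ∈ e, z v = z i * ∑ e ∈ A, ∏ v ∈ e.erase i, z v := by
  rw [Finset.mul_sum]
  exact Finset.sum_congr rfl fun e he => (Finset.mul_prod_erase e z (hi e he)).symm

lemma shift {n : ℕ} (E : Finset (Finset (Fin n))) (h2 : ∀ e ∈ E, e.card = 2)
    (i j : Fin n) (hij : i ≠ j) (hnot : ({i,j} : Finset (Fin n)) ∉ E)
    (x y : Fin n → ℝ) (hxy : ∀ k, k ≠ i → k ≠ j → y k = x k) :
    lagPolyU E y - lagPolyU E x
      = (y i - x i) * (∑ e ∈ E.filter (fun e => i ∈ e), ∏ v ∈ e.erase i, x v)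
      + (y j - x j) * (∑ e ∈ E.filter (fun e => j ∈ e), ∏ v ∈ e.erase j, x v) := by
  have hnb : ∀ e ∈ E, i ∈ e → j ∉ e := no_both h2 hij hnot
  have hnb' : ∀ e ∈ E, j ∈ e → i ∉ e := fun e he hj hi => hnb e he hi hj
  have key : ∀ z : Fin n → ℝ, lagPolyU E z
      = ∑ e ∈ E.filter (fun e => i ∈ e), ∏ v ∈ e, z v
      + (∑ e ∈ E.filter (fun e => j ∈ e), ∏ v ∈ e, z v
      + ∑ e ∈ E.filter (fun e => i ∉ e ∧ j ∉ e), ∏ v ∈ e, z v) := by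
    intro z
    unfold lagPolyU
    rw [← Finset.sum_filter_add_sum_filter_not E (fun e => i ∈ e)]
    congr 1
    rw [← Finset.sum_filter_add_sum_filter_not (E.filter (fun e => i ∉ e)) (fun e => j ∈ e),
      Finset.filter_filter, Finset.filter_filter]
    congr 2
    apply Finset.filter_congr
    intro e he
    constructor
    · rintro ⟨_, hj⟩; exact hj
    · intro hj; exact ⟨hnb' e he hj, hj⟩
  have fi : ∀ z : Fin n → ℝ, ∑ e ∈ E.filter (fun e => i ∈ e), ∏ v ∈ e, z v
      = z i * ∑ e ∈ E.filter (fun e => i ∈ e), ∏ v ∈ e.erase i, z v :=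
    fun z => sum_mem_factor _ i (fun e he => (Finset.mem_filter.mp he).2) z
  have fj : ∀ z : Fin n → ℝ, ∑ e ∈ E.filter (fun e => j ∈ e), ∏ v ∈ e, z v
      = z j * ∑ e ∈ E.filter (fun e => j ∈ e), ∏ v ∈ e.erase j, z v :=
    fun z => sum_mem_factor _ j (fun e he => (Finset.mem_filter.mp he).2) z
  have ei : ∑ e ∈ E.filter (fun e => i ∈ e), ∏ v ∈ e.erase i, y v
      = ∑ e ∈ E.filter (fun e => i ∈ e), ∏ v ∈ e.erase i, x v := by
    apply Finset.sum_congr rfl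
    intro e he
    rw [Finset.mem_filter] at he
    apply Finset.prod_congr rfl
    intro v hv
    rw [Finset.mem_erase] at hv
    exact hxy v hv.1 (fun h => hnb e he.1 he.2 (h ▸ hv.2))
  have ej : ∑ e ∈ E.filter (fun e => j ∈ e), ∏ v ∈ e.erase j, y v
      = ∑ e ∈ E.filter (fun e => j ∈ e), ∏ v ∈ e.erase j, x v := by
    apply Finset.sum_congr rfl
    intro e he
    rw [Finset.mem_filter] at he
    apply Finset.prod_congr rfl
    intro v hv
    rw [Finset.mem_erase] at hv
    exact hxy v (fun h => hnb' e he.1 he.2 (h ▸ hv.2)) hv.1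
  have h3 : ∑ e ∈ E.filter (fun e => i ∉ e ∧ j ∉ e), ∏ v ∈ e, y v
      = ∑ e ∈ E.filter (fun e => i ∉ e ∧ j ∉ e), ∏ v ∈ e, x v := by
    apply Finset.sum_congr rfl
    intro e he
    rw [Finset.mem_filter] at he
    exact Finset.prod_congr rfl fun v hv =>
      hxy v (fun h => he.2.1 (h ▸ hv)) (fun h => he.2.2 (h ▸ hv))
  rw [key y, key x, fi y, fi x, fj y, fj x, ei, ej, h3]
  ring

lemma step {n : ℕ} (E : Finset (Finset (Fin n))) (h2 : ∀ e ∈ E, e.card = 2)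
    (x : Fin n → ℝ) (hx : isLegal x) (i j : Fin n) (hij : i ≠ j)
    (hnot : ({i,j} : Finset (Fin n)) ∉ E) (hxi : 0 < x i) (hxj : 0 < x j)
    (hLL : (∑ e ∈ E.filter (fun e => j ∈ e), ∏ v ∈ e.erase j, x v)
         ≤ (∑ e ∈ E.filter (fun e => i ∈ e), ∏ v ∈ e.erase i, x v)) :
    ∃ y : Fin n → ℝ, isLegal y ∧ lagPolyU E x ≤ lagPolyU E y ∧
      (Finset.univ.filter (fun k => 0 < y k))
        = (Finset.univ.filter (fun k => 0 < x k)).erase j := by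
  classical
  set y : Fin n → ℝ := fun k => if k = i then x i + x j else if k = j then 0 else x k with hy
  have hyi : y i = x i + x j := by simp [hy]
  have hyj : y j = 0 := by simp [hy, hij.symm]
  have hyk : ∀ k, k ≠ i → k ≠ j → y k = x k := by
    intro k h1 h2
    simp [hy, h1, h2]
  have hsum : ∑ k, y k = 1 := by
    have hdiff : ∑ k, (y k - x k) = 0 := by
      rw [← Finset.sum_subset (Finset.subset_univ ({i,j} : Finset (Fin n)))]
      · rw [Finset.sum_pair hij, hyi, hyj]; ring
      · intro k _ hk
        rw [Finset.mem_insert, Finset.mem_singleton] at hk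
        push_neg at hk
        rw [hyk k hk.1 hk.2]; ring
    rw [Finset.sum_sub_distrib, hx.1] at hdiff
    linarith
  have hnn : ∀ k, 0 ≤ y k := by
    intro k
    by_cases h1 : k = i
    · subst h1; rw [hyi]; linarith
    by_cases h2 : k = j
    · subst h2; rw [hyj]
    · rw [hyk k h1 h2]; exact hx.2 k
  refine ⟨y, ⟨hsum, hnn⟩, ?_, ?_⟩
  · have hs := shift E h2 i j hij hnot x y hyk
    rw [hyi, hyj] at hs
    nlinarith [mul_le_mul_of_nonneg_left hLL hxj.le]
  · ext k
    simp only [Finset.mem_filter, Finset.mem_erase, Finset.mem_univ, true_and]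
    by_cases h1 : k = i
    · subst h1
      rw [hyi]
      constructor
      · intro _; exact ⟨hij, hxi⟩
      · intro _; linarith
    by_cases h2 : k = j
    · subst h2; rw [hyj]; simp
    · rw [hyk k h1 h2]; tauto

lemma key_bound {n : ℕ} (t : ℕ) (ht : 1 ≤ t) (E : Finset (Finset (Fin n)))
    (h2 : ∀ e ∈ E, e.card = 2)
    (hcl : ∀ S, isCompleteSub E ({2} : Finset ℕ) S → S.card ≤ t) :
    ∀ m : ℕ, ∀ x : Fin n → ℝ, isLegal x →
      (Finset.univ.filter (fun i => 0 < x i)).card ≤ m →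
      lagPolyU E x ≤ (1/2) * (1 - 1/(t:ℝ)) := by
  intro m
  induction m with
  | zero =>
    intro x hx hcard
    exfalso
    have hall : ∀ i, x i = 0 := by
      intro i
      by_contra h
      have hpos : 0 < x i := lt_of_le_of_ne (hx.2 i) (Ne.symm h)
      have hmem : i ∈ Finset.univ.filter (fun i => 0 < x i) := by
        simp [hpos]
      have := Finset.card_pos.mpr ⟨i, hmem⟩
      omega
    have h1 := hx.1
    rw [Finset.sum_eq_zero (fun i _ => hall i)] at h1
    norm_num at h1
  | succ m ih =>
    intro x hx hcard
    set S := Finset.univ.filter (fun i => 0 < x i) with hSdef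
    have hzero : ∀ i, i ∉ S → x i = 0 := by
      intro i hi
      rw [hSdef, Finset.mem_filter] at hi
      push_neg at hi
      have := hi (Finset.mem_univ i)
      linarith [hx.2 i]
    have hmemS : ∀ i, i ∈ S → 0 < x i := by
      intro i hi
      rw [hSdef, Finset.mem_filter] at hi
      exact hi.2
    by_cases hcase : isCompleteSub E ({2} : Finset ℕ) S
    · -- clique case
      have hSt : S.card ≤ t := hcl S hcase
      have hsum1 : ∑ i ∈ S, x i = 1 := by
        rw [← hx.1]
        exact Finset.sum_subset (Finset.subset_univ S) (fun i _ hi => hzero i hi)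
      have hScard : 1 ≤ S.card := by
        by_contra h
        have hS0 : S = ∅ := Finset.card_eq_zero.mp (by omega)
        rw [hS0, Finset.sum_empty] at hsum1
        norm_num at hsum1
      have heq : lagPolyU E x = ∑ e ∈ E.filter (fun e => e ⊆ S), ∏ v ∈ e, x v := by
        unfold lagPolyU
        symm
        apply Finset.sum_filter_of_ne
        intro e _ hne v hv
        by_contra hvS
        exact hne (Finset.prod_eq_zero hv (hzero v hvS))
      have hle : lagPolyU E x ≤ ∑ e ∈ S.powersetCard 2, ∏ v ∈ e, x v := by
        rw [heq]
        apply Finset.sum_le_sum_of_subset_of_nonneg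
        · intro e he
          rw [Finset.mem_filter] at he
          rw [Finset.mem_powersetCard]
          exact ⟨he.2, h2 e he.1⟩
        · intro e _ _
          exact Finset.prod_nonneg fun v _ => hx.2 v
      have hps := pairSum S x
      rw [hsum1] at hps
      have hQ0 : 0 ≤ ∑ i ∈ S, (x i)^2 := Finset.sum_nonneg fun i _ => sq_nonneg _
      have hcs : (1:ℝ) ≤ (S.card : ℝ) * ∑ i ∈ S, (x i)^2 := by
        have h := sq_sum_le_card_mul_sum_sq (s := S) (f := x)
        rw [hsum1] at h
        norm_num at h
        exact h
      have htpos : (0:ℝ) < t := by exact_mod_cast ht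
      have hct : (S.card : ℝ) ≤ t := by exact_mod_cast hSt
      have hQt : 1/(t:ℝ) ≤ ∑ i ∈ S, (x i)^2 := by
        rw [div_le_iff₀ htpos]
        nlinarith
      linarith
    · -- non-clique case: shift weight
      unfold isCompleteSub at hcase
      push_neg at hcase
      obtain ⟨e, heS, hc2, heE⟩ := hcase
      have hc2' : e.card = 2 := by simpa using hc2
      obtain ⟨i, j, hij, rfl⟩ := Finset.card_eq_two.mp hc2'
      have hi : i ∈ S := heS (by simp)
      have hj : j ∈ S := heS (by simp)
      have hxi : 0 < x i := hmemS i hi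
      have hxj : 0 < x j := hmemS j hj
      have hcard1 : 1 ≤ S.card := Finset.card_pos.mpr ⟨i, hi⟩
      by_cases hLL : (∑ e ∈ E.filter (fun e => j ∈ e), ∏ v ∈ e.erase j, x v)
          ≤ (∑ e ∈ E.filter (fun e => i ∈ e), ∏ v ∈ e.erase i, x v)
      · obtain ⟨y, hy, hxy, hysupp⟩ := step E h2 x hx i j hij heE hxi hxj hLL
        have hycard : (Finset.univ.filter (fun k => 0 < y k)).card ≤ m := by
          rw [hysupp, Finset.card_erase_of_mem hj]
          omega
        exact le_trans hxy (ih y hy hycard)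
      · push_neg at hLL
        have heE' : ({j,i} : Finset (Fin n)) ∉ E := by rwa [Finset.pair_comm]
        obtain ⟨y, hy, hxy, hysupp⟩ := step E h2 x hx j i hij.symm heE' hxj hxi hLL.le
        have hycard : (Finset.univ.filter (fun k => 0 < y k)).card ≤ m := by
          rw [hysupp, Finset.card_erase_of_mem hi]
          omega
        exact le_trans hxy (ih y hy hycard)

lemma attain {n : ℕ} (t : ℕ) (ht : 1 ≤ t) (E : Finset (Finset (Fin n)))
    (h2 : ∀ e ∈ E, e.card = 2) (S : Finset (Fin n)) (hScard : S.card = t)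
    (hS : isCompleteSub E ({2} : Finset ℕ) S) :
    ∃ x : Fin n → ℝ, isLegal x ∧ lagPolyU E x = (1/2) * (1 - 1/(t:ℝ)) := by
  classical
  have htpos : (0:ℝ) < t := by exact_mod_cast ht
  set x : Fin n → ℝ := fun i => if i ∈ S then 1/(t:ℝ) else 0 with hxdef
  have hnn : ∀ i, 0 ≤ x i := by
    intro i
    rw [hxdef]
    dsimp only
    split <;> positivity
  have hsS : ∑ i ∈ S, x i = 1 := by
    rw [Finset.sum_congr rfl (fun i hi => show x i = 1/(t:ℝ) by rw [hxdef]; simp [hi]),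
      Finset.sum_const, hScard, nsmul_eq_mul]
    field_simp
  have hsum : ∑ i, x i = 1 := by
    rw [← hsS]
    symm
    exact Finset.sum_subset (Finset.subset_univ S)
      (fun i _ hi => by rw [hxdef]; simp [hi])
  have hEfilter : E.filter (fun e => e ⊆ S) = S.powersetCard 2 := by
    ext e
    rw [Finset.mem_filter, Finset.mem_powersetCard]
    constructor
    · rintro ⟨he, hsub⟩; exact ⟨hsub, h2 e he⟩
    · rintro ⟨hsub, hc⟩; exact ⟨hS e hsub (by simp [hc]), hsub⟩
  have heq : lagPolyU E x = ∑ e ∈ S.powersetCard 2, ∏ v ∈ e, x v := by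
    unfold lagPolyU
    rw [← hEfilter]
    symm
    apply Finset.sum_filter_of_ne
    intro e _ hne v hv
    by_contra hvS
    exact hne (Finset.prod_eq_zero hv (by rw [hxdef]; simp [hvS]))
  have hps := pairSum S x
  rw [hsS] at hps
  have hsq : ∑ i ∈ S, (x i)^2 = 1/(t:ℝ) := by
    rw [Finset.sum_congr rfl (fun i hi => show (x i)^2 = 1/(t:ℝ)^2 by
        rw [hxdef]; simp [hi]),
      Finset.sum_const, hScard, nsmul_eq_mul]
    field_simp
  refine ⟨x, ⟨hsum, hnn⟩, ?_⟩
  rw [heq]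
  rw [hsq] at hps
  linarith

/-- Motzkin–Straus theorem: the Lagrangian of a graph is determined by its clique number. -/
theorem motzkin_straus (t n : ℕ) (ht : 1 ≤ t)
    (E : Finset (Finset (Fin n))) (h2 : ∀ e ∈ E, e.card = 2)
    (hmax : maxCompleteOrder E ({2} : Finset ℕ) t) :
    lagrangianU E = lagrangianU (completeEdges t ({2} : Finset ℕ)) ∧
    lagrangianU (completeEdges t ({2} : Finset ℕ)) = (1 / 2) * (1 - 1 / (t : ℝ)) := by
  have main : ∀ (N : ℕ) (F : Finset (Finset (Fin N))), (∀ e ∈ F, e.card = 2) →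
      (∀ S, isCompleteSub F ({2} : Finset ℕ) S → S.card ≤ t) →
      (∃ S, S.card = t ∧ isCompleteSub F ({2} : Finset ℕ) S) →
      lagrangianU F = (1 / 2) * (1 - 1 / (t : ℝ)) := by
    intro N F hF2 hFcl ⟨S, hScard, hSsub⟩
    have hbound : ∀ v ∈ {v : ℝ | ∃ x : Fin N → ℝ, isLegal x ∧ lagPolyU F x = v},
        v ≤ (1/2) * (1 - 1/(t:ℝ)) := by
      rintro v ⟨x, hx, rfl⟩
      exact key_bound t ht F hF2 hFcl N x hx
        (le_trans (Finset.card_filter_le _ _) (by simp))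
    obtain ⟨x, hx, hval⟩ := attain t ht F hF2 S hScard hSsub
    have hmem : (1/2) * (1 - 1/(t:ℝ)) ∈
        {v : ℝ | ∃ x : Fin N → ℝ, isLegal x ∧ lagPolyU F x = v} := ⟨x, hx, hval⟩
    apply le_antisymm
    · exact csSup_le ⟨_, hmem⟩ hbound
    · exact le_csSup ⟨_, hbound⟩ hmem
  have hE : lagrangianU E = (1/2) * (1 - 1/(t:ℝ)) := main n E h2 hmax.2 hmax.1
  have hK : lagrangianU (completeEdges t ({2} : Finset ℕ)) = (1/2) * (1 - 1/(t:ℝ)) := by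
    apply main t
    · intro e he
      rw [completeEdges, Finset.mem_filter] at he
      simpa using he.2
    · intro S _
      calc S.card ≤ (Finset.univ : Finset (Fin t)).card := Finset.card_le_univ S
        _ = t := by simp
    · refine ⟨Finset.univ, by simp, ?_⟩
      intro e _ hc
      rw [completeEdges, Finset.mem_filter]
      exact ⟨Finset.mem_univ e, hc⟩
  exact ⟨hE.trans hK.symm, hK⟩
end

section
/- If H is a {1,2}-graph and the order of its maximum complete {1,2}-subgraph is t, where t ≥ 2, then λ'(H) = λ'(K_t^{{1,2}}) = 2 - 1/t. -/
open Finset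

lemma pair_eq_iff {α : Type*} [DecidableEq α] {a b c d : α} (hcd : c ≠ d) :
    ({a, b} : Finset α) = {c, d} ↔ (a = c ∧ b = d) ∨ (a = d ∧ b = c) := by
  constructor
  · intro h
    have ha : a ∈ ({c, d} : Finset α) := by rw [← h]; simp
    have hb : b ∈ ({c, d} : Finset α) := by rw [← h]; simp
    have hc : c ∈ ({a, b} : Finset α) := by rw [h]; simp
    have hd : d ∈ ({a, b} : Finset α) := by rw [h]; simp
    simp only [mem_insert, mem_singleton] at ha hb hc hd
    rcases ha with rfl | rfl <;> rcases hb with rfl | rfl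
    · rcases hd with rfl | rfl
      · exact absurd rfl hcd
      · exact Or.inl ⟨rfl, rfl⟩
    · exact Or.inl ⟨rfl, rfl⟩
    · exact Or.inr ⟨rfl, rfl⟩
    · rcases hc with rfl | rfl
      · exact Or.inr ⟨rfl, rfl⟩
      · exact absurd rfl hcd
  · rintro (⟨rfl, rfl⟩ | ⟨rfl, rfl⟩)
    · rfl
    · exact Finset.pair_comm a b

lemma pair_sum_eq {n : ℕ} (x : Fin n → ℝ) :
    ∀ E2 : Finset (Finset (Fin n)), (∀ e ∈ E2, e.card = 2) →
    ∑ e ∈ E2, 2 * ∏ i ∈ e, x i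
      = ∑ p ∈ univ.offDiag.filter
          (fun p : Fin n × Fin n => ({p.1, p.2} : Finset (Fin n)) ∈ E2), x p.1 * x p.2 := by
  intro E2
  induction E2 using Finset.induction_on with
  | empty => simp
  | @insert e s he ih =>
    intro h2
    obtain ⟨a, b, hab, rfl⟩ := Finset.card_eq_two.mp (h2 _ (mem_insert_self _ _))
    have hD : (univ.offDiag.filter
        (fun p : Fin n × Fin n => ({p.1, p.2} : Finset (Fin n)) ∈ insert {a, b} s))
        = insert (a, b) (insert (b, a)
            (univ.offDiag.filter (fun p : Fin n × Fin n => ({p.1, p.2} : Finset (Fin n)) ∈ s))) := by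
      ext ⟨u, v⟩
      simp only [mem_filter, mem_offDiag, mem_insert, mem_univ, true_and, Prod.mk.injEq,
        pair_eq_iff hab]
      constructor
      · rintro ⟨huv, (⟨rfl, rfl⟩ | ⟨rfl, rfl⟩) | hs⟩
        · tauto
        · tauto
        · tauto
      · rintro (⟨rfl, rfl⟩ | ⟨rfl, rfl⟩ | ⟨huv, hs⟩)
        · exact ⟨hab, Or.inl (Or.inl ⟨rfl, rfl⟩)⟩
        · exact ⟨hab.symm, Or.inl (Or.inr ⟨rfl, rfl⟩)⟩
        · exact ⟨huv, Or.inr hs⟩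
    have hab1 : (a, b) ∉ insert (b, a)
        (univ.offDiag.filter (fun p : Fin n × Fin n => ({p.1, p.2} : Finset (Fin n)) ∈ s)) := by
      simp only [mem_insert, mem_filter, Prod.mk.injEq, not_or]
      exact ⟨fun h => hab h.1, fun h => he h.2⟩
    have hab2 : (b, a) ∉
        (univ.offDiag.filter (fun p : Fin n × Fin n => ({p.1, p.2} : Finset (Fin n)) ∈ s)) := by
      simp only [mem_filter, not_and]
      intro _
      rw [Finset.pair_comm b a]
      exact he
    rw [Finset.sum_insert he, hD, Finset.sum_insert hab1, Finset.sum_insert hab2,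
      ← ih (fun e hes => h2 e (mem_insert_of_mem hes)), Finset.prod_pair hab]
    ring

lemma offDiag_sum {n : ℕ} (x : Fin n → ℝ) (hx : ∑ i, x i = 1) :
    ∑ p ∈ (univ : Finset (Fin n)).offDiag, x p.1 * x p.2 = 1 - ∑ i, x i ^ 2 := by
  have h1 : ∑ p ∈ (univ ×ˢ univ : Finset (Fin n × Fin n)), x p.1 * x p.2 = 1 := by
    rw [Finset.sum_product]
    simp_rw [← Finset.mul_sum, hx, mul_one]
    exact hx
  have h2 : ∑ p ∈ (univ ×ˢ univ : Finset (Fin n × Fin n)).filter (fun p => p.1 = p.2),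
      x p.1 * x p.2 = ∑ i, x i ^ 2 := by
    rw [Finset.sum_filter, Finset.sum_product]
    simp [Finset.sum_ite_eq, sq]
  have h3 := Finset.sum_filter_add_sum_filter_not (univ ×ˢ univ : Finset (Fin n × Fin n))
    (fun p => p.1 = p.2) (fun p => x p.1 * x p.2)
  have h4 : (univ : Finset (Fin n)).offDiag
      = (univ ×ˢ univ : Finset (Fin n × Fin n)).filter (fun p => ¬ p.1 = p.2) := by
    ext p; simp [Finset.mem_offDiag]
  rw [h4]
  linarith [h3.symm ▸ h1, h2]

lemma prod_comb {n : ℕ} (e : Finset (Fin n)) (p q : ℝ) (hpq : p + q = 1) (y z : Fin n → ℝ)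
    (h : ∀ k ∈ e, ∀ l ∈ e, y k ≠ z k → y l ≠ z l → k = l) :
    ∏ k ∈ e, (p * y k + q * z k) = p * ∏ k ∈ e, y k + q * ∏ k ∈ e, z k := by
  by_cases hall : ∀ k ∈ e, y k = z k
  · have hy : ∏ k ∈ e, y k = ∏ k ∈ e, z k := Finset.prod_congr rfl hall
    have hcongr : ∀ k ∈ e, p * y k + q * z k = y k := by
      intro k hk
      rw [hall k hk, ← add_mul, hpq, one_mul]
    rw [Finset.prod_congr rfl hcongr, hy, ← add_mul, hpq, one_mul]
  · push_neg at hall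
    obtain ⟨k0, hk0, hk0'⟩ := hall
    have key : ∀ k ∈ e.erase k0, y k = z k := by
      intro k hk
      by_contra hne
      exact (Finset.ne_of_mem_erase hk) (h _ (Finset.mem_of_mem_erase hk) _ hk0 hne hk0')
    rw [← Finset.mul_prod_erase e _ hk0, ← Finset.mul_prod_erase e y hk0,
      ← Finset.mul_prod_erase e z hk0]
    have h1 : ∏ k ∈ e.erase k0, (p * y k + q * z k) = ∏ k ∈ e.erase k0, y k := by
      refine Finset.prod_congr rfl (fun k hk => ?_)
      rw [← key k hk, ← add_mul, hpq, one_mul]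
    have h2 : ∏ k ∈ e.erase k0, z k = ∏ k ∈ e.erase k0, y k :=
      Finset.prod_congr rfl (fun k hk => (key k hk).symm)
    rw [h1, h2]
    ring

lemma caseA {n t : ℕ} (ht : 2 ≤ t) (E : Finset (Finset (Fin n)))
    (hE : ∀ e ∈ E, e.card = 1 ∨ e.card = 2)
    (hmax : ∀ S, isCompleteSub E ({1, 2} : Finset ℕ) S → S.card ≤ t)
    (x : Fin n → ℝ) (hx : isLegal x)
    (hcl : ∀ i ∈ univ.filter (fun i => ({i} : Finset (Fin n)) ∈ E ∧ x i ≠ 0),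
           ∀ j ∈ univ.filter (fun i => ({i} : Finset (Fin n)) ∈ E ∧ x i ≠ 0),
           i ≠ j → ({i, j} : Finset (Fin n)) ∈ E) :
    lagPoly E x ≤ 2 - 1 / t := by
  obtain ⟨hsum, hnn⟩ := hx
  set S := univ.filter (fun i => ({i} : Finset (Fin n)) ∈ E ∧ x i ≠ 0) with hSdef
  have hSt : S.card ≤ t := by
    apply hmax
    intro e he hce
    simp only [Finset.mem_insert, Finset.mem_singleton] at hce
    rcases hce with h1 | h2
    · obtain ⟨a, rfl⟩ := Finset.card_eq_one.mp h1
      have ha : a ∈ S := he (Finset.mem_singleton_self a)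
      exact ((Finset.mem_filter.mp ha).2).1
    · obtain ⟨a, b, hab, rfl⟩ := Finset.card_eq_two.mp h2
      exact hcl a (he (by simp)) b (he (by simp)) hab
  have hE1 : E.filter (fun e => e.card = 1)
      = (univ.filter (fun i => ({i} : Finset (Fin n)) ∈ E)).image
          (fun i => ({i} : Finset (Fin n))) := by
    ext e
    simp only [Finset.mem_filter, Finset.mem_image, Finset.mem_univ, true_and]
    constructor
    · rintro ⟨heE, hc⟩
      obtain ⟨a, rfl⟩ := Finset.card_eq_one.mp hc
      exact ⟨a, heE, rfl⟩
    · rintro ⟨a, haE, rfl⟩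
      exact ⟨haE, Finset.card_singleton a⟩
  have h1sum : ∑ e ∈ E.filter (fun e => e.card = 1), (Nat.factorial e.card : ℝ) * ∏ i ∈ e, x i
      = ∑ i ∈ univ.filter (fun i => ({i} : Finset (Fin n)) ∈ E), x i := by
    rw [hE1, Finset.sum_image (fun a _ b _ h => Finset.singleton_injective h)]
    simp [Nat.factorial]
  have hVS : ∑ i ∈ S, x i = ∑ i ∈ univ.filter (fun i => ({i} : Finset (Fin n)) ∈ E), x i := by
    refine Finset.sum_subset ?_ ?_
    · intro i hi
      simp only [hSdef, mem_filter] at hi ⊢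
      exact ⟨hi.1, hi.2.1⟩
    · intro i hiV hiS
      simp only [hSdef, mem_filter, not_and, not_not, mem_univ, true_implies] at hiS
      exact hiS (Finset.mem_filter.mp hiV).2
  have h2card : ∀ e ∈ E.filter (fun e => ¬ e.card = 1), e.card = 2 := by
    intro e he
    have := Finset.mem_filter.mp he
    rcases hE e this.1 with h | h
    · exact absurd h this.2
    · exact h
  have h2sum : ∑ e ∈ E.filter (fun e => ¬ e.card = 1), (Nat.factorial e.card : ℝ) * ∏ i ∈ e, x i
      = ∑ e ∈ E.filter (fun e => ¬ e.card = 1), 2 * ∏ i ∈ e, x i := by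
    refine Finset.sum_congr rfl (fun e he => ?_)
    rw [h2card e he]
    norm_num [Nat.factorial]
  set s := ∑ i ∈ S, x i with hs_def
  set Q := ∑ i, x i ^ 2 with hQ_def
  have hlag : lagPoly E x ≤ s + (1 - Q) := by
    unfold lagPoly
    rw [← Finset.sum_filter_add_sum_filter_not E (fun e => e.card = 1)
      (fun e => (Nat.factorial e.card : ℝ) * ∏ i ∈ e, x i), h1sum, ← hVS, h2sum,
      pair_sum_eq x _ h2card]
    have hle : ∑ p ∈ univ.offDiag.filter
          (fun p : Fin n × Fin n => ({p.1, p.2} : Finset (Fin n)) ∈ E.filter (fun e => ¬ e.card = 1)),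
          x p.1 * x p.2 ≤ ∑ p ∈ (univ : Finset (Fin n)).offDiag, x p.1 * x p.2 :=
      Finset.sum_le_sum_of_subset_of_nonneg (Finset.filter_subset _ _)
        (fun p _ _ => mul_nonneg (hnn _) (hnn _))
    have hoff := offDiag_sum x hsum
    linarith
  have hcs : s ^ 2 ≤ (S.card : ℝ) * Q := by
    calc s ^ 2 ≤ (S.card : ℝ) * ∑ i ∈ S, x i ^ 2 := sq_sum_le_card_mul_sum_sq
      _ ≤ (S.card : ℝ) * Q := by
        refine mul_le_mul_of_nonneg_left ?_ (by positivity)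
        exact Finset.sum_le_sum_of_subset_of_nonneg (Finset.subset_univ S)
          (fun i _ _ => sq_nonneg _)
  have hs0 : 0 ≤ s := Finset.sum_nonneg (fun i _ => hnn i)
  have hs1 : s ≤ 1 := by
    rw [← hsum]
    exact Finset.sum_le_sum_of_subset_of_nonneg (Finset.subset_univ S) (fun i _ _ => hnn i)
  have hQ0 : 0 ≤ Q := Finset.sum_nonneg (fun i _ => sq_nonneg _)
  have htR : (2 : ℝ) ≤ t := by exact_mod_cast ht
  have hmt : ((S.card : ℕ) : ℝ) ≤ t := by exact_mod_cast hSt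
  have htpos : (0 : ℝ) < t := by linarith
  by_cases hm2 : 2 ≤ S.card
  · have hm2R : (2 : ℝ) ≤ (S.card : ℝ) := by exact_mod_cast hm2
    have hmpos : (0 : ℝ) < (S.card : ℝ) := by linarith
    have h1t : 1 / (t : ℝ) ≤ 1 / (S.card : ℝ) := one_div_le_one_div_of_le hmpos hmt
    have hkey : (1 : ℝ) ≤ (S.card : ℝ) * (1 - s + Q) := by
      nlinarith [mul_nonneg (sub_nonneg.2 hs1)
        (by linarith : (0 : ℝ) ≤ (S.card : ℝ) - 1 - s)]
    have h' : 1 / (S.card : ℝ) ≤ 1 - s + Q := by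
      rw [div_le_iff₀ hmpos]
      linarith
    linarith
  · push_neg at hm2
    have hm1 : ((S.card : ℕ) : ℝ) ≤ 1 := by exact_mod_cast Nat.lt_succ_iff.mp hm2
    have hsQ : s ^ 2 ≤ Q := by nlinarith
    have h12 : 1 / (t : ℝ) ≤ 1 / 2 := by
      rw [div_le_div_iff₀ htpos (by norm_num)]
      linarith
    nlinarith [sq_nonneg (s - 1 / 2)]

/-- Shifting all the weight of `j` onto `i` (`j ≠ i`). -/
noncomputable def shift_s8 {n : ℕ} (x : Fin n → ℝ) (i j : Fin n) : Fin n → ℝ :=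
  fun k => if k = j then 0 else if k = i then x i + x j else x k

lemma shift_legal {n : ℕ} (x : Fin n → ℝ) (hx : isLegal x) (i j : Fin n) (hij : i ≠ j) :
    isLegal (shift_s8 x i j) := by
  obtain ⟨hsum, hnn⟩ := hx
  constructor
  · have he : ∀ k, shift_s8 x i j k
        = x k + (if k = i then x j else 0) - (if k = j then x j else 0) := by
      intro k
      by_cases h1 : k = j
      · subst h1
        simp [shift_s8, (Ne.symm hij)]
      · by_cases h2 : k = i
        · subst h2
          simp [shift_s8, hij, h1]
        · simp [shift_s8, h1, h2]
    simp only [he]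
    rw [Finset.sum_sub_distrib, Finset.sum_add_distrib]
    simp [Finset.sum_ite_eq', hsum]
  · intro k
    unfold shift_s8
    split_ifs
    · exact le_refl 0
    · have := hnn i; have := hnn j; linarith
    · exact hnn k

lemma shift_support {n : ℕ} (E : Finset (Finset (Fin n))) (x : Fin n → ℝ) (i j : Fin n)
    (hij : i ≠ j) (hiE : x i ≠ 0) :
    (univ.filter (fun k => ({k} : Finset (Fin n)) ∈ E ∧ shift_s8 x i j k ≠ 0))
      ⊆ (univ.filter (fun k => ({k} : Finset (Fin n)) ∈ E ∧ x k ≠ 0)).erase j := by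
  intro k hk
  simp only [mem_filter, mem_univ, true_and] at hk
  obtain ⟨hkE, hky⟩ := hk
  have hkj : k ≠ j := by
    rintro rfl
    simp [shift_s8] at hky
  rw [Finset.mem_erase]
  refine ⟨hkj, ?_⟩
  simp only [mem_filter, mem_univ, true_and]
  refine ⟨hkE, ?_⟩
  by_cases hki : k = i
  · subst hki; exact hiE
  · simpa [shift_s8, hkj, hki] using hky

lemma lag_upper {n t : ℕ} (ht : 2 ≤ t) (E : Finset (Finset (Fin n)))
    (hE : ∀ e ∈ E, e.card = 1 ∨ e.card = 2)
    (hmax : ∀ S, isCompleteSub E ({1, 2} : Finset ℕ) S → S.card ≤ t)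
    (x : Fin n → ℝ) (hx : isLegal x) : lagPoly E x ≤ 2 - 1 / t := by
  suffices H : ∀ m (x : Fin n → ℝ), isLegal x →
      (univ.filter (fun i => ({i} : Finset (Fin n)) ∈ E ∧ x i ≠ 0)).card ≤ m →
      lagPoly E x ≤ 2 - 1 / t from H _ x hx le_rfl
  intro m
  induction m with
  | zero =>
    intro x hx hcard
    refine caseA ht E hE hmax x hx ?_
    intro i hi
    rw [Finset.card_eq_zero.mp (Nat.le_zero.mp hcard)] at hi
    exact absurd hi (Finset.notMem_empty i)
  | succ m ih =>
    intro x hx hcard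
    by_cases hcl : ∀ i ∈ univ.filter (fun i => ({i} : Finset (Fin n)) ∈ E ∧ x i ≠ 0),
        ∀ j ∈ univ.filter (fun i => ({i} : Finset (Fin n)) ∈ E ∧ x i ≠ 0),
        i ≠ j → ({i, j} : Finset (Fin n)) ∈ E
    · exact caseA ht E hE hmax x hx hcl
    · push_neg at hcl
      obtain ⟨i, hi, j, hj, hij, hijE⟩ := hcl
      simp only [mem_filter, mem_univ, true_and] at hi hj
      have hxi : 0 < x i := (hx.2 i).lt_of_ne (Ne.symm hi.2)
      have hxj : 0 < x j := (hx.2 j).lt_of_ne (Ne.symm hj.2)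
      have hT : 0 < x i + x j := by linarith
      set y := shift_s8 x i j with hy_def
      set z := shift_s8 x j i with hz_def
      set p := x i / (x i + x j) with hp_def
      set q := x j / (x i + x j) with hq_def
      have hpq : p + q = 1 := by
        rw [hp_def, hq_def, ← add_div, div_self (ne_of_gt hT)]
      have hp0 : 0 ≤ p := by positivity
      have hq0 : 0 ≤ q := by positivity
      have hcomb : ∀ k, x k = p * y k + q * z k := by
        intro k
        by_cases h1 : k = j
        · subst h1
          have hyk : y k = 0 := by simp [hy_def, shift_s8]
          have hzk : z k = x k + x i := by simp [hz_def, shift_s8, Ne.symm hij]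
          rw [hyk, hzk, hq_def, mul_zero, zero_add, add_comm (x k) (x i),
            div_mul_cancel₀ _ (ne_of_gt hT)]
        · by_cases h2 : k = i
          · subst h2
            have hyk : y k = x k + x j := by simp [hy_def, shift_s8, hij]
            have hzk : z k = 0 := by simp [hz_def, shift_s8]
            rw [hyk, hzk, hp_def, mul_zero, add_zero, div_mul_cancel₀ _ (ne_of_gt hT)]
          · have hyk : y k = x k := by simp [hy_def, shift_s8, h1, h2]
            have hzk : z k = x k := by simp [hz_def, shift_s8, h1, h2]
            rw [hyk, hzk, ← add_mul, hpq, one_mul]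
      have hyz_eq : ∀ k, k ≠ i → k ≠ j → y k = z k := by
        intro k h1 h2
        simp [hy_def, hz_def, shift_s8, h1, h2]
      have hedge : ∀ e ∈ E, ∏ k ∈ e, x k = p * ∏ k ∈ e, y k + q * ∏ k ∈ e, z k := by
        intro e he
        rw [Finset.prod_congr rfl (fun k _ => hcomb k)]
        refine prod_comb e p q hpq y z ?_
        intro k hk l hl hk' hl'
        have hmem : ∀ w, w ∈ e → y w ≠ z w → w = i ∨ w = j := by
          intro w _ hw
          by_contra hcon
          push_neg at hcon
          exact hw (hyz_eq w hcon.1 hcon.2)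
        have hke := hmem k hk hk'
        have hle := hmem l hl hl'
        rcases hke with rfl | rfl <;> rcases hle with rfl | rfl
        · rfl
        · -- k = i, l = j both in e: contradiction
          exfalso
          have hsub : ({k, l} : Finset (Fin n)) ⊆ e := by
            rw [Finset.insert_subset_iff, Finset.singleton_subset_iff]
            exact ⟨hk, hl⟩
          have hcard2 : e.card ≤ ({k, l} : Finset (Fin n)).card := by
            rw [Finset.card_pair hij]
            rcases hE e he with h | h <;> omega
          rw [Finset.eq_of_subset_of_card_le hsub hcard2] at hijE
          exact hijE he
        · exfalso
          have hsub : ({l, k} : Finset (Fin n)) ⊆ e := by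
            rw [Finset.insert_subset_iff, Finset.singleton_subset_iff]
            exact ⟨hl, hk⟩
          have hcard2 : e.card ≤ ({l, k} : Finset (Fin n)).card := by
            rw [Finset.card_pair hij]
            rcases hE e he with h | h <;> omega
          rw [Finset.eq_of_subset_of_card_le hsub hcard2] at hijE
          exact hijE he
        · rfl
      have hlag : lagPoly E x = p * lagPoly E y + q * lagPoly E z := by
        unfold lagPoly
        rw [Finset.sum_congr rfl (fun e he => by
          rw [hedge e he, mul_add, ← mul_assoc, ← mul_assoc,
            mul_comm ((Nat.factorial e.card : ℝ)) p, mul_comm ((Nat.factorial e.card : ℝ)) q,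
            mul_assoc, mul_assoc])]
        rw [Finset.sum_add_distrib, ← Finset.mul_sum, ← Finset.mul_sum]
      have hyl : isLegal y := shift_legal x hx i j hij
      have hzl : isLegal z := shift_legal x hx j i (Ne.symm hij)
      have hjS : j ∈ univ.filter (fun i => ({i} : Finset (Fin n)) ∈ E ∧ x i ≠ 0) := by
        simp only [mem_filter, mem_univ, true_and]; exact hj
      have hiS : i ∈ univ.filter (fun i => ({i} : Finset (Fin n)) ∈ E ∧ x i ≠ 0) := by
        simp only [mem_filter, mem_univ, true_and]; exact hi
      have hycard : (univ.filter (fun k => ({k} : Finset (Fin n)) ∈ E ∧ y k ≠ 0)).card ≤ m := by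
        have h1 := Finset.card_le_card (shift_support E x i j hij hi.2)
        rw [← hy_def] at h1
        rw [Finset.card_erase_of_mem hjS] at h1
        omega
      have hzcard : (univ.filter (fun k => ({k} : Finset (Fin n)) ∈ E ∧ z k ≠ 0)).card ≤ m := by
        have h1 := Finset.card_le_card (shift_support E x j i (Ne.symm hij) hj.2)
        rw [← hz_def] at h1
        rw [Finset.card_erase_of_mem hiS] at h1
        omega
      have hyb := ih y hyl hycard
      have hzb := ih z hzl hzcard
      rw [hlag]
      calc p * lagPoly E y + q * lagPoly E z
          ≤ p * (2 - 1 / t) + q * (2 - 1 / t) := by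
            have h2t : (0:ℝ) ≤ 2 - 1 / t := by
              have : (0:ℝ) < t := by
                have : (2:ℝ) ≤ t := by exact_mod_cast ht
                linarith
              have : 1 / (t:ℝ) ≤ 1 := by
                rw [div_le_one this]
                have : (2:ℝ) ≤ t := by exact_mod_cast ht
                linarith
              linarith
            exact add_le_add (mul_le_mul_of_nonneg_left hyb hp0)
              (mul_le_mul_of_nonneg_left hzb hq0)
        _ = 2 - 1 / t := by rw [← add_mul, hpq, one_mul]

lemma two_mul_choose_two (t : ℕ) : 2 * Nat.choose t 2 = t * (t - 1) := by
  cases t with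
  | zero => rfl
  | succ m =>
    rw [Nat.choose_two_right, Nat.succ_sub_one, mul_comm (m + 1) m]
    exact Nat.mul_div_cancel' (Nat.even_mul_succ_self m).two_dvd

lemma lag_lower {n t : ℕ} (ht : 2 ≤ t) (E : Finset (Finset (Fin n)))
    (S : Finset (Fin n)) (hScard : S.card = t)
    (hS : isCompleteSub E ({1, 2} : Finset ℕ) S) :
    ∃ x : Fin n → ℝ, isLegal x ∧ 2 - 1 / (t : ℝ) ≤ lagPoly E x := by
  have ht0 : (0 : ℝ) < t := by
    have : (2 : ℝ) ≤ t := by exact_mod_cast ht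
    linarith
  refine ⟨fun i => if i ∈ S then (t : ℝ)⁻¹ else 0, ⟨?_, ?_⟩, ?_⟩
  · rw [Finset.sum_ite_mem, Finset.univ_inter, Finset.sum_const, hScard, nsmul_eq_mul,
      mul_inv_cancel₀ (ne_of_gt ht0)]
  · intro i
    dsimp only
    split_ifs
    · positivity
    · exact le_refl 0
  · set x : Fin n → ℝ := fun i => if i ∈ S then (t : ℝ)⁻¹ else 0 with hx_def
    set F := S.image (fun i => ({i} : Finset (Fin n))) ∪ S.powersetCard 2 with hF_def
    have hFE : F ⊆ E := by
      intro e he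
      rw [hF_def, Finset.mem_union] at he
      rcases he with he | he
      · obtain ⟨a, haS, rfl⟩ := Finset.mem_image.mp he
        exact hS _ (Finset.singleton_subset_iff.mpr haS) (by simp)
      · rw [Finset.mem_powersetCard] at he
        exact hS _ he.1 (by simp [he.2])
    have hFsum : ∑ e ∈ F, (Nat.factorial e.card : ℝ) * ∏ i ∈ e, x i = 2 - 1 / t := by
      have hdisj : Disjoint (S.image (fun i => ({i} : Finset (Fin n)))) (S.powersetCard 2) := by
        rw [Finset.disjoint_left]
        intro e he1 he2
        obtain ⟨a, _, rfl⟩ := Finset.mem_image.mp he1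
        rw [Finset.mem_powersetCard] at he2
        simp at he2
      rw [hF_def, Finset.sum_union hdisj,
        Finset.sum_image (fun a _ b _ h => Finset.singleton_injective h)]
      have h1 : ∑ a ∈ S, (Nat.factorial ({a} : Finset (Fin n)).card : ℝ) * ∏ i ∈ ({a} : Finset (Fin n)), x i = 1 := by
        have : ∀ a ∈ S, (Nat.factorial ({a} : Finset (Fin n)).card : ℝ) * ∏ i ∈ ({a} : Finset (Fin n)), x i = (t : ℝ)⁻¹ := by
          intro a haS
          simp [hx_def, haS, Nat.factorial]
        rw [Finset.sum_congr rfl this, Finset.sum_const, hScard, nsmul_eq_mul,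
          mul_inv_cancel₀ (ne_of_gt ht0)]
      have h2 : ∑ e ∈ S.powersetCard 2, (Nat.factorial e.card : ℝ) * ∏ i ∈ e, x i
          = (t.choose 2 : ℝ) * (2 * ((t : ℝ)⁻¹) ^ 2) := by
        have : ∀ e ∈ S.powersetCard 2, (Nat.factorial e.card : ℝ) * ∏ i ∈ e, x i
            = 2 * ((t : ℝ)⁻¹) ^ 2 := by
          intro e he
          rw [Finset.mem_powersetCard] at he
          have hprod : ∏ i ∈ e, x i = ((t : ℝ)⁻¹) ^ 2 := by
            have hxe : ∀ i ∈ e, x i = (t : ℝ)⁻¹ := fun i hi => by simp [hx_def, he.1 hi]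
            rw [Finset.prod_congr rfl hxe, Finset.prod_const, he.2]
          rw [hprod, he.2]
          norm_num [Nat.factorial]
        rw [Finset.sum_congr rfl this, Finset.sum_const, Finset.card_powersetCard, hScard,
          nsmul_eq_mul]
      rw [h1, h2]
      have hch : ((t.choose 2 : ℕ) : ℝ) * 2 = (t : ℝ) * ((t : ℝ) - 1) := by
        have h := two_mul_choose_two t
        have : ((2 * Nat.choose t 2 : ℕ) : ℝ) = ((t * (t - 1) : ℕ) : ℝ) := by exact_mod_cast h
        push_cast [Nat.cast_sub (by omega : 1 ≤ t)] at this
        linarith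
      field_simp
      nlinarith [hch]
    calc 2 - 1 / (t : ℝ) = ∑ e ∈ F, (Nat.factorial e.card : ℝ) * ∏ i ∈ e, x i := hFsum.symm
      _ ≤ lagPoly E x := by
        unfold lagPoly
        refine Finset.sum_le_sum_of_subset_of_nonneg hFE (fun e _ _ => ?_)
        refine mul_nonneg (by positivity) (Finset.prod_nonneg (fun i _ => ?_))
        simp only [hx_def]
        split_ifs
        · positivity
        · exact le_refl 0

lemma lag_eq {n t : ℕ} (ht : 2 ≤ t) (E : Finset (Finset (Fin n)))
    (hE : ∀ e ∈ E, e.card = 1 ∨ e.card = 2)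
    (hmax : maxCompleteOrder E ({1, 2} : Finset ℕ) t) :
    lagrangian E = 2 - 1 / (t : ℝ) := by
  obtain ⟨⟨S, hScard, hS⟩, hub⟩ := hmax
  obtain ⟨x, hxl, hxge⟩ := lag_lower ht E S hScard hS
  have hgreatest : IsGreatest {v : ℝ | ∃ x : Fin n → ℝ, isLegal x ∧ lagPoly E x = v}
      (2 - 1 / (t : ℝ)) := by
    constructor
    · exact ⟨x, hxl, le_antisymm (lag_upper ht E hE hub x hxl) hxge⟩
    · rintro v ⟨y, hy, rfl⟩
      exact lag_upper ht E hE hub y hy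
  exact hgreatest.csSup_eq


/-- Motzkin–Straus type theorem for {1,2}-graphs (Peng et al., Theorem 5 of the paper). -/
theorem lagrangian_one_two_graph (t n : ℕ) (ht : 2 ≤ t)
    (E : Finset (Finset (Fin n)))
    (hR : E.image Finset.card = ({1, 2} : Finset ℕ))
    (hmax : maxCompleteOrder E ({1, 2} : Finset ℕ) t) :
    lagrangian E = lagrangian (completeEdges t ({1, 2} : Finset ℕ)) ∧
    lagrangian (completeEdges t ({1, 2} : Finset ℕ)) = 2 - 1 / (t : ℝ) := by
  have hE : ∀ e ∈ E, e.card = 1 ∨ e.card = 2 := by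
    intro e he
    have : e.card ∈ E.image Finset.card := Finset.mem_image_of_mem _ he
    rw [hR] at this
    simpa using this
  have h1 : lagrangian E = 2 - 1 / (t : ℝ) := lag_eq ht E hE hmax
  have hE' : ∀ e ∈ completeEdges t ({1, 2} : Finset ℕ), e.card = 1 ∨ e.card = 2 := by
    intro e he
    rw [completeEdges, Finset.mem_filter] at he
    simpa using he.2
  have hmax' : maxCompleteOrder (completeEdges t ({1, 2} : Finset ℕ)) ({1, 2} : Finset ℕ) t := by
    constructor
    · refine ⟨(univ : Finset (Fin t)), by simp, ?_⟩
      intro e _ hce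
      rw [completeEdges, Finset.mem_filter]
      exact ⟨Finset.mem_univ e, hce⟩
    · intro S _
      calc S.card ≤ (univ : Finset (Fin t)).card := Finset.card_le_univ S
        _ = t := by simp
  have h2 : lagrangian (completeEdges t ({1, 2} : Finset ℕ)) = 2 - 1 / (t : ℝ) :=
    lag_eq ht _ hE' hmax'
  exact ⟨h1.trans h2.symm, h2⟩
end

section
/- (Frankl–Rödl) Let G = (V, E) be an r-uniform hypergraph on vertex set [n] and let x = (x_1,…,x_n) be an optimal legal weighting for G with exactly k positive weights x_1 ≥ … ≥ x_k > 0 = x_{k+1} = … = x_n, where k is minimal among all optimal legal weightings. Then for every pair {i,j} ⊆ [k] with i ≠ j: (a) λ(E_i^r, x) = λ(E_j^r, x) = r·λ(G), and (b) there is an edge of E containing both i and j. -/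
open Finset

/-- The (r-1)-neighborhood E_i^r of a vertex i. -/
def nbr {n : ℕ} (E : Finset (Finset (Fin n))) (r : ℕ) (i : Fin n) : Finset (Finset (Fin n)) :=
  Finset.univ.filter (fun A : Finset (Fin n) => A.card = r - 1 ∧ A ∪ {i} ∈ E)

lemma fr_prod_update {n : ℕ} (x : Fin n → ℝ) (i j : Fin n) (hij : i ≠ j) (s : ℝ)
    (e : Finset (Fin n)) :
    (∏ v ∈ e, Function.update (Function.update x i (x i + s)) j (x j - s) v)
      = (∏ v ∈ e, x v)
        + s * ((if i ∈ e then ∏ v ∈ e.erase i, x v else 0)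
              - (if j ∈ e then ∏ v ∈ e.erase j, x v else 0))
        - s^2 * (if i ∈ e ∧ j ∈ e then ∏ v ∈ (e.erase i).erase j, x v else 0) := by
  set y := Function.update (Function.update x i (x i + s)) j (x j - s) with hy
  have hyi : y i = x i + s := by
    simp [hy, Function.update_of_ne hij, Function.update_self]
  have hyj : y j = x j - s := by simp [hy]
  have hyv : ∀ v, v ≠ i → v ≠ j → y v = x v := fun v h1 h2 => by
    simp [hy, Function.update_of_ne h2, Function.update_of_ne h1]
  have hpy : ∀ t : Finset (Fin n), i ∉ t → j ∉ t → ∏ v ∈ t, y v = ∏ v ∈ t, x v :=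
    fun t hit hjt => Finset.prod_congr rfl fun v hv =>
      hyv v (fun h => hit (h ▸ hv)) (fun h => hjt (h ▸ hv))
  by_cases hi : i ∈ e <;> by_cases hjm : j ∈ e
  · have hji : j ∈ e.erase i := Finset.mem_erase.mpr ⟨hij.symm, hjm⟩
    have hij' : i ∈ e.erase j := Finset.mem_erase.mpr ⟨hij, hi⟩
    have hprod : ∏ v ∈ (e.erase i).erase j, y v = ∏ v ∈ (e.erase i).erase j, x v :=
      hpy _ (fun h => (Finset.mem_of_mem_erase h |> Finset.notMem_erase i e) )
        (Finset.notMem_erase j _)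
    have hxe : ∏ v ∈ e, x v = x i * (x j * ∏ v ∈ (e.erase i).erase j, x v) := by
      rw [Finset.mul_prod_erase (e.erase i) x hji, Finset.mul_prod_erase e x hi]
    have hxi : ∏ v ∈ e.erase i, x v = x j * ∏ v ∈ (e.erase i).erase j, x v :=
      (Finset.mul_prod_erase (e.erase i) x hji).symm
    have hxj : ∏ v ∈ e.erase j, x v = x i * ∏ v ∈ (e.erase i).erase j, x v := by
      rw [← Finset.mul_prod_erase (e.erase j) x hij', Finset.erase_right_comm]
    rw [← Finset.mul_prod_erase e y hi, ← Finset.mul_prod_erase (e.erase i) y hji, hprod,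
      hyi, hyj]
    simp only [hi, hjm, if_true, and_self, if_pos]
    rw [hxe, hxi, hxj]
    ring
  · have hprod : ∏ v ∈ e.erase i, y v = ∏ v ∈ e.erase i, x v :=
      hpy _ (Finset.notMem_erase i e) (fun h => hjm (Finset.mem_of_mem_erase h))
    rw [← Finset.mul_prod_erase e y hi, hprod, hyi,
      ← Finset.mul_prod_erase e x hi]
    simp only [hi, hjm, if_true, if_neg, and_false, if_false, not_false_iff]
    ring
  · have hprod : ∏ v ∈ e.erase j, y v = ∏ v ∈ e.erase j, x v :=
      hpy _ (fun h => hi (Finset.mem_of_mem_erase h)) (Finset.notMem_erase j e)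
    rw [← Finset.mul_prod_erase e y hjm, hprod, hyj,
      ← Finset.mul_prod_erase e x hjm]
    simp only [hi, hjm, if_true, if_neg, false_and, if_false, not_false_iff]
    ring
  · have hprod : ∏ v ∈ e, y v = ∏ v ∈ e, x v := hpy _ hi hjm
    rw [hprod]
    simp only [hi, hjm, if_neg, false_and, if_false, not_false_iff]
    ring

lemma fr_lag_shift {n : ℕ} (E : Finset (Finset (Fin n))) (x : Fin n → ℝ) (i j : Fin n)
    (hij : i ≠ j) (s : ℝ) :
    lagPolyU E (Function.update (Function.update x i (x i + s)) j (x j - s))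
      = lagPolyU E x
        + s * ((∑ e ∈ E.filter (fun e => i ∈ e), ∏ v ∈ e.erase i, x v)
              - ∑ e ∈ E.filter (fun e => j ∈ e), ∏ v ∈ e.erase j, x v)
        - s^2 * ∑ e ∈ E.filter (fun e => i ∈ e ∧ j ∈ e), ∏ v ∈ (e.erase i).erase j, x v := by
  unfold lagPolyU
  rw [Finset.sum_congr rfl (fun e _ => fr_prod_update x i j hij s e)]
  rw [Finset.sum_sub_distrib, Finset.sum_add_distrib, ← Finset.mul_sum, ← Finset.mul_sum,
    Finset.sum_sub_distrib, ← Finset.sum_filter, ← Finset.sum_filter, ← Finset.sum_filter]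

lemma fr_nbr_sum {n r : ℕ} (E : Finset (Finset (Fin n))) (hE : ∀ e ∈ E, e.card = r)
    (x : Fin n → ℝ) (i : Fin n) :
    lagPolyU (nbr E r i) x = ∑ e ∈ E.filter (fun e => i ∈ e), ∏ v ∈ e.erase i, x v := by
  have key : ∀ A : Finset (Fin n), A.card = r - 1 → A ∪ {i} ∈ E → i ∉ A := by
    intro A h1 h2 h
    have he : A ∪ {i} = A := Finset.union_eq_left.mpr (Finset.singleton_subset_iff.mpr h)
    rw [he] at h2
    have h3 : A.card = r := hE _ h2
    have h4 : 0 < r := h3 ▸ Finset.card_pos.mpr ⟨i, h⟩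
    omega
  have hins : ∀ A : Finset (Fin n), A ∪ {i} = insert i A := fun A => by
    rw [Finset.insert_eq, Finset.union_comm]
  unfold lagPolyU nbr
  refine Finset.sum_bij' (fun A _ => insert i A) (fun e _ => e.erase i) ?_ ?_ ?_ ?_ ?_
  · intro A hA
    simp only [Finset.mem_filter, Finset.mem_univ, true_and] at hA
    show insert i A ∈ E.filter (fun e => i ∈ e)
    rw [Finset.mem_filter]
    exact ⟨(hins A) ▸ hA.2, Finset.mem_insert_self i A⟩
  · intro e he
    rw [Finset.mem_filter] at he
    simp only [Finset.mem_filter, Finset.mem_univ, true_and]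
    refine ⟨by rw [Finset.card_erase_of_mem he.2, hE e he.1], ?_⟩
    rw [hins, Finset.insert_erase he.2]
    exact he.1
  · intro A hA
    simp only [Finset.mem_filter, Finset.mem_univ, true_and] at hA
    show (insert i A).erase i = A
    exact Finset.erase_insert (key A hA.1 hA.2)
  · intro e he
    rw [Finset.mem_filter] at he
    show insert i (e.erase i) = e
    exact Finset.insert_erase he.2
  · intro A hA
    simp only [Finset.mem_filter, Finset.mem_univ, true_and] at hA
    show _ = ∏ v ∈ (insert i A).erase i, x v
    rw [Finset.erase_insert (key A hA.1 hA.2)]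

lemma fr_euler {n r : ℕ} (E : Finset (Finset (Fin n))) (hE : ∀ e ∈ E, e.card = r)
    (x : Fin n → ℝ) :
    ∑ v : Fin n, x v * ∑ e ∈ E.filter (fun e => v ∈ e), ∏ w ∈ e.erase v, x w
      = (r : ℝ) * lagPolyU E x := by
  unfold lagPolyU
  have h1 : ∀ v : Fin n, x v * ∑ e ∈ E.filter (fun e => v ∈ e), ∏ w ∈ e.erase v, x w
      = ∑ e ∈ E, if v ∈ e then ∏ w ∈ e, x w else 0 := by
    intro v
    rw [Finset.mul_sum,
      Finset.sum_congr rfl (fun e he => Finset.mul_prod_erase e x (Finset.mem_filter.mp he).2),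
      Finset.sum_filter]
  rw [Finset.sum_congr rfl (fun v _ => h1 v), Finset.sum_comm, Finset.mul_sum]
  refine Finset.sum_congr rfl fun e he => ?_
  rw [Finset.sum_ite_mem, Finset.univ_inter, Finset.sum_const, hE e he, nsmul_eq_mul]

lemma fr_le_lag {n : ℕ} (E : Finset (Finset (Fin n))) (y : Fin n → ℝ) (hy : isLegal y) :
    lagPolyU E y ≤ lagrangianU E := by
  apply le_csSup
  · refine ⟨(E.card : ℝ), ?_⟩
    rintro v ⟨z, hz, rfl⟩
    unfold lagPolyU
    calc ∑ e ∈ E, ∏ i ∈ e, z i ≤ ∑ e ∈ E, 1 := by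
          refine Finset.sum_le_sum fun e _ => Finset.prod_le_one (fun i _ => hz.2 i) fun i _ => ?_
          rw [← hz.1]
          exact Finset.single_le_sum (fun w _ => hz.2 w) (Finset.mem_univ i)
      _ = E.card := by simp
  · exact ⟨y, hy, rfl⟩

lemma fr_legal_shift {n : ℕ} (x : Fin n → ℝ) (hx : isLegal x) (i j : Fin n) (hij : i ≠ j)
    (s : ℝ) (h0 : 0 ≤ s) (h1 : s ≤ x j) :
    isLegal (Function.update (Function.update x i (x i + s)) j (x j - s)) := by
  set y := Function.update (Function.update x i (x i + s)) j (x j - s) with hy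
  have hyi : y i = x i + s := by
    simp [hy, Function.update_of_ne hij, Function.update_self]
  have hyj : y j = x j - s := by simp [hy]
  have hyv : ∀ v, v ≠ i → v ≠ j → y v = x v := fun v hv1 hv2 => by
    simp [hy, Function.update_of_ne hv2, Function.update_of_ne hv1]
  constructor
  · have hsum : ∀ f : Fin n → ℝ,
        ∑ v, f v = f j + (f i + ∑ v ∈ (Finset.univ.erase j).erase i, f v) := by
      intro f
      rw [← Finset.add_sum_erase _ f (Finset.mem_univ j),
        ← Finset.add_sum_erase _ f (Finset.mem_erase.mpr ⟨hij, Finset.mem_univ i⟩)]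
    have hrest : ∑ v ∈ (Finset.univ.erase j).erase i, y v
        = ∑ v ∈ (Finset.univ.erase j).erase i, x v :=
      Finset.sum_congr rfl fun v hv =>
        hyv v (Finset.ne_of_mem_erase hv) (Finset.ne_of_mem_erase (Finset.mem_of_mem_erase hv))
    have h2 := hsum x
    rw [hsum y, hrest, hyi, hyj]
    rw [hx.1] at h2
    linarith
  · intro v
    rcases eq_or_ne v j with rfl | hvj
    · rw [hyj]; linarith
    rcases eq_or_ne v i with rfl | hvi
    · rw [hyi]; linarith [hx.2 v]
    · rw [hyv v hvi hvj]; exact hx.2 v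

lemma fr_card_lt {n k : ℕ} (hk : k ≤ n) :
    {v : Fin n | (v : ℕ) < k}.ncard = k := by
  have h : {v : Fin n | (v : ℕ) < k}
      = ↑((Finset.range k).attachFin (fun m hm => lt_of_lt_of_le (Finset.mem_range.mp hm) hk)) := by
    ext v
    simp [Finset.mem_attachFin]
  rw [h, Set.ncard_coe_finset, Finset.card_attachFin, Finset.card_range]

/-- Frankl–Rödl lemma: at an optimal legal weighting with minimal support of size k,
λ(E_i^r, x) = r·λ(G) for every i in the support, and each pair of support vertices lies
in a common edge. -/
theorem frankl_rodl (r n k : ℕ) (E : Finset (Finset (Fin n)))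
    (hE : ∀ e ∈ E, e.card = r)
    (x : Fin n → ℝ) (hx : isLegal x)
    (hopt : lagPolyU E x = lagrangianU E)
    (hmono : ∀ a b : Fin n, a ≤ b → x b ≤ x a)
    (hk : k ≤ n)
    (hpos : ∀ i : Fin n, (i : ℕ) < k → 0 < x i)
    (hzero : ∀ i : Fin n, k ≤ (i : ℕ) → x i = 0)
    (hmin : ∀ y : Fin n → ℝ, isLegal y → lagPolyU E y = lagrangianU E →
      k ≤ {i : Fin n | 0 < y i}.ncard) :
    (∀ i : Fin n, (i : ℕ) < k → lagPolyU (nbr E r i) x = (r : ℝ) * lagrangianU E) ∧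
    (∀ i j : Fin n, (i : ℕ) < k → (j : ℕ) < k → i ≠ j → ∃ e ∈ E, i ∈ e ∧ j ∈ e) := by
  classical
  set d : Fin n → ℝ := fun v => ∑ e ∈ E.filter (fun e => v ∈ e), ∏ w ∈ e.erase v, x w with hdd
  -- key inequality: for j in the support, d i ≤ d j
  have key : ∀ i j : Fin n, i ≠ j → (j : ℕ) < k → d i ≤ d j := by
    intro i j hij hjk
    by_contra hlt
    push_neg at hlt
    set D : ℝ := ∑ e ∈ E.filter (fun e => i ∈ e ∧ j ∈ e), ∏ v ∈ (e.erase i).erase j, x v with hD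
    have hD0 : 0 ≤ D :=
      Finset.sum_nonneg fun e _ => Finset.prod_nonneg fun v _ => hx.2 v
    set s : ℝ := min (x j) ((d i - d j) / (2 * (D + 1))) with hs
    have hs0 : 0 < s := lt_min (hpos j hjk) (div_pos (by linarith) (by linarith))
    have hsxj : s ≤ x j := min_le_left _ _
    have hs2 : s ≤ (d i - d j) / (2 * (D + 1)) := min_le_right _ _
    have hylegal := fr_legal_shift x hx i j hij s hs0.le hsxj
    have hle := fr_le_lag E _ hylegal
    rw [fr_lag_shift E x i j hij s, hopt] at hle
    have e1 : (∑ e ∈ E.filter (fun e => i ∈ e), ∏ v ∈ e.erase i, x v) = d i := rfl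
    have e2 : (∑ e ∈ E.filter (fun e => j ∈ e), ∏ v ∈ e.erase j, x v) = d j := rfl
    rw [e1, e2, ← hD] at hle
    have h2s : s * (2 * (D + 1)) ≤ d i - d j := (le_div_iff₀ (by linarith)).mp hs2
    nlinarith [mul_pos hs0 hs0, mul_nonneg hs0.le hD0]
  have dconst : ∀ i j : Fin n, (i : ℕ) < k → (j : ℕ) < k → d i = d j := by
    intro i j hi hj
    rcases eq_or_ne i j with rfl | hij
    · rfl
    · exact le_antisymm (key i j hij hj) (key j i hij.symm hi)
  have heuler : ∑ v, x v * d v = (r : ℝ) * lagrangianU E := by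
    rw [← hopt]; exact fr_euler E hE x
  have ha : ∀ i : Fin n, (i : ℕ) < k → d i = (r : ℝ) * lagrangianU E := by
    intro i hi
    have hcongr : ∑ v, x v * d v = ∑ v, x v * d i := by
      refine Finset.sum_congr rfl fun v _ => ?_
      by_cases hv : (v : ℕ) < k
      · rw [dconst v i hv hi]
      · rw [hzero v (le_of_not_gt hv)]; ring
    rw [hcongr, ← Finset.sum_mul, hx.1, one_mul] at heuler
    exact heuler
  refine ⟨fun i hi => by rw [fr_nbr_sum E hE x i]; exact ha i hi, ?_⟩
  intro i j hi hj hij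
  by_contra hne
  push_neg at hne
  have hfe : E.filter (fun e => i ∈ e ∧ j ∈ e) = ∅ := by
    rw [Finset.filter_eq_empty_iff]
    intro e he
    rintro ⟨h1, h2⟩
    exact (hne e he h1) h2
  set y := Function.update (Function.update x i (x i + x j)) j (x j - x j) with hy
  have hylegal := fr_legal_shift x hx i j hij (x j) (hpos j hj).le le_rfl
  have hval := fr_lag_shift E x i j hij (x j)
  have e1 : (∑ e ∈ E.filter (fun e => i ∈ e), ∏ v ∈ e.erase i, x v) = d i := rfl
  have e2 : (∑ e ∈ E.filter (fun e => j ∈ e), ∏ v ∈ e.erase j, x v) = d j := rfl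
  rw [e1, e2, hfe, Finset.sum_empty, dconst i j hi hj, hopt] at hval
  have hylag : lagPolyU E y = lagrangianU E := by
    rw [hy, hval]; ring
  have hm := hmin y hylegal hylag
  have hyj : y j = 0 := by simp [hy]
  have hyi : y i = x i + x j := by
    simp [hy, Function.update_of_ne hij, Function.update_self]
  have hyv : ∀ v, v ≠ i → v ≠ j → y v = x v := fun v h1 h2 => by
    simp [hy, Function.update_of_ne h2, Function.update_of_ne h1]
  have hsupp : {v : Fin n | 0 < y v} = {v : Fin n | (v : ℕ) < k} \ {j} := by
    ext v
    simp only [Set.mem_setOf_eq, Set.mem_diff, Set.mem_singleton_iff]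
    rcases eq_or_ne v j with rfl | hvj
    · simp [hyj]
    rcases eq_or_ne v i with rfl | hvi
    · rw [hyi]
      constructor
      · intro _; exact ⟨hi, hij⟩
      · intro _; have := hpos v hi; have := (hpos j hj); linarith
    · rw [hyv v hvi hvj]
      constructor
      · intro h
        refine ⟨?_, hvj⟩
        by_contra hvk
        rw [hzero v (le_of_not_gt hvk)] at h
        exact lt_irrefl 0 h
      · intro h; exact hpos v h.1
  have hjmem : j ∈ {v : Fin n | (v : ℕ) < k} := hj
  have hncard : ({v : Fin n | (v : ℕ) < k} \ {j}).ncard = k - 1 := by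
    rw [Set.ncard_diff_singleton_of_mem hjmem, fr_card_lt hk]
  rw [hsupp, hncard] at hm
  omega
end

section
/- Let H be a hypergraph on vertex set [n] and let x = (x_1,…,x_n) be an optimal legal weighting for H with x_1 ≥ x_2 ≥ … ≥ x_k > x_{k+1} = … = x_n = 0, where the number k of positive weights is minimal among all optimal legal weightings. Then ∂λ'(H,x)/∂x_1 = ∂λ'(H,x)/∂x_2 = … = ∂λ'(H,x)/∂x_k, and for every pair {i,j} ⊆ [k] with i ≠ j there is an edge of H containing both i and j. -/
open Finset

/- ===== auxiliary lemmas ===== -/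

lemma lagPoly_diff {n : ℕ} (E : Finset (Finset (Fin n))) : Differentiable ℝ (lagPoly E) := by
  unfold lagPoly
  apply Differentiable.fun_sum
  intro e _
  apply Differentiable.const_mul
  intro x
  exact (hasFDerivAt_finset_prod).differentiableAt

lemma lagPoly_le_bound {n : ℕ} (E : Finset (Finset (Fin n))) (y : Fin n → ℝ)
    (hy : isLegal y) : lagPoly E y ≤ ∑ e ∈ E, (Nat.factorial e.card : ℝ) := by
  apply Finset.sum_le_sum
  intro e _
  have h1 : ∏ i ∈ e, y i ≤ 1 := by
    apply Finset.prod_le_one (fun i _ => hy.2 i)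
    intro i _
    calc y i ≤ ∑ v, y v := Finset.single_le_sum (fun v _ => hy.2 v) (mem_univ i)
    _ = 1 := hy.1
  nlinarith [(Nat.cast_pos (α := ℝ)).2 (Nat.factorial_pos e.card)]

lemma le_lagrangian {n : ℕ} (E : Finset (Finset (Fin n))) (y : Fin n → ℝ)
    (hy : isLegal y) : lagPoly E y ≤ lagrangian E := by
  apply le_csSup
  · exact ⟨∑ e ∈ E, (Nat.factorial e.card : ℝ), fun v ⟨z, hz, hv⟩ => hv ▸ lagPoly_le_bound E z hz⟩
  · exact ⟨y, hy, rfl⟩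

lemma legal_move {n : ℕ} (x : Fin n → ℝ) (hx : isLegal x) (i j : Fin n) (hij : i ≠ j)
    (t : ℝ) (h0 : 0 ≤ t) (htj : t ≤ x j) :
    isLegal (x + t • (Pi.single i 1 - Pi.single j 1)) := by
  set d : Fin n → ℝ := Pi.single i 1 - Pi.single j 1 with hd
  have hdv : ∀ v, d v = (if v = i then 1 else 0) - (if v = j then 1 else 0) := by
    intro v
    simp [hd, Pi.single_apply]
  constructor
  · have h1 : ∑ v, (x v + t * d v) = (∑ v, x v) + t * ∑ v, d v := by
      rw [Finset.sum_add_distrib, Finset.mul_sum]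
    have hsd : ∑ v, d v = 0 := by
      simp only [hdv]
      rw [Finset.sum_sub_distrib]
      simp
    simp only [Pi.add_apply, Pi.smul_apply, smul_eq_mul]
    rw [h1, hsd, hx.1]; ring
  · intro v
    simp only [Pi.add_apply, Pi.smul_apply, smul_eq_mul, hdv v]
    rcases eq_or_ne v i with rfl | hvi
    · simp [hij]
      have := hx.2 v
      linarith
    · rcases eq_or_ne v j with rfl | hvj
      · simp [hvi]
        linarith
      · simp [hvi, hvj]
        exact hx.2 v

lemma exchange_le {n : ℕ} (E : Finset (Finset (Fin n))) (x : Fin n → ℝ)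
    (hx : isLegal x) (hopt : lagPoly E x = lagrangian E) (i j : Fin n) (hxj : 0 < x j) :
    fderiv ℝ (lagPoly E) x (Pi.single i 1) ≤ fderiv ℝ (lagPoly E) x (Pi.single j 1) := by
  by_contra hlt
  push_neg at hlt
  have hij : i ≠ j := by rintro rfl; exact lt_irrefl _ hlt
  set d : Fin n → ℝ := Pi.single i 1 - Pi.single j 1 with hd
  set φ : ℝ → ℝ := fun t => lagPoly E (x + t • d) with hφdef
  have hinner : HasDerivAt (fun t : ℝ => x + t • d) d 0 := by
    have : HasDerivAt (fun t : ℝ => t • d) ((1:ℝ) • d) 0 := (hasDerivAt_id 0).smul_const d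
    simpa using this.const_add x
  set B : ℝ := fderiv ℝ (lagPoly E) x d with hB
  have hφ : HasDerivAt φ B 0 := by
    have h0 : x + (0:ℝ) • d = x := by simp
    have := ((lagPoly_diff E (x + (0:ℝ) • d)).hasFDerivAt).comp_hasDerivAt 0 hinner
    rw [h0] at this
    exact this
  have hBpos : 0 < B := by
    have : B = fderiv ℝ (lagPoly E) x (Pi.single i 1) - fderiv ℝ (lagPoly E) x (Pi.single j 1) := by
      rw [hB, hd, map_sub]
    rw [this]; linarith
  have hslope : ∀ᶠ t in nhdsWithin 0 (Set.Ioi 0), 0 < slope φ 0 t := by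
    have h1 : ∀ᶠ t in nhdsWithin 0 {(0:ℝ)}ᶜ, 0 < slope φ 0 t :=
      (hasDerivAt_iff_tendsto_slope.mp hφ).eventually_const_lt hBpos
    exact h1.filter_mono (nhdsWithin_mono 0 (fun t ht => ne_of_gt ht))
  have h3 : Set.Ioo 0 (x j) ∈ nhdsWithin (0:ℝ) (Set.Ioi 0) :=
    Ioo_mem_nhdsGT_of_mem ⟨le_refl 0, hxj⟩
  obtain ⟨t, hts, ht0, htj⟩ := (hslope.and (Filter.eventually_of_mem h3 (fun t ht => ht))).exists
  have hφt : φ 0 < φ t := by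
    have hslope' : slope φ 0 t = (φ t - φ 0) / t := by simp [slope_def_field]
    rw [hslope'] at hts
    have := mul_pos hts ht0
    rw [div_mul_cancel₀ _ (ne_of_gt ht0)] at this
    linarith
  have hy : isLegal (x + t • d) := legal_move x hx i j hij t (le_of_lt ht0) (le_of_lt htj)
  have h4 := le_lagrangian E (x + t • d) hy
  rw [← hopt] at h4
  have : φ t ≤ φ 0 := by simpa [hφdef] using h4
  linarith

/-- When no edge contains both i and j, moving weight from j to i is affine. -/
lemma lagPoly_move {n : ℕ} (E : Finset (Finset (Fin n))) (x : Fin n → ℝ) (i j : Fin n)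
    (hij : i ≠ j) (hcom : ∀ e ∈ E, ¬(i ∈ e ∧ j ∈ e)) (t : ℝ) :
    lagPoly E (x + t • (Pi.single i 1 - Pi.single j 1)) =
      lagPoly E x + t * ∑ e ∈ E, (Nat.factorial e.card : ℝ) *
        (if i ∈ e then ∏ v ∈ e.erase i, x v
         else if j ∈ e then -(∏ v ∈ e.erase j, x v) else 0) := by
  set d : Fin n → ℝ := Pi.single i 1 - Pi.single j 1 with hd
  have hyv : ∀ v, v ≠ i → v ≠ j → (x + t • d) v = x v := by
    intro v hvi hvj
    simp [hd, Pi.single_apply, hvi, hvj]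
  have hyi : (x + t • d) i = x i + t := by
    simp [hd, Pi.single_apply, hij]
  have hyj : (x + t • d) j = x j - t := by
    simp [hd, Pi.single_apply, hij.symm]
    ring
  unfold lagPoly
  rw [Finset.mul_sum, ← Finset.sum_add_distrib]
  apply Finset.sum_congr rfl
  intro e he
  by_cases hiE : i ∈ e
  · have hjE : j ∉ e := fun h => hcom e he ⟨hiE, h⟩
    have hP : ∏ v ∈ e.erase i, (x + t • d) v = ∏ v ∈ e.erase i, x v := by
      apply Finset.prod_congr rfl
      intro v hv
      exact hyv v (Finset.ne_of_mem_erase hv) (fun h => hjE (h ▸ Finset.mem_of_mem_erase hv))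
    rw [← Finset.mul_prod_erase _ _ hiE, ← Finset.mul_prod_erase e x hiE, hP, hyi, if_pos hiE]
    ring
  · by_cases hjE : j ∈ e
    · have hP : ∏ v ∈ e.erase j, (x + t • d) v = ∏ v ∈ e.erase j, x v := by
        apply Finset.prod_congr rfl
        intro v hv
        exact hyv v (fun h => hiE (h ▸ Finset.mem_of_mem_erase hv)) (Finset.ne_of_mem_erase hv)
      rw [← Finset.mul_prod_erase _ _ hjE, ← Finset.mul_prod_erase e x hjE, hP, hyj,
        if_neg hiE, if_pos hjE]
      ring
    · have hP : ∏ v ∈ e, (x + t • d) v = ∏ v ∈ e, x v := by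
        apply Finset.prod_congr rfl
        intro v hv
        exact hyv v (fun h => hiE (h ▸ hv)) (fun h => hjE (h ▸ hv))
      rw [hP, if_neg hiE, if_neg hjE]
      ring

lemma card_filter_lt (n k : ℕ) (hk : k ≤ n) :
    (Finset.univ.filter fun v : Fin n => (v:ℕ) < k).card = k := by
  have h : (Finset.univ.filter fun v : Fin n => (v:ℕ) < k)
      = Finset.map (Fin.castLEEmb hk) Finset.univ := by
    ext v
    simp only [Finset.mem_filter, Finset.mem_univ, true_and, Finset.mem_map,
      Fin.castLEEmb_apply]
    constructor
    · intro hv; exact ⟨⟨(v:ℕ), hv⟩, by ext; simp⟩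
    · rintro ⟨w, rfl⟩; exact w.isLt
  rw [h, Finset.card_map, Finset.card_univ, Fintype.card_fin]

/-- Lemma 9 of the paper (Peng et al.): at an optimal legal weighting with a minimal number k of
positive weights, all partial derivatives at the first k coordinates agree, and every pair of the
first k vertices is covered by an edge. -/
theorem optimal_weighting_partials (n k : ℕ) (E : Finset (Finset (Fin n)))
    (x : Fin n → ℝ) (hx : isLegal x)
    (hopt : lagPoly E x = lagrangian E)
    (hmono : ∀ a b : Fin n, a ≤ b → x b ≤ x a)
    (hk : k ≤ n)
    (hpos : ∀ i : Fin n, (i : ℕ) < k → 0 < x i)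
    (hzero : ∀ i : Fin n, k ≤ (i : ℕ) → x i = 0)
    (hmin : ∀ y : Fin n → ℝ, isLegal y → lagPoly E y = lagrangian E →
      k ≤ {i : Fin n | 0 < y i}.ncard) :
    (∀ i j : Fin n, (i : ℕ) < k → (j : ℕ) < k →
      fderiv ℝ (lagPoly E) x (Pi.single i 1) = fderiv ℝ (lagPoly E) x (Pi.single j 1)) ∧
    (∀ i j : Fin n, (i : ℕ) < k → (j : ℕ) < k → i ≠ j → ∃ e ∈ E, i ∈ e ∧ j ∈ e) := by
  have part1 : ∀ i j : Fin n, (i : ℕ) < k → (j : ℕ) < k →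
      fderiv ℝ (lagPoly E) x (Pi.single i 1) = fderiv ℝ (lagPoly E) x (Pi.single j 1) :=
    fun i j hi hj => le_antisymm (exchange_le E x hx hopt i j (hpos j hj))
      (exchange_le E x hx hopt j i (hpos i hi))
  refine ⟨part1, ?_⟩
  intro i j hi hj hij
  by_contra hne
  push_neg at hne
  have hcom : ∀ e ∈ E, ¬(i ∈ e ∧ j ∈ e) := fun e he ⟨h1, h2⟩ => hne e he h1 h2
  set d : Fin n → ℝ := Pi.single i 1 - Pi.single j 1 with hd
  set C : ℝ := ∑ e ∈ E, (Nat.factorial e.card : ℝ) *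
        (if i ∈ e then ∏ v ∈ e.erase i, x v
         else if j ∈ e then -(∏ v ∈ e.erase j, x v) else 0) with hC
  have hkey : ∀ t : ℝ, lagPoly E (x + t • d) = lagPoly E x + t * C :=
    lagPoly_move E x i j hij hcom
  -- the derivative of t ↦ lagPoly E (x + t • d) at 0 is both C and fderiv _ x d
  have hinner : HasDerivAt (fun t : ℝ => x + t • d) d 0 := by
    have : HasDerivAt (fun t : ℝ => t • d) ((1:ℝ) • d) 0 := (hasDerivAt_id 0).smul_const d
    simpa using this.const_add x
  have hφB : HasDerivAt (fun t : ℝ => lagPoly E (x + t • d)) (fderiv ℝ (lagPoly E) x d) 0 := by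
    have h0 : x + (0:ℝ) • d = x := by simp
    have := ((lagPoly_diff E (x + (0:ℝ) • d)).hasFDerivAt).comp_hasDerivAt 0 hinner
    rw [h0] at this
    exact this
  have hφC : HasDerivAt (fun t : ℝ => lagPoly E (x + t • d)) C 0 := by
    have heq : (fun t : ℝ => lagPoly E (x + t • d)) = fun t : ℝ => lagPoly E x + t * C :=
      funext hkey
    rw [heq]
    simpa using ((hasDerivAt_id (0:ℝ)).mul_const C).const_add (lagPoly E x)
  have hfd : fderiv ℝ (lagPoly E) x d = 0 := by
    rw [hd, map_sub, part1 i j hi hj, sub_self]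
  have hC0 : C = 0 := by
    have := hφC.unique hφB
    rw [this, hfd]
  -- move all weight from j to i
  set y : Fin n → ℝ := x + (x j) • d with hy
  have hylegal : isLegal y := legal_move x hx i j hij (x j) (le_of_lt (hpos j hj)) le_rfl
  have hyval : lagPoly E y = lagrangian E := by
    rw [hy, hkey (x j), hC0, mul_zero, add_zero, hopt]
  have hyj : y j = 0 := by
    simp [hy, hd, Pi.single_apply, hij.symm]
  have hyvv : ∀ v, v ≠ i → v ≠ j → y v = x v := by
    intro v hvi hvj
    simp [hy, hd, Pi.single_apply, hvi, hvj]
  have hsub : {v : Fin n | 0 < y v} ⊆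
      ↑((Finset.univ.filter fun v : Fin n => (v:ℕ) < k).erase j) := by
    intro v hv
    simp only [Set.mem_setOf_eq] at hv
    have hvj : v ≠ j := by
      rintro rfl
      rw [hyj] at hv
      exact lt_irrefl _ hv
    simp only [Finset.coe_erase, Set.mem_diff, Finset.mem_coe, Finset.mem_filter,
      Finset.mem_univ, true_and, Set.mem_singleton_iff]
    refine ⟨?_, hvj⟩
    rcases eq_or_ne v i with rfl | hvi
    · exact hi
    · rw [hyvv v hvi hvj] at hv
      by_contra hvk
      push_neg at hvk
      rw [hzero v hvk] at hv
      exact lt_irrefl _ hv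
  have hcard : ((Finset.univ.filter fun v : Fin n => (v:ℕ) < k).erase j).card = k - 1 := by
    rw [Finset.card_erase_of_mem (by simp [hj]), card_filter_lt n k hk]
  have h1 := hmin y hylegal hyval
  have h2 : {v : Fin n | 0 < y v}.ncard ≤ k - 1 := by
    have := Set.ncard_le_ncard hsub (Set.toFinite _)
    rwa [Set.ncard_coe_finset, hcard] at this
  omega
end
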